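/- arXiv:1212.5909 — 5 statements merged into one kernel-verified Lean document; each statement's English description precedes it below -/
import Mathlib

section
/- For any locally compact separable metric space E and any k ∈ ℕ, the map m ↦ m^{⊗k} (k-fold product measure) from Radon measures on E to Radon measures on E^k is continuous with respect to the vague topologies. -/
open MeasureTheory Topology Set

set_option linter.unusedSectionVars false
set_option maxHeartbeats 1000000

/-- The vague topology on measures. -/
noncomputable def vagueTopology (E : Type*) [TopologicalSpace E] [MeasurableSpace E] :
    TopologicalSpace (Measure E) :=
  ⨅ f : CompactlySupportedContinuousMap E ℝ,
    TopologicalSpace.induced (fun μ => ∫ x, f x ∂μ) inferInstance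

namespace ProdPowerAux

variable {E : Type*} [MetricSpace E] [TopologicalSpace.SeparableSpace E]
  [LocallyCompactSpace E] [MeasurableSpace E] [BorelSpace E]

/-- Urysohn cutoff: a compactly supported `[0,1]`-valued function equal to `1` on `K`. -/
lemma exists_cutoff {K : Set E} (hK : IsCompact K) :
    ∃ χ : CompactlySupportedContinuousMap E ℝ, Set.EqOn χ 1 K ∧ ∀ x, χ x ∈ Set.Icc (0:ℝ) 1 := by
  obtain ⟨L, hL, hKL, -⟩ := exists_compact_between hK isOpen_univ (subset_univ K)
  obtain ⟨f, hf1, hf2, hf3⟩ := exists_tsupport_one_of_isOpen_isClosed isOpen_interior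
    (hL.closure_of_subset interior_subset) hK.isClosed hKL
  exact ⟨⟨f, IsCompact.of_isClosed_subset hL (isClosed_tsupport f)
    (hf1.trans interior_subset)⟩, hf2, hf3⟩

lemma exists_bump {a b : E} (hab : a ≠ b) :
    ∃ g : CompactlySupportedContinuousMap E ℝ, g a = 1 ∧ g b = 0 := by
  obtain ⟨L, hL, haL, -⟩ := exists_compact_between isCompact_singleton isOpen_univ
    (subset_univ {a})
  obtain ⟨f, hf1, hf2, -⟩ := exists_tsupport_one_of_isOpen_isClosed
    (isOpen_interior.inter isClosed_singleton.isOpen_compl)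
    (hL.closure_of_subset (Set.inter_subset_left.trans interior_subset))
    isClosed_singleton (by
      intro x hx
      rcases hx with rfl
      exact ⟨haL rfl, hab⟩)
  refine ⟨⟨f, IsCompact.of_isClosed_subset hL (isClosed_tsupport f)
    (hf1.trans (Set.inter_subset_left.trans interior_subset))⟩, hf2 rfl, ?_⟩
  exact image_eq_zero_of_notMem_tsupport (fun hb => (hf1 hb).2 rfl)

lemma sigmaFinite_of_fmc (μ : Measure E) [IsFiniteMeasureOnCompacts μ] : SigmaFinite μ := by
  haveI : SecondCountableTopology E := UniformSpace.secondCountable_of_separable E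
  infer_instance

/-- The tensor product of compactly supported functions. -/
noncomputable def tensor {k : ℕ} (g : Fin k → CompactlySupportedContinuousMap E ℝ) :
    CompactlySupportedContinuousMap (Fin k → E) ℝ where
  toFun := fun x => ∏ i, g i (x i)
  continuous_toFun := continuous_finset_prod _ fun i _ =>
    (g i).continuous.comp (continuous_apply i)
  hasCompactSupport' := by
    apply HasCompactSupport.of_support_subset_isCompact
      (isCompact_univ_pi fun i => (g i).hasCompactSupport)
    intro x hx i _
    have : g i (x i) ≠ 0 := fun h0 => hx (Finset.prod_eq_zero (Finset.mem_univ i) h0)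
    exact subset_tsupport _ this

@[simp] lemma tensor_apply {k : ℕ} (g : Fin k → CompactlySupportedContinuousMap E ℝ)
    (x : Fin k → E) : tensor g x = ∏ i, g i (x i) := rfl

lemma isFiniteMeasureOnCompacts_pi {k : ℕ} (μ : Measure E) [IsFiniteMeasureOnCompacts μ] :
    IsFiniteMeasureOnCompacts (Measure.pi fun _ : Fin k => μ) := by
  haveI := sigmaFinite_of_fmc μ
  constructor
  intro K hK
  calc Measure.pi (fun _ : Fin k => μ) K
      ≤ Measure.pi (fun _ : Fin k => μ) (Set.pi univ fun i => (fun x => x i) '' K) :=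
        measure_mono (fun x hx i _ => ⟨x, hx, rfl⟩)
    _ = ∏ i, μ ((fun x : Fin k → E => x i) '' K) := Measure.pi_pi _ _
    _ < ⊤ := ENNReal.prod_lt_top fun i _ => (hK.image (continuous_apply i)).measure_lt_top

lemma integral_tensor {k : ℕ} (μ : Measure E) [IsFiniteMeasureOnCompacts μ]
    (g : Fin k → CompactlySupportedContinuousMap E ℝ) :
    ∫ x, tensor g x ∂(Measure.pi fun _ : Fin k => μ) = ∏ i, ∫ x, g i x ∂μ := by
  haveI := sigmaFinite_of_fmc μ
  letI : MeasureSpace E := { volume := μ }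
  exact MeasureTheory.integral_fintype_prod_eq_prod (ι := Fin k) (f := fun i x => g i x)

lemma integrable_of_cc {k : ℕ} (μ : Measure E) [IsFiniteMeasureOnCompacts μ]
    (q : CompactlySupportedContinuousMap (Fin k → E) ℝ) :
    Integrable (⇑q) (Measure.pi fun _ : Fin k => μ) := by
  haveI : SecondCountableTopology E := UniformSpace.secondCountable_of_separable E
  haveI := isFiniteMeasureOnCompacts_pi (k := k) μ
  exact q.continuous.integrable_of_hasCompactSupport q.hasCompactSupport

abbrev RadonLike (E : Type*) [TopologicalSpace E] [MeasurableSpace E] :=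
  {m : Measure E // IsFiniteMeasureOnCompacts m ∧ m.InnerRegular}

lemma cont_integral (g : CompactlySupportedContinuousMap E ℝ) :
    @Continuous (RadonLike E) ℝ
      (TopologicalSpace.induced Subtype.val (vagueTopology E)) _
      (fun m => ∫ x, g x ∂(m : Measure E)) := by
  letI : TopologicalSpace (Measure E) := vagueTopology E
  letI : TopologicalSpace (RadonLike E) := TopologicalSpace.induced Subtype.val (vagueTopology E)
  have h1 : Continuous (Subtype.val : RadonLike E → Measure E) := continuous_induced_dom
  have h2 : Continuous (fun μ : Measure E => ∫ x, g x ∂μ) := by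
    apply continuous_iInf_dom (i := g) (continuous_induced_dom
      (t := (inferInstance : TopologicalSpace ℝ)))
  exact h2.comp h1

/-- Continuity of `m ↦ ∫ q d(m^⊗k)` for `q` in the span of tensors. -/
lemma cont_integral_pi {k : ℕ} {q : CompactlySupportedContinuousMap (Fin k → E) ℝ}
    (hq : q ∈ Submodule.span ℝ (Set.range (tensor (E := E) (k := k)))) :
    @Continuous (RadonLike E) ℝ
      (TopologicalSpace.induced Subtype.val (vagueTopology E)) _
      (fun m => ∫ x, q x ∂(Measure.pi fun _ : Fin k => (m : Measure E))) := by
  letI : TopologicalSpace (RadonLike E) := TopologicalSpace.induced Subtype.val (vagueTopology E)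
  induction hq using Submodule.span_induction with
  | mem q hq =>
    obtain ⟨g, rfl⟩ := hq
    have heq : (fun m : RadonLike E =>
        ∫ x, tensor g x ∂(Measure.pi fun _ : Fin k => (m : Measure E))) =
        fun m : RadonLike E => ∏ i, ∫ x, g i x ∂(m : Measure E) := by
      funext m
      haveI := m.2.1
      exact integral_tensor (m : Measure E) g
    rw [heq]
    exact continuous_finset_prod _ fun i _ => cont_integral (g i)
  | zero =>
    simpa [CompactlySupportedContinuousMap.coe_zero] using
      (continuous_const : Continuous fun _ : RadonLike E => (0 : ℝ))
  | add q r hq hr ihq ihr =>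
    have heq : (fun m : RadonLike E =>
        ∫ x, (q + r) x ∂(Measure.pi fun _ : Fin k => (m : Measure E))) =
        fun m : RadonLike E =>
          (∫ x, q x ∂(Measure.pi fun _ : Fin k => (m : Measure E))) +
          (∫ x, r x ∂(Measure.pi fun _ : Fin k => (m : Measure E))) := by
      funext m
      haveI := m.2.1
      simp only [CompactlySupportedContinuousMap.add_apply]
      exact integral_add (integrable_of_cc _ q) (integrable_of_cc _ r)
    rw [heq]
    exact ihq.add ihr
  | smul c q hq ihq =>
    have heq : (fun m : RadonLike E =>
        ∫ x, (c • q) x ∂(Measure.pi fun _ : Fin k => (m : Measure E))) =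
        fun m : RadonLike E =>
          c * ∫ x, q x ∂(Measure.pi fun _ : Fin k => (m : Measure E)) := by
      funext m
      simp only [CompactlySupportedContinuousMap.smul_apply, smul_eq_mul]
      exact integral_const_mul c _
    rw [heq]
    exact continuous_const.mul ihq

/-- The span of tensors is closed under multiplication. -/
lemma span_tensor_mul_mem {k : ℕ} {q r : CompactlySupportedContinuousMap (Fin k → E) ℝ}
    (hq : q ∈ Submodule.span ℝ (Set.range (tensor (E := E) (k := k))))
    (hr : r ∈ Submodule.span ℝ (Set.range (tensor (E := E) (k := k)))) :
    q * r ∈ Submodule.span ℝ (Set.range (tensor (E := E) (k := k))) := by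
  induction hq using Submodule.span_induction with
  | mem q hq =>
    obtain ⟨g, rfl⟩ := hq
    induction hr using Submodule.span_induction with
    | mem r hr =>
      obtain ⟨h, rfl⟩ := hr
      apply Submodule.subset_span
      refine ⟨fun i => g i * h i, ?_⟩
      ext x
      simp [CompactlySupportedContinuousMap.mul_apply, Finset.prod_mul_distrib]
    | zero => rw [mul_zero]; exact Submodule.zero_mem _
    | add r s hr hs ihr ihs => rw [mul_add]; exact Submodule.add_mem _ ihr ihs
    | smul c r hr ihr => rw [mul_smul_comm]; exact Submodule.smul_mem _ _ ihr
  | zero => rw [zero_mul]; exact Submodule.zero_mem _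
  | add q s hq hs ihq ihs => rw [add_mul]; exact Submodule.add_mem _ ihq ihs
  | smul c q' hq' ih => rw [smul_mul_assoc]; exact Submodule.smul_mem _ _ ih

/-- Restriction of a compactly supported function on `Fin k → E` to `Fin k → L`. -/
noncomputable def restrictCM {k : ℕ} (L : Set E)
    (q : CompactlySupportedContinuousMap (Fin k → E) ℝ) : C(Fin k → L, ℝ) :=
  ⟨fun x => q (fun i => (x i : E)), q.continuous.comp (continuous_pi fun i =>
    continuous_subtype_val.comp (continuous_apply i))⟩

@[simp] lemma restrictCM_apply {k : ℕ} (L : Set E)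
    (q : CompactlySupportedContinuousMap (Fin k → E) ℝ) (x : Fin k → L) :
    restrictCM L q x = q (fun i => (x i : E)) := rfl

lemma sw_approx {k : ℕ} {L : Set E} (hL : IsCompact L)
    (e : CompactlySupportedContinuousMap E ℝ) (he : Set.EqOn e 1 L)
    (f : CompactlySupportedContinuousMap (Fin k → E) ℝ) {δ : ℝ} (hδ : 0 < δ) :
    ∃ q ∈ Submodule.span ℝ (Set.range (tensor (E := E) (k := k))),
      ∀ x : Fin k → E, (∀ i, x i ∈ L) → |q x - f x| < δ := by
  haveI : CompactSpace L := isCompact_iff_compactSpace.mp hL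
  set A := Algebra.adjoin ℝ
    (restrictCM L '' (Set.range (tensor (E := E) (k := k)))) with hA
  have he1 : ∀ a : L, e (a : E) = 1 := fun a => he a.2
  have hsep : A.SeparatesPoints := by
    intro x y hxy
    obtain ⟨i, hi⟩ : ∃ i, x i ≠ y i := by
      by_contra h; push_neg at h; exact hxy (funext h)
    have hab : ((x i : E)) ≠ (y i : E) := fun h => hi (Subtype.ext h)
    obtain ⟨g, hg1, hg0⟩ := exists_bump hab
    have hval : ∀ z : Fin k → L,
        restrictCM L (tensor (Function.update (fun _ => e) i g)) z = g ((z i : E)) := by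
      intro z
      rw [restrictCM_apply, tensor_apply]
      rw [Finset.prod_eq_single i]
      · rw [Function.update_self]
      · intro j _ hj; rw [Function.update_of_ne hj]; exact he1 (z j)
      · simp
    refine ⟨_, ⟨restrictCM L (tensor (Function.update (fun _ => e) i g)),
      Algebra.subset_adjoin ⟨_, ⟨_, rfl⟩, rfl⟩, rfl⟩, ?_⟩
    show (restrictCM L (tensor (Function.update (fun _ => e) i g))) x ≠
      (restrictCM L (tensor (Function.update (fun _ => e) i g))) y
    rw [hval x, hval y, hg1, hg0]
    exact one_ne_zero
  obtain ⟨⟨p, hpA⟩, hp⟩ :=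
    ContinuousMap.exists_mem_subalgebra_near_continuousMap_of_separatesPoints A hsep
      (restrictCM L f) δ hδ
  have hsurj : ∀ p ∈ A, ∃ q ∈ Submodule.span ℝ (Set.range (tensor (E := E) (k := k))),
      restrictCM L q = p := by
    intro p hp
    induction hp using Algebra.adjoin_induction with
    | mem p hp =>
      obtain ⟨q, ⟨g, rfl⟩, rfl⟩ := hp
      exact ⟨_, Submodule.subset_span ⟨g, rfl⟩, rfl⟩
    | algebraMap r =>
      refine ⟨r • tensor (fun _ => e),
        Submodule.smul_mem _ _ (Submodule.subset_span ⟨_, rfl⟩), ?_⟩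
      ext x
      simp only [restrictCM_apply, CompactlySupportedContinuousMap.smul_apply, tensor_apply,
        _root_.algebraMap_apply, smul_eq_mul]
      rw [Finset.prod_eq_one (fun j _ => he1 (x j))]
    | add x y hx hy ihx ihy =>
      obtain ⟨q1, h1, rfl⟩ := ihx
      obtain ⟨q2, h2, rfl⟩ := ihy
      exact ⟨q1 + q2, Submodule.add_mem _ h1 h2, by ext z; simp⟩
    | mul x y hx hy ihx ihy =>
      obtain ⟨q1, h1, rfl⟩ := ihx
      obtain ⟨q2, h2, rfl⟩ := ihy
      exact ⟨q1 * q2, span_tensor_mul_mem h1 h2, by ext z; simp⟩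
  obtain ⟨q, hq, hqp⟩ := hsurj p hpA
  refine ⟨q, hq, fun x hx => ?_⟩
  have hkey : |q x - f x| = |(p - restrictCM L f) (fun i => (⟨x i, hx i⟩ : L))| := by
    rw [← hqp]; simp
  rw [hkey, ← Real.norm_eq_abs]
  exact lt_of_le_of_lt
    (ContinuousMap.norm_coe_le_norm (p - restrictCM L f) (fun i => (⟨x i, hx i⟩ : L))) hp

end ProdPowerAux

open ProdPowerAux

/-- For a locally compact separable metric space `E` and `k : ℕ`, the map `m ↦ m^{⊗k}`
from Radon measures on `E` to measures on `E^k` is continuous for the vague topologies. -/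
theorem prod_power_vague_continuous (E : Type*) [MetricSpace E]
    [TopologicalSpace.SeparableSpace E] [LocallyCompactSpace E]
    [MeasurableSpace E] [BorelSpace E] (k : ℕ) :
    @Continuous {m : Measure E // IsFiniteMeasureOnCompacts m ∧ m.InnerRegular}
      (Measure (Fin k → E))
      (TopologicalSpace.induced Subtype.val (vagueTopology E))
      (vagueTopology (Fin k → E))
      (fun m => Measure.pi (fun _ : Fin k => (m : Measure E))) := by
  letI : TopologicalSpace (RadonLike E) :=
    TopologicalSpace.induced Subtype.val (vagueTopology E)
  unfold vagueTopology
  rw [continuous_iInf_rng]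
  intro f
  rw [continuous_induced_rng]
  show Continuous fun m : RadonLike E =>
    ∫ x, f x ∂(Measure.pi fun _ : Fin k => (m : Measure E))
  rw [continuous_iff_continuousAt]
  intro m₀
  haveI := m₀.2.1
  -- the compact set of coordinates of the support of `f`
  set K : Set E := ⋃ i, (fun x : Fin k → E => x i) '' tsupport f with hKdef
  have hKc : IsCompact K :=
    isCompact_iUnion fun i => f.hasCompactSupport.image (continuous_apply i)
  obtain ⟨χ, hχ1, hχ01⟩ := exists_cutoff hKc
  have hLc : IsCompact (tsupport χ) := χ.hasCompactSupport
  have hKL : K ⊆ tsupport χ := fun x hx => subset_tsupport _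
    (Function.mem_support.2 (by rw [show χ x = 1 from hχ1 hx]; exact one_ne_zero))
  obtain ⟨e, he1, he01⟩ := exists_cutoff hLc
  rw [ContinuousAt, Metric.tendsto_nhds]
  intro ε hε
  have hint_e_nonneg : ∀ m : RadonLike E, 0 ≤ ∫ x, e x ∂(m : Measure E) := fun m =>
    integral_nonneg fun x => (he01 x).1
  set c₀ : ℝ := (∫ x, e x ∂(m₀ : Measure E)) + 1 with hc₀def
  have hc₀pos : 0 < c₀ := by
    have := hint_e_nonneg m₀; rw [hc₀def]; linarith
  have hc₀k : (0:ℝ) < c₀ ^ k := pow_pos hc₀pos k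
  set δ : ℝ := ε / 3 / c₀ ^ k with hδdef
  have hδpos : 0 < δ := by positivity
  obtain ⟨q, hq, hqf⟩ := sw_approx hLc e he1 f hδpos
  set Q := q * tensor (fun _ : Fin k => χ) with hQdef
  have hQmem : Q ∈ Submodule.span ℝ (Set.range (tensor (E := E) (k := k))) :=
    span_tensor_mul_mem hq (Submodule.subset_span ⟨_, rfl⟩)
  -- pointwise bound
  have hpoint : ∀ x : Fin k → E, |f x - Q x| ≤ δ * ∏ i, e (x i) := by
    intro x
    by_cases hx : ∀ i, x i ∈ tsupport χ
    · have hprod_e : ∏ i, e (x i) = 1 := Finset.prod_eq_one fun i _ => he1 (hx i)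
      rw [hprod_e, mul_one]
      set c : ℝ := ∏ i, χ (x i) with hc
      have hc0 : 0 ≤ c := Finset.prod_nonneg fun i _ => (hχ01 (x i)).1
      have hc1 : c ≤ 1 := Finset.prod_le_one (fun i _ => (hχ01 (x i)).1)
        (fun i _ => (hχ01 (x i)).2)
      have hQx : Q x = q x * c := by
        rw [hQdef]; simp [CompactlySupportedContinuousMap.mul_apply, hc]
      have hkey : f x - Q x = c * (f x - q x) + (1 - c) * f x := by
        rw [hQx]; ring
      have h2 : (1 - c) * f x = 0 := by
        rcases eq_or_ne (f x) 0 with h | h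
        · rw [h, mul_zero]
        · have hxK : ∀ i, x i ∈ K := fun i =>
            Set.mem_iUnion.2 ⟨i, ⟨x, subset_tsupport _ h, rfl⟩⟩
          have hcone : c = 1 := Finset.prod_eq_one fun i _ => hχ1 (hxK i)
          rw [hcone]; ring
      rw [hkey, h2, add_zero, abs_mul, abs_of_nonneg hc0]
      have hd : |f x - q x| ≤ δ := by
        have := hqf x hx
        rw [abs_sub_comm] at this
        exact this.le
      calc c * |f x - q x| ≤ 1 * δ :=
            mul_le_mul hc1 hd (abs_nonneg _) zero_le_one
        _ = δ := one_mul δ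
    · push_neg at hx
      obtain ⟨i, hi⟩ := hx
      have hfx : f x = 0 := by
        by_contra h
        exact hi (hKL (Set.mem_iUnion.2 ⟨i, ⟨x, subset_tsupport _ h, rfl⟩⟩))
      have hχx : χ (x i) = 0 := image_eq_zero_of_notMem_tsupport hi
      have hQx : Q x = 0 := by
        rw [hQdef]
        simp only [CompactlySupportedContinuousMap.mul_apply, tensor_apply]
        rw [Finset.prod_eq_zero (Finset.mem_univ i) hχx, mul_zero]
      rw [hfx, hQx, sub_zero, abs_zero]
      exact mul_nonneg hδpos.le (Finset.prod_nonneg fun j _ => (he01 (x j)).1)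
  -- integral bound
  have hbound : ∀ m : RadonLike E,
      |(∫ x, f x ∂(Measure.pi fun _ : Fin k => (m : Measure E))) -
        ∫ x, Q x ∂(Measure.pi fun _ : Fin k => (m : Measure E))| ≤
        δ * (∫ x, e x ∂(m : Measure E)) ^ k := by
    intro m
    haveI := m.2.1
    haveI := isFiniteMeasureOnCompacts_pi (k := k) (m : Measure E)
    have hfint := integrable_of_cc (k := k) (m : Measure E) f
    have hQint := integrable_of_cc (k := k) (m : Measure E) Q
    have heint := integrable_of_cc (k := k) (m : Measure E) (tensor fun _ => e)
    rw [← integral_sub hfint hQint]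
    calc |∫ x, (f x - Q x) ∂(Measure.pi fun _ : Fin k => (m : Measure E))|
        ≤ ∫ x, |f x - Q x| ∂(Measure.pi fun _ : Fin k => (m : Measure E)) :=
          by
            have h := norm_integral_le_integral_norm
              (μ := Measure.pi fun _ : Fin k => (m : Measure E)) (fun x => f x - Q x)
            simpa [Real.norm_eq_abs] using h
      _ ≤ ∫ x, δ * tensor (fun _ => e) x ∂(Measure.pi fun _ : Fin k => (m : Measure E)) := by
          apply integral_mono (hfint.sub hQint).abs (heint.const_mul δ)
          intro x
          exact hpoint x
      _ = δ * (∫ x, e x ∂(m : Measure E)) ^ k := by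
          rw [integral_const_mul, integral_tensor (m : Measure E) (fun _ => e),
            Finset.prod_const, Finset.card_univ, Fintype.card_fin]
  -- eventual bounds
  have hev1 : ∀ᶠ m : RadonLike E in 𝓝 m₀, (∫ x, e x ∂(m : Measure E)) < c₀ := by
    apply (cont_integral (E := E) e).continuousAt (x := m₀)
      |>.eventually_lt_const
    rw [hc₀def]; linarith
  have hev2 : ∀ᶠ m : RadonLike E in 𝓝 m₀,
      dist (∫ x, Q x ∂(Measure.pi fun _ : Fin k => (m : Measure E)))
        (∫ x, Q x ∂(Measure.pi fun _ : Fin k => (m₀ : Measure E))) < ε / 3 := by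
    have hc := (cont_integral_pi (E := E) hQmem).continuousAt (x := m₀)
    exact Metric.tendsto_nhds.mp hc (ε / 3) (by linarith)
  filter_upwards [hev1, hev2] with m h1 h2
  have hb1 : |(∫ x, f x ∂(Measure.pi fun _ : Fin k => (m : Measure E))) -
      ∫ x, Q x ∂(Measure.pi fun _ : Fin k => (m : Measure E))| ≤ ε / 3 := by
    refine (hbound m).trans ?_
    have hpow : (∫ x, e x ∂(m : Measure E)) ^ k ≤ c₀ ^ k :=
      pow_le_pow_left₀ (hint_e_nonneg m) h1.le k
    calc δ * (∫ x, e x ∂(m : Measure E)) ^ k ≤ δ * c₀ ^ k := by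
          exact mul_le_mul_of_nonneg_left hpow hδpos.le
      _ = ε / 3 := by rw [hδdef]; field_simp
  have hb3 : |(∫ x, f x ∂(Measure.pi fun _ : Fin k => (m₀ : Measure E))) -
      ∫ x, Q x ∂(Measure.pi fun _ : Fin k => (m₀ : Measure E))| ≤ ε / 3 := by
    refine (hbound m₀).trans ?_
    have hle : (∫ x, e x ∂(m₀ : Measure E)) ≤ c₀ := by rw [hc₀def]; linarith
    have hpow : (∫ x, e x ∂(m₀ : Measure E)) ^ k ≤ c₀ ^ k :=
      pow_le_pow_left₀ (hint_e_nonneg m₀) hle k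
    calc δ * (∫ x, e x ∂(m₀ : Measure E)) ^ k ≤ δ * c₀ ^ k := by
          exact mul_le_mul_of_nonneg_left hpow hδpos.le
      _ = ε / 3 := by rw [hδdef]; field_simp
  rw [Real.dist_eq] at h2 ⊢
  set Fm := ∫ x, f x ∂(Measure.pi fun _ : Fin k => (m : Measure E))
  set Fm₀ := ∫ x, f x ∂(Measure.pi fun _ : Fin k => (m₀ : Measure E))
  set Gm := ∫ x, Q x ∂(Measure.pi fun _ : Fin k => (m : Measure E))
  set Gm₀ := ∫ x, Q x ∂(Measure.pi fun _ : Fin k => (m₀ : Measure E))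
  have t1 : |Fm - Fm₀| ≤ |Fm - Gm| + |Gm - Fm₀| := abs_sub_le _ _ _
  have t2 : |Gm - Fm₀| ≤ |Gm - Gm₀| + |Gm₀ - Fm₀| := abs_sub_le _ _ _
  have t3 : |Gm₀ - Fm₀| = |Fm₀ - Gm₀| := abs_sub_comm _ _
  rw [t3] at t2
  linarith
end

section
/- For k ∈ ℕ, F continuous with compact support on T^k, and g_1,…,g_k continuous on K, the function m ↦ ⟨m^{⊗k}, F ⊗ G_g⟩, where G_g(κ_1,…,κ_k) = ∏_j g_j(κ_j), is continuous on M_λ with respect to the vague topology. -/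
open MeasureTheory Topology Metric Set Function

set_option maxHeartbeats 1600000

lemma approx_lemma {X : Type*} [MetricSpace X] (k : ℕ) (H : (Fin k → X) → ℝ)
    (hH : Continuous H) (hHc : HasCompactSupport H) {ε : ℝ} (hε : 0 < ε) :
    ∃ (n : ℕ) (c : Fin n → ℝ) (f : Fin n → Fin k → C(X, ℝ)),
      (∀ j i, HasCompactSupport (f j i)) ∧
      (∀ j i, tsupport ⇑(f j i) ⊆ cthickening 1 (⋃ i', eval i' '' tsupport H)) ∧
      (∀ x : Fin k → X, |H x - ∑ j, c j * ∏ i, f j i (x i)| ≤ 2 * ε) := by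
  classical
  set E : Set (Fin k → X) := {x | ε ≤ |H x|} with hE
  have hEclosed : IsClosed E := isClosed_le continuous_const hH.abs
  have hEsub : E ⊆ tsupport H := fun x hx =>
    subset_tsupport H (by intro h0; simp [hE, h0] at hx; linarith)
  have hEcomp : IsCompact E := hHc.of_isClosed_subset hEclosed hEsub
  set C : Set X := ⋃ i, eval i '' E with hC
  have hCcomp : IsCompact C := isCompact_iUnion fun i => hEcomp.image (continuous_apply i)
  have hCsub : C ⊆ ⋃ i', eval i' '' tsupport H :=
    iUnion_mono fun i => image_mono hEsub
  -- per-point compact closure balls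
  have hball : ∀ x₀ ∈ C, ∃ r : ℝ, 0 < r ∧ r ≤ 1 ∧ IsCompact (closure (ball x₀ r)) := by
    rintro x₀ ⟨_, ⟨i, rfl⟩, z, hzE, rfl⟩
    set U : Set (Fin k → X) := {y | ε / 2 < |H y|} with hU
    have hUcl : IsCompact (closure U) := by
      refine hHc.of_isClosed_subset isClosed_closure (closure_minimal ?_ (isClosed_tsupport H))
      exact fun y hy => subset_tsupport H (by intro h0; simp [hU, h0] at hy; linarith)
    obtain ⟨δ, hδpos, hδ⟩ := Metric.continuousAt_iff.1 (hH.continuousAt (x := z)) (ε / 2)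
      (by linarith)
    refine ⟨min δ 1, by positivity, min_le_right _ _, ?_⟩
    have hup : ∀ x ∈ ball (eval i z) (min δ 1), update z i x ∈ U := by
      intro x hx
      have hd : dist (update z i x) z < δ := by
        have : dist (update z i x) z ≤ dist x (z i) := by
          refine dist_pi_le_iff dist_nonneg |>.2 fun j => ?_
          rcases eq_or_ne j i with rfl | hji
          · simp
          · simp only [Function.update_of_ne hji]
            simp [dist_nonneg]
        calc dist (update z i x) z ≤ dist x (z i) := this
          _ < min δ 1 := hx
          _ ≤ δ := min_le_left _ _
      have := hδ hd
      have hz : ε ≤ |H z| := hzE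
      rw [Real.dist_eq] at this
      simp only [hU, mem_setOf_eq]
      have : |H z| - |H (update z i x)| < ε / 2 := lt_of_le_of_lt (abs_sub_abs_le_abs_sub _ _)
        (by rwa [abs_sub_comm] at this)
      linarith
    have hsub1 : closure (ball (eval i z) (min δ 1)) ⊆ eval i '' closure U := by
      intro x hx
      have h1 : update z i x ∈ closure U := by
        have himg : (fun x => update z i x) '' closure (ball (eval i z) (min δ 1))
            ⊆ closure ((fun x => update z i x) '' ball (eval i z) (min δ 1)) :=
          image_closure_subset_closure_image (continuous_const.update i continuous_id)
        have := himg ⟨x, hx, rfl⟩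
        exact closure_mono (by rintro _ ⟨y, hy, rfl⟩; exact hup y hy) this
      exact ⟨update z i x, h1, by simp [eval]⟩
    exact ((hUcl.image (continuous_apply i)).of_isClosed_subset isClosed_closure hsub1)
  choose! r hr0 hr1 hrc using hball
  obtain ⟨t, htC, htcov⟩ := hCcomp.elim_nhds_subcover (fun x => ball x (r x))
    (fun x hx => ball_mem_nhds x (hr0 x hx))
  set V : Set X := ⋃ x ∈ t, ball x (r x) with hV
  have hVopen : IsOpen V := isOpen_biUnion fun x _ => isOpen_ball
  have hMcomp : IsCompact (⋃ x ∈ t, closure (ball x (r x))) :=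
    t.finite_toSet.isCompact_biUnion fun x hx => hrc x (htC x hx)
  have hclV : closure V ⊆ ⋃ x ∈ t, closure (ball x (r x)) :=
    closure_minimal (iUnion₂_mono fun x _ => subset_closure)
      (t.finite_toSet.isClosed_biUnion fun x _ => isClosed_closure)
  have hclVcomp : IsCompact (closure V) := hMcomp.of_isClosed_subset isClosed_closure hclV
  have hCV : C ⊆ V := htcov
  obtain ⟨w, hwsupp, hw1, hw01⟩ :=
    exists_tsupport_one_of_isOpen_isClosed hVopen hclVcomp hCcomp.isClosed hCV
  have hVth : V ⊆ cthickening 1 (⋃ i', eval i' '' tsupport H) := by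
    intro p hp
    simp only [hV, mem_iUnion] at hp
    obtain ⟨x, hxt, hpx⟩ := hp
    have : p ∈ closedBall x 1 := mem_closedBall.2 (le_trans (le_of_lt hpx) (hr1 x (htC x hxt)))
    have h1 : p ∈ cthickening 1 C := closedBall_subset_cthickening (htC x hxt) 1 this
    exact cthickening_subset_of_subset 1 hCsub h1
  have hwc : HasCompactSupport (⇑w) :=
    hclVcomp.of_isClosed_subset (isClosed_tsupport _) (hwsupp.trans subset_closure)
  set P : Set X := closure V with hP
  haveI : CompactSpace ↥P := isCompact_iff_compactSpace.1 hclVcomp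
  have hproj : ∀ i : Fin k, Continuous fun q : Fin k → ↥P => (q i : X) :=
    fun i => continuous_subtype_val.comp (continuous_apply i)
  have hQH : Continuous fun q : Fin k → ↥P => H fun i => ((q i : X)) :=
    hH.comp (continuous_pi fun i => hproj i)
  set Gen : Set C((Fin k → ↥P), ℝ) := {φ | ∃ (i : Fin k) (b : C(X, ℝ)),
    φ = b.comp ⟨fun q => (q i : X), hproj i⟩} with hGen
  have hsep : (Algebra.adjoin ℝ Gen).SeparatesPoints := by
    intro q q' hqq'
    obtain ⟨i, hi⟩ := Function.ne_iff.1 hqq'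
    set b : C(X, ℝ) := ⟨fun x => dist x (q' i : X), continuous_id.dist continuous_const⟩
    refine ⟨_, ⟨b.comp ⟨fun q => (q i : X), hproj i⟩,
      Algebra.subset_adjoin ⟨i, b, rfl⟩, rfl⟩, ?_⟩
    simp only [b, ContinuousMap.comp_apply, ContinuousMap.coe_mk]
    rw [dist_self]
    exact dist_ne_zero.2 (fun hc => hi (Subtype.coe_injective hc))
  obtain ⟨⟨G, hGA⟩, hG⟩ :=
    ContinuousMap.exists_mem_subalgebra_near_continuous_of_separatesPoints
      (Algebra.adjoin ℝ Gen) hsep (fun q : Fin k → ↥P => H fun i => ((q i : X))) hQH ε hε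
  -- structure of elements of the adjoin
  have hstruct : ∃ (n : ℕ) (c : Fin n → ℝ) (b : Fin n → Fin k → C(X, ℝ)),
      ∀ q : Fin k → ↥P, G q = ∑ j, c j * ∏ i, b j i (q i : X) := by
    refine Algebra.adjoin_induction
      (p := fun (G' : C((Fin k → ↥P), ℝ)) _ => ∃ (n : ℕ) (c : Fin n → ℝ)
        (b : Fin n → Fin k → C(X, ℝ)), ∀ q : Fin k → ↥P, G' q = ∑ j, c j * ∏ i, b j i (q i : X))
      ?_ ?_ ?_ ?_ hGA
    · rintro φ ⟨i, b, rfl⟩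
      refine ⟨1, fun _ => 1, fun _ i' => if i' = i then b else 1, fun q => ?_⟩
      have : ∀ i', (if i' = i then b else 1) ((q i' : X)) =
          if i' = i then b (q i' : X) else 1 := by
        intro i'; split <;> simp
      simp only [Fin.sum_univ_one, this, one_mul]
      rw [Finset.prod_ite_eq' Finset.univ i (fun i' => b (q i' : X))]
      simp
    · intro r
      refine ⟨1, fun _ => r, fun _ _ => 1, fun q => ?_⟩
      simp [Algebra.algebraMap_eq_smul_one]
    · rintro G₁ G₂ - - ⟨n₁, c₁, b₁, h₁⟩ ⟨n₂, c₂, b₂, h₂⟩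
      refine ⟨n₁ + n₂, Fin.append c₁ c₂, Fin.append b₁ b₂, fun q => ?_⟩
      simp only [ContinuousMap.add_apply, h₁ q, h₂ q, Fin.sum_univ_add, Fin.append_left,
        Fin.append_right]
    · rintro G₁ G₂ - - ⟨n₁, c₁, b₁, h₁⟩ ⟨n₂, c₂, b₂, h₂⟩
      refine ⟨n₁ * n₂, fun j => c₁ (finProdFinEquiv.symm j).1 * c₂ (finProdFinEquiv.symm j).2,
        fun j i => b₁ (finProdFinEquiv.symm j).1 i * b₂ (finProdFinEquiv.symm j).2 i,
        fun q => ?_⟩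
      rw [← Equiv.sum_comp finProdFinEquiv
        (fun j => (c₁ (finProdFinEquiv.symm j).1 * c₂ (finProdFinEquiv.symm j).2) *
          ∏ i, (b₁ (finProdFinEquiv.symm j).1 i * b₂ (finProdFinEquiv.symm j).2 i) (q i : X))]
      simp only [Equiv.symm_apply_apply, ContinuousMap.mul_apply, ContinuousMap.coe_mul]
      rw [Fintype.sum_prod_type]
      simp only [ContinuousMap.mul_apply, h₁ q, h₂ q, Finset.sum_mul_sum]
      congr 1; ext j₁; congr 1; ext j₂
      rw [Finset.prod_mul_distrib]; ring
  obtain ⟨n, c, b, hrep⟩ := hstruct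
  refine ⟨n, c, fun j i => b j i * w, ?_, ?_, ?_⟩
  · intro j i
    refine hwc.mono ?_
    intro x hx
    simp only [mem_support, ContinuousMap.coe_mul, Pi.mul_apply] at hx ⊢
    intro h0
    exact hx (by rw [h0, mul_zero])
  · intro j i
    have hsup : support (⇑(b j i * w)) ⊆ support ⇑w := by
      intro x hx
      simp only [mem_support, ContinuousMap.coe_mul, Pi.mul_apply] at hx ⊢
      exact fun h0 => hx (by rw [h0, mul_zero])
    exact (closure_mono hsup).trans (hwsupp.trans hVth)
  · intro x
    by_cases hxP : ∀ i, x i ∈ P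
    · set q : Fin k → ↥P := fun i => ⟨x i, hxP i⟩ with hq
      set W : ℝ := ∏ i, w (x i) with hW
      have hW0 : 0 ≤ W := Finset.prod_nonneg fun i _ => (hw01 (x i)).1
      have hW1 : W ≤ 1 :=
        Finset.prod_le_one (fun i _ => (hw01 (x i)).1) fun i _ => (hw01 (x i)).2
      have hAx : (∑ j, c j * ∏ i, (b j i * w) (x i)) = W * G q := by
        rw [hrep q, Finset.mul_sum]
        refine Finset.sum_congr rfl fun j _ => ?_
        simp only [ContinuousMap.mul_apply]
        rw [Finset.prod_mul_distrib]
        ring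
      have h1 : |H x - W * H x| ≤ ε := by
        have : |H x - W * H x| = |H x| * (1 - W) := by
          rw [← abs_of_nonneg (by linarith : (0:ℝ) ≤ 1 - W), ← abs_mul]
          ring_nf
        rw [this]
        by_cases hxE : x ∈ E
        · have hwone : ∀ i, w (x i) = 1 := fun i =>
            hw1 (mem_iUnion.2 ⟨i, ⟨x, hxE, rfl⟩⟩)
          have : W = 1 := by rw [hW]; simp [hwone]
          rw [this]
          simp [hε.le]
        · have hlt : |H x| < ε := lt_of_not_ge hxE
          calc |H x| * (1 - W) ≤ |H x| * 1 :=
                mul_le_mul_of_nonneg_left (by linarith) (abs_nonneg _)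
            _ ≤ ε := by linarith
      have h2 : |W * H x - W * G q| ≤ ε := by
        have hGq : |G q - H x| ≤ ε := by
          have := hG q
          simp only [Real.norm_eq_abs] at this
          exact le_of_lt this
        calc |W * H x - W * G q| = W * |H x - G q| := by
              rw [← mul_sub, abs_mul, abs_of_nonneg hW0]
          _ ≤ 1 * ε := by
              refine mul_le_mul hW1 ?_ (abs_nonneg _) zero_le_one
              rwa [abs_sub_comm]
          _ = ε := one_mul ε
      calc |H x - ∑ j, c j * ∏ i, (b j i * w) (x i)|
          = |H x - W * G q| := by rw [hAx]
        _ ≤ |H x - W * H x| + |W * H x - W * G q| := abs_sub_le _ _ _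
        _ ≤ 2 * ε := by linarith
    · push_neg at hxP
      obtain ⟨i₀, hi₀⟩ := hxP
      have hw0 : w (x i₀) = 0 := by
        refine image_eq_zero_of_notMem_tsupport fun hmem => hi₀ ?_
        exact subset_closure (hwsupp hmem)
      have hAx : (∑ j, c j * ∏ i, (b j i * w) (x i)) = 0 := by
        refine Finset.sum_eq_zero fun j _ => ?_
        rw [Finset.prod_eq_zero (Finset.mem_univ i₀) (by simp [hw0]), mul_zero]
      rw [hAx, sub_zero]
      have hxE : x ∉ E := fun hxE =>
        hi₀ (subset_closure (hCV (mem_iUnion.2 ⟨i₀, ⟨x, hxE, rfl⟩⟩)))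
      have : |H x| < ε := lt_of_not_ge hxE
      linarith

lemma fubini_helper {Y : Type*} [MeasurableSpace Y] (m : Measure Y) [SigmaFinite m] (k : ℕ)
    (f : Fin k → Y → ℝ) :
    ∫ x : Fin k → Y, ∏ i, f i (x i) ∂(Measure.pi fun _ => m) = ∏ i, ∫ y, f i y ∂m := by
  letI : MeasureSpace Y := ⟨m⟩
  have := MeasureTheory.integral_fintype_prod_eq_prod (𝕜 := ℝ) (ι := Fin k) (E := fun _ => Y) f (μ := fun _ => m)
  simpa [MeasureTheory.volume_pi] using this

/-- For `F ∈ C_c(T^k)` and `g_1,…,g_k ∈ C(K)`, the function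
`m ↦ ⟨m^{⊗k}, F ⊗ G_g⟩` is vaguely continuous on `M_λ`, the space of measures
on `T × K` whose spatial marginal is Lebesgue measure. -/
theorem Ik_vague_continuous (d : ℕ) (T : Set (EuclideanSpace ℝ (Fin d)))
    (hT : MeasurableSet T)
    (K : Type*) [MetricSpace K] [CompactSpace K] [MeasurableSpace K] [BorelSpace K]
    (k : ℕ) (F : (Fin k → T) → ℝ) (hF : Continuous F) (hFc : HasCompactSupport F)
    (g : Fin k → K → ℝ) (hg : ∀ i, Continuous (g i)) :
    @Continuous {m : Measure (T × K) // m.map Prod.fst = Measure.comap Subtype.val volume}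
      ℝ (TopologicalSpace.induced Subtype.val (vagueTopology (T × K))) inferInstance
      (fun m => ∫ x : Fin k → T × K,
        F (fun i => (x i).1) * ∏ i, g i (x i).2
          ∂(Measure.pi (fun _ : Fin k => (m : Measure (T × K))))) := by
  classical
  letI : TopologicalSpace (Measure (T × K)) := vagueTopology (T × K)
  set H : (Fin k → T × K) → ℝ := fun x => F (fun i => (x i).1) * ∏ i, g i (x i).2 with hHdef
  have hHcont : Continuous H := by
    apply Continuous.mul
    · exact hF.comp (continuous_pi fun i => continuous_fst.comp (continuous_apply i))
    · exact continuous_finset_prod _ fun i _ =>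
        (hg i).comp (continuous_snd.comp (continuous_apply i))
  have hHc : HasCompactSupport H := by
    have hZ : IsCompact ((fun ab : (Fin k → T) × (Fin k → K) =>
        fun i => ((ab.1 i, ab.2 i) : T × K)) '' (tsupport F ×ˢ univ)) :=
      (hFc.prod isCompact_univ).image (by
        refine continuous_pi fun i => Continuous.prodMk ?_ ?_
        · exact (continuous_apply i).comp continuous_fst
        · exact (continuous_apply i).comp continuous_snd)
    refine HasCompactSupport.intro hZ fun x hx => ?_
    by_contra h0
    have hFne : F (fun i => (x i).1) ≠ 0 := fun hF0 => h0 (by simp [hHdef, hF0])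
    refine hx ⟨(fun i => (x i).1, fun i => (x i).2), ⟨subset_tsupport F hFne, mem_univ _⟩, ?_⟩
    funext i
    exact Prod.mk.eta
  have hemb : MeasurableEmbedding ((↑) : T → EuclideanSpace ℝ (Fin d)) :=
    MeasurableEmbedding.subtype_coe hT
  have key : ∀ m : {m : Measure (T × K) // m.map Prod.fst = Measure.comap Subtype.val volume},
      ∀ B : Set T, MeasurableSet B →
      (m : Measure (T × K)) (Prod.fst ⁻¹' B) = volume ((↑) '' B : Set (EuclideanSpace ℝ (Fin d))) := by
    intro m B hB
    rw [← Measure.map_apply measurable_fst hB, m.2, hemb.comap_apply]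
  have hBmeas : ∀ N : ℝ, MeasurableSet {a : T | ‖(a : EuclideanSpace ℝ (Fin d))‖ ≤ N} :=
    fun N => ((continuous_norm.comp continuous_subtype_val).measurable measurableSet_Iic :
      MeasurableSet ((fun a : T => ‖(a : EuclideanSpace ℝ (Fin d))‖) ⁻¹' Iic N))
  have hRval : ∀ m : {m : Measure (T × K) // m.map Prod.fst = Measure.comap Subtype.val volume},
      ∀ N : ℝ, (m : Measure (T × K)) {p : T × K | ‖(p.1 : EuclideanSpace ℝ (Fin d))‖ ≤ N}
        ≤ volume (Metric.closedBall (0 : EuclideanSpace ℝ (Fin d)) N) := by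
    intro m N
    have h1 : {p : T × K | ‖(p.1 : EuclideanSpace ℝ (Fin d))‖ ≤ N} =
        Prod.fst ⁻¹' {a : T | ‖(a : EuclideanSpace ℝ (Fin d))‖ ≤ N} := rfl
    rw [h1, key m _ (hBmeas N)]
    refine measure_mono ?_
    rintro _ ⟨a, ha, rfl⟩
    exact mem_closedBall_zero_iff.2 ha
  have hSF : ∀ m : {m : Measure (T × K) // m.map Prod.fst = Measure.comap Subtype.val volume},
      SigmaFinite (m : Measure (T × K)) := by
    intro m
    refine ⟨⟨⟨fun nn => {p : T × K | ‖(p.1 : EuclideanSpace ℝ (Fin d))‖ ≤ nn},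
      fun _ => trivial, fun nn => ?_, ?_⟩⟩⟩
    · exact lt_of_le_of_lt (hRval m nn) measure_closedBall_lt_top
    · refine eq_univ_of_forall fun p => ?_
      obtain ⟨nn, hnn⟩ := exists_nat_ge ‖(p.1 : EuclideanSpace ℝ (Fin d))‖
      exact mem_iUnion.2 ⟨nn, hnn⟩
  have hFCm : ∀ m : {m : Measure (T × K) // m.map Prod.fst = Measure.comap Subtype.val volume},
      IsFiniteMeasureOnCompacts (m : Measure (T × K)) := by
    intro m
    constructor
    intro s hs
    have hBc : IsCompact (Prod.fst '' s) := hs.image continuous_fst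
    have h1 : (m : Measure (T × K)) s ≤ volume ((↑) '' (Prod.fst '' s) :
        Set (EuclideanSpace ℝ (Fin d))) := by
      rw [← key m _ hBc.isClosed.measurableSet]
      exact measure_mono fun p hp => ⟨p, hp, rfl⟩
    exact lt_of_le_of_lt h1 ((hBc.image continuous_subtype_val).measure_lt_top)
  -- compact support data
  set Cinf : Set (T × K) := ⋃ i', eval i' '' tsupport H with hCinf
  have hCinfc : IsCompact Cinf := isCompact_iUnion fun i => hHc.image (continuous_apply i)
  obtain ⟨N₀, hN₀⟩ : ∃ N₀ : ℝ, ∀ p ∈ Cinf, ‖(p.1 : EuclideanSpace ℝ (Fin d))‖ ≤ N₀ := by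
    obtain ⟨N₀, hN₀⟩ := (hCinfc.image ((continuous_norm.comp
      continuous_subtype_val).comp continuous_fst)).bddAbove
    exact ⟨N₀, fun p hp => hN₀ ⟨p, hp, rfl⟩⟩
  set N : ℝ := max N₀ 0 + 2 with hNdef
  set R : Set (T × K) := {p | ‖(p.1 : EuclideanSpace ℝ (Fin d))‖ ≤ N} with hRdef
  have hRsub : cthickening 1 Cinf ⊆ R := by
    intro p hp
    obtain ⟨z, hz, hdist⟩ := Metric.mem_thickening_iff.1
      (Metric.cthickening_subset_thickening' two_pos one_lt_two Cinf hp)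
    have h1 : dist (p.1 : EuclideanSpace ℝ (Fin d)) (z.1 : EuclideanSpace ℝ (Fin d))
        ≤ dist p z := by
      rw [← Subtype.dist_eq p.1 z.1, Prod.dist_eq]
      exact le_max_left _ _
    have h2 : ‖(p.1 : EuclideanSpace ℝ (Fin d))‖ ≤ ‖(z.1 : EuclideanSpace ℝ (Fin d))‖ +
        dist (p.1 : EuclideanSpace ℝ (Fin d)) (z.1 : EuclideanSpace ℝ (Fin d)) := by
      rw [dist_eq_norm]
      exact norm_le_insert' _ _
    have h3 : ‖(z.1 : EuclideanSpace ℝ (Fin d))‖ ≤ N₀ := hN₀ z hz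
    have h4 : N₀ ≤ max N₀ 0 := le_max_left _ _
    simp only [hRdef, mem_setOf_eq, hNdef]
    linarith
  have hRmeas : MeasurableSet R := by
    rw [hRdef]
    exact ((continuous_norm.comp (continuous_subtype_val.comp continuous_fst)).measurable
      measurableSet_Iic :
      MeasurableSet ((fun p : T × K => ‖(p.1 : EuclideanSpace ℝ (Fin d))‖) ⁻¹' Iic N))
  set vol : ℝ := (volume (Metric.closedBall (0 : EuclideanSpace ℝ (Fin d)) N)).toReal
    with hvoldef
  have hvol0 : 0 ≤ vol := ENNReal.toReal_nonneg
  -- continuity of test integrals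
  have hint_cont : ∀ φ : C((T × K), ℝ), HasCompactSupport ⇑φ →
      Continuous fun m : {m : Measure (T × K) //
        m.map Prod.fst = Measure.comap Subtype.val volume} =>
          ∫ p, φ p ∂(m : Measure (T × K)) := by
    intro φ hφ
    have h1 : Continuous fun μ : Measure (T × K) =>
        ∫ p, (⟨φ, hφ⟩ : CompactlySupportedContinuousMap (T × K) ℝ) p ∂μ :=
      continuous_iInf_dom (i := (⟨φ, hφ⟩ : CompactlySupportedContinuousMap (T × K) ℝ))
        continuous_induced_dom
    exact h1.comp continuous_subtype_val
  rw [continuous_iff_continuousAt]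
  intro m₀
  rw [ContinuousAt, Metric.tendsto_nhds]
  intro δ hδ
  set ε : ℝ := δ / (7 * (vol + 1) ^ k) with hεdef
  have hε : 0 < ε := by positivity
  obtain ⟨n, c, f, hfcs, hfsupp, happx⟩ := approx_lemma k H hHcont hHc hε
  set h : {m : Measure (T × K) // m.map Prod.fst = Measure.comap Subtype.val volume} → ℝ :=
    fun m => ∑ j, c j * ∏ i, ∫ p, f j i p ∂(m : Measure (T × K)) with hhdef
  have hcont : Continuous h := by
    refine continuous_finset_sum _ fun j _ => Continuous.mul continuous_const ?_
    exact continuous_finset_prod _ fun i _ => hint_cont (f j i) (hfcs j i)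
  have hclose : ∀ m : {m : Measure (T × K) // m.map Prod.fst = Measure.comap Subtype.val volume},
      |(∫ x : Fin k → T × K, H x ∂(Measure.pi fun _ : Fin k => (m : Measure (T × K)))) - h m|
      ≤ 2 * ε * (vol + 1) ^ k := by
    intro m
    haveI := hSF m
    haveI := hFCm m
    haveI : IsFiniteMeasureOnCompacts (Measure.pi fun _ : Fin k => (m : Measure (T × K))) := by
      constructor
      intro s hs
      have hsub : s ⊆ Set.pi univ fun i => eval i '' s := fun x hx i _ => ⟨x, hx, rfl⟩
      refine lt_of_le_of_lt (measure_mono hsub) ?_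
      rw [Measure.pi_pi]
      exact ENNReal.prod_lt_top fun i _ => (hs.image (continuous_apply i)).measure_lt_top
    have hHint : Integrable H (Measure.pi fun _ : Fin k => (m : Measure (T × K))) :=
      hHcont.integrable_of_hasCompactSupport hHc
    set A : (Fin k → T × K) → ℝ := fun x => ∑ j, c j * ∏ i, f j i (x i) with hAdef
    have hprodint : ∀ j : Fin n, Integrable (fun x : Fin k → T × K => ∏ i, f j i (x i))
        (Measure.pi fun _ : Fin k => (m : Measure (T × K))) := by
      intro j
      have hc : Continuous fun x : Fin k → T × K => ∏ i, f j i (x i) :=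
        continuous_finset_prod _ fun i _ => (f j i).continuous.comp (continuous_apply i)
      have hcs : HasCompactSupport fun x : Fin k → T × K => ∏ i, f j i (x i) := by
        refine HasCompactSupport.intro (isCompact_univ_pi fun i => hfcs j i) fun x hx => ?_
        simp only [mem_univ_pi, not_forall] at hx
        obtain ⟨i₀, hi₀⟩ := hx
        exact Finset.prod_eq_zero (Finset.mem_univ i₀) (image_eq_zero_of_notMem_tsupport hi₀)
      exact hc.integrable_of_hasCompactSupport hcs
    have hAint : Integrable A (Measure.pi fun _ : Fin k => (m : Measure (T × K))) :=
      integrable_finset_sum _ fun j _ => (hprodint j).const_mul (c j)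
    have hAeq : ∫ x, A x ∂(Measure.pi fun _ : Fin k => (m : Measure (T × K))) = h m := by
      rw [hAdef, integral_finset_sum _ (fun j _ => (hprodint j).const_mul (c j))]
      refine Finset.sum_congr rfl fun j _ => ?_
      rw [integral_const_mul]
      congr 1
      exact fubini_helper (m : Measure (T × K)) k (fun i p => f j i p)
    have hvanish : ∀ x : Fin k → T × K, x ∉ Set.pi univ (fun _ : Fin k => R) →
        H x - A x = 0 := by
      intro x hx
      simp only [mem_univ_pi, not_forall] at hx
      obtain ⟨i₀, hi₀⟩ := hx
      have hH0 : H x = 0 := by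
        by_contra h0
        refine hi₀ (hRsub (self_subset_cthickening _ ?_))
        exact mem_iUnion.2 ⟨i₀, ⟨x, subset_tsupport H h0, rfl⟩⟩
      have hA0 : A x = 0 := Finset.sum_eq_zero fun j _ => by
        rw [Finset.prod_eq_zero (Finset.mem_univ i₀)
          ((image_eq_zero_of_notMem_tsupport fun hmem => hi₀ (hRsub (hfsupp j i₀ hmem)) :
            f j i₀ (x i₀) = 0)), mul_zero]
      rw [hH0, hA0, sub_zero]
    have hPiRfin : (Measure.pi fun _ : Fin k => (m : Measure (T × K)))
        (Set.pi univ fun _ : Fin k => R) < ⊤ := by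
      rw [Measure.pi_pi]
      exact ENNReal.prod_lt_top fun i _ =>
        lt_of_le_of_lt (hRval m N) measure_closedBall_lt_top
    have hptoReal : ((Measure.pi fun _ : Fin k => (m : Measure (T × K)))
        (Set.pi univ fun _ : Fin k => R)).toReal ≤ (vol + 1) ^ k := by
      rw [Measure.pi_pi, ENNReal.toReal_prod]
      calc (∏ _i : Fin k, ((m : Measure (T × K)) R).toReal)
          ≤ ∏ _i : Fin k, (vol + 1) := by
            refine Finset.prod_le_prod (fun i _ => ENNReal.toReal_nonneg) fun i _ => ?_
            have := ENNReal.toReal_mono measure_closedBall_lt_top.ne (hRval m N)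
            rw [← hvoldef] at this
            linarith
        _ = (vol + 1) ^ k := by rw [Finset.prod_const, Finset.card_univ, Fintype.card_fin]
    rw [← hAeq, ← integral_sub hHint hAint,
      ← setIntegral_eq_integral_of_forall_compl_eq_zero hvanish]
    have hbd := norm_setIntegral_le_of_norm_le_const
      (μ := Measure.pi fun _ : Fin k => (m : Measure (T × K)))
      (s := Set.pi univ fun _ : Fin k => R) (C := 2 * ε) hPiRfin
      (fun x _ => by rw [Real.norm_eq_abs]; exact happx x)
    rw [Real.norm_eq_abs] at hbd
    calc |∫ x in Set.pi univ fun _ : Fin k => R, (H x - A x)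
          ∂(Measure.pi fun _ : Fin k => (m : Measure (T × K)))|
        ≤ 2 * ε * ((Measure.pi fun _ : Fin k => (m : Measure (T × K)))
            (Set.pi univ fun _ : Fin k => R)).toReal := hbd
      _ ≤ 2 * ε * (vol + 1) ^ k :=
          mul_le_mul_of_nonneg_left hptoReal (by positivity)
  have hev : ∀ᶠ m in 𝓝 m₀, dist (h m) (h m₀) < δ / 7 :=
    Metric.tendsto_nhds.1 (hcont.tendsto m₀) (δ / 7) (by positivity)
  filter_upwards [hev] with m hm
  have e1 := hclose m
  have e2 := hclose m₀
  have hb : 2 * ε * (vol + 1) ^ k = 2 * δ / 7 := by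
    rw [hεdef]
    field_simp
  rw [Real.dist_eq] at hm ⊢
  have t1 := abs_sub_le
    (∫ x : Fin k → T × K, H x ∂(Measure.pi fun _ : Fin k => (m : Measure (T × K)))) (h m) (h m₀)
  have t2 := abs_sub_le (h m₀)
    (∫ x : Fin k → T × K, H x ∂(Measure.pi fun _ : Fin k => (m₀ : Measure (T × K))))
    (∫ x : Fin k → T × K, H x ∂(Measure.pi fun _ : Fin k => (m₀ : Measure (T × K))))
  have e2' : |h m₀ - ∫ x : Fin k → T × K, H x
      ∂(Measure.pi fun _ : Fin k => (m₀ : Measure (T × K)))| ≤ 2 * ε * (vol + 1) ^ k := by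
    rw [abs_sub_comm]; exact e2
  have t3 := abs_sub_le
    (∫ x : Fin k → T × K, H x ∂(Measure.pi fun _ : Fin k => (m : Measure (T × K))))
    (h m₀)
    (∫ x : Fin k → T × K, H x ∂(Measure.pi fun _ : Fin k => (m₀ : Measure (T × K))))
  calc |(∫ x : Fin k → T × K, H x ∂(Measure.pi fun _ : Fin k => (m : Measure (T × K)))) -
        ∫ x : Fin k → T × K, H x ∂(Measure.pi fun _ : Fin k => (m₀ : Measure (T × K)))|
      ≤ |(∫ x : Fin k → T × K, H x ∂(Measure.pi fun _ : Fin k => (m : Measure (T × K)))) - h m₀|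
        + |h m₀ - ∫ x : Fin k → T × K, H x
            ∂(Measure.pi fun _ : Fin k => (m₀ : Measure (T × K)))| := t3
    _ ≤ (|(∫ x : Fin k → T × K, H x ∂(Measure.pi fun _ : Fin k => (m : Measure (T × K)))) - h m|
        + |h m - h m₀|) + |h m₀ - ∫ x : Fin k → T × K, H x
            ∂(Measure.pi fun _ : Fin k => (m₀ : Measure (T × K)))| := by
          have := abs_sub_le
            (∫ x : Fin k → T × K, H x ∂(Measure.pi fun _ : Fin k => (m : Measure (T × K))))
            (h m) (h m₀)
          linarith
    _ < δ := by
        rw [hb] at e1 e2'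
        linarith
end

section
/- The linear span of the constant functions together with the functions m ↦ ⟨m^{⊗k}, F ⊗ G_g⟩ (for k ∈ ℕ, F ∈ C_c(T^k), g_1,…,g_k ∈ C(K)) is dense in the space of continuous real-valued functions on the compact space M_λ. -/
open MeasureTheory Topology

variable (d : ℕ) (T : Set (EuclideanSpace ℝ (Fin d)))
variable (K : Type*) [MetricSpace K] [CompactSpace K] [MeasurableSpace K] [BorelSpace K]

/-- The space `M_λ` of measures on `T × K` with spatial marginal Lebesgue measure. -/
def Mlam : Type _ :=
  {m : Measure (T × K) // m.map Prod.fst = Measure.comap Subtype.val volume}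

/-- The test function `I_k(·; F, g) : m ↦ ⟨m^{⊗k}, F ⊗ G_g⟩`. -/
noncomputable def IkFun (k : ℕ) (F : (Fin k → T) → ℝ) (g : Fin k → K → ℝ) :
    Mlam d T K → ℝ := fun m =>
  ∫ x : Fin k → T × K, F (fun i => (x i).1) * ∏ i, g i (x i).2
    ∂(Measure.pi (fun _ : Fin k => (m.1 : Measure (T × K))))

/-- The family of test functions: constants and the functions `I_k(·; F, g₁,…,g_k)`
with `F ∈ C_c(T^k)` and `g_i ∈ C(K)`. -/
def testFuns : Set (Mlam d T K → ℝ) :=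
  {f | ∃ c : ℝ, f = fun _ => c} ∪
  {f | ∃ (k : ℕ) (F : (Fin k → T) → ℝ) (g : Fin k → K → ℝ),
        Continuous F ∧ HasCompactSupport F ∧ (∀ i, Continuous (g i)) ∧
        f = IkFun d T K k F g}

/-! ### Auxiliary development -/

namespace IkAux

open Filter Set
open scoped ENNReal NNReal

noncomputable section

variable {d : ℕ} {T : Set (EuclideanSpace ℝ (Fin d))}
variable {K : Type*} [MetricSpace K] [CompactSpace K] [MeasurableSpace K] [BorelSpace K]

/-- The topology on `Mlam`. -/
scoped instance instTopMlam : TopologicalSpace (Mlam d T K) :=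
  TopologicalSpace.induced (fun m : Mlam d T K => (m.1 : Measure (T × K)))
    (vagueTopology (T × K))

/-- Integration of a compactly supported continuous function against an element of `Mlam`. -/
def Lam (f : CompactlySupportedContinuousMap (T × K) ℝ) (m : Mlam d T K) : ℝ :=
  ∫ x, f x ∂(m.1 : Measure (T × K))

/-- The marginal property. -/
lemma marg_apply (m : Mlam d T K) {A : Set T} (hA : MeasurableSet A) :
    (m.1 : Measure (T × K)) (Prod.fst ⁻¹' A) = Measure.comap Subtype.val volume A := by
  calc (m.1 : Measure (T × K)) (Prod.fst ⁻¹' A)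
      = ((m.1 : Measure (T × K)).map Prod.fst) A :=
        (Measure.map_apply measurable_fst hA).symm
  _ = Measure.comap Subtype.val volume A := by rw [m.2]

lemma comap_vol_apply (hT : MeasurableSet T) {A : Set T} (hA : MeasurableSet A) :
    Measure.comap Subtype.val volume A = volume (Subtype.val '' A) :=
  Measure.comap_apply _ Subtype.val_injective
    (fun s hs => (MeasurableEmbedding.subtype_coe hT).measurableSet_image.2 hs) _ hA

lemma sigmaFinite (hT : MeasurableSet T) (m : Mlam d T K) :
    SigmaFinite (m.1 : Measure (T × K)) := by
  refine ⟨⟨⟨fun n => Prod.fst ⁻¹' (Subtype.val ⁻¹' Metric.ball 0 n),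
    fun n => trivial, fun n => ?_, ?_⟩⟩⟩
  · have hmeas : MeasurableSet
        (Subtype.val ⁻¹' Metric.ball (0 : EuclideanSpace ℝ (Fin d)) n : Set T) :=
      measurableSet_ball.preimage measurable_subtype_coe
    rw [marg_apply m hmeas, comap_vol_apply hT hmeas]
    exact lt_of_le_of_lt (measure_mono (Set.image_preimage_subset _ _)) measure_ball_lt_top
  · ext p
    simp only [Set.mem_iUnion, Set.mem_preimage, Set.mem_univ, iff_true]
    obtain ⟨n, hn⟩ := exists_nat_gt ‖(p.1 : EuclideanSpace ℝ (Fin d))‖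
    exact ⟨n, by simpa [Metric.mem_ball, dist_zero_right] using hn⟩

/-- Finiteness of the measure of "compact-in-`T` times `K`" sets. -/
lemma marg_compact_lt_top (hT : MeasurableSet T) (m : Mlam d T K) {S : Set T}
    (hS : IsCompact S) : (m.1 : Measure (T × K)) (Prod.fst ⁻¹' S) < ⊤ := by
  rw [marg_apply m hS.isClosed.measurableSet, comap_vol_apply hT hS.isClosed.measurableSet]
  exact (hS.image continuous_subtype_val).measure_lt_top

/-- Uniform bound for `Lam f`. -/
lemma abs_Lam_le (hT : MeasurableSet T) (f : CompactlySupportedContinuousMap (T × K) ℝ) :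
    ∃ C : ℝ, ∀ m : Mlam d T K, |Lam f m| ≤ C := by
  obtain ⟨Cf, hCf⟩ := f.hasCompactSupport'.exists_bound_of_continuous f.continuous
  have hS : IsCompact (tsupport f) := f.hasCompactSupport'
  have hST : IsCompact (Prod.fst '' tsupport f) := hS.image continuous_fst
  have hSTm : MeasurableSet (Prod.fst '' tsupport f) := hST.isClosed.measurableSet
  refine ⟨(max Cf 0) * (volume (Subtype.val '' (Prod.fst '' tsupport f))).toReal, fun m => ?_⟩
  have hfin : (m.1 : Measure (T × K)) (Prod.fst ⁻¹' (Prod.fst '' tsupport f)) < ⊤ :=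
    marg_compact_lt_top hT m hST
  have hzero : ∀ x ∉ Prod.fst ⁻¹' (Prod.fst '' tsupport f), f x = 0 := by
    intro x hx
    apply image_eq_zero_of_notMem_tsupport
    exact fun hmem => hx ⟨x, hmem, rfl⟩
  have h1 : |Lam f m| = ‖∫ x in Prod.fst ⁻¹' (Prod.fst '' tsupport f), f x ∂(m.1 : Measure (T × K))‖ := by
    rw [setIntegral_eq_integral_of_forall_compl_eq_zero hzero]
    rw [Real.norm_eq_abs]; rfl
  rw [h1]
  have h2 := norm_setIntegral_le_of_norm_le_const (C := max Cf 0) hfin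
    (fun x _ => le_trans (hCf x) (le_max_left _ _))
  refine h2.trans (le_of_eq ?_)
  congr 1
  rw [measureReal_def, marg_apply m hSTm, comap_vol_apply hT hSTm]

/-- Integrability helper. -/
lemma integrable_of_bounded_of_vanish {α : Type*} [MeasurableSpace α] (μ : Measure α)
    (u : α → ℝ) (hu : AEStronglyMeasurable u μ) {A : Set α} (hA : MeasurableSet A)
    (hfin : μ A < ⊤) {C : ℝ} (hb : ∀ x, |u x| ≤ C) (hv : ∀ x ∉ A, u x = 0) :
    Integrable u μ := by
  apply Integrable.mono' ((integrableOn_const hfin.ne).integrable_indicator hA) hu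
  filter_upwards with x
  by_cases hx : x ∈ A
  · simpa [Set.indicator_of_mem hx, Real.norm_eq_abs] using hb x
  · simp [Set.indicator_of_notMem hx, hv x hx]

lemma abs_integral_le_of_bounded_of_vanish {α : Type*} [MeasurableSpace α] (μ : Measure α)
    (u : α → ℝ) (hu : AEStronglyMeasurable u μ) {A : Set α} (hA : MeasurableSet A)
    (hfin : μ A < ⊤) {C : ℝ} (hb : ∀ x, |u x| ≤ C) (hv : ∀ x ∉ A, u x = 0) :
    |∫ x, u x ∂μ| ≤ C * (μ A).toReal := by
  rw [← setIntegral_eq_integral_of_forall_compl_eq_zero hv, ← Real.norm_eq_abs]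
  exact norm_setIntegral_le_of_norm_le_const hfin (fun x _ => by simpa [Real.norm_eq_abs] using hb x)

section Compactness

variable (𝒰 : Ultrafilter (Mlam d T K))

/-- Ultrafilter limit of the measures of a fixed set. -/
def mlim (A : Set (T × K)) : ℝ≥0∞ :=
  (𝒰.map fun m : Mlam d T K => (m.1 : Measure (T × K)) A).lim

lemma tendsto_mlim (A : Set (T × K)) :
    Tendsto (fun m : Mlam d T K => (m.1 : Measure (T × K)) A) 𝒰 (𝓝 (mlim 𝒰 A)) :=
  Ultrafilter.le_nhds_lim _

lemma mlim_mono {A B : Set (T × K)} (h : A ⊆ B) : mlim 𝒰 A ≤ mlim 𝒰 B :=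
  le_of_tendsto_of_tendsto' (tendsto_mlim 𝒰 A) (tendsto_mlim 𝒰 B)
    (fun m => measure_mono h)

lemma mlim_exact (hT : MeasurableSet T) {A : Set T} (hA : MeasurableSet A) :
    mlim 𝒰 (Prod.fst ⁻¹' A) = Measure.comap Subtype.val volume A := by
  apply tendsto_nhds_unique (tendsto_mlim 𝒰 _)
  have h : (fun m : Mlam d T K => (m.1 : Measure (T × K)) (Prod.fst ⁻¹' A))
      = fun _ => Measure.comap Subtype.val volume A := funext fun m => marg_apply m hA
  rw [h]
  exact tendsto_const_nhds

lemma mlim_bound (hT : MeasurableSet T) {A : Set (T × K)} {S : Set T} (hS : IsCompact S)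
    (h : A ⊆ Prod.fst ⁻¹' S) : mlim 𝒰 A ≤ volume (Subtype.val '' S) := by
  refine le_of_tendsto (tendsto_mlim 𝒰 A) (Eventually.of_forall fun m => ?_)
  calc (m.1 : Measure (T × K)) A ≤ (m.1 : Measure (T × K)) (Prod.fst ⁻¹' S) := measure_mono h
  _ = volume (Subtype.val '' S) := by
      rw [marg_apply m hS.isClosed.measurableSet, comap_vol_apply hT hS.isClosed.measurableSet]

lemma mlim_ne_top (hT : MeasurableSet T) {A : Set (T × K)} {S : Set T} (hS : IsCompact S)
    (h : A ⊆ Prod.fst ⁻¹' S) : mlim 𝒰 A ≠ ⊤ :=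
  ne_top_of_le_ne_top (hS.image continuous_subtype_val).measure_lt_top.ne
    (mlim_bound 𝒰 hT hS h)

lemma mlim_ne_top_of_compact (hT : MeasurableSet T) {A : Set (T × K)} (hA : IsCompact A) :
    mlim 𝒰 A ≠ ⊤ :=
  mlim_ne_top 𝒰 hT (hA.image continuous_fst) (fun x hx => ⟨x, hx, rfl⟩)

lemma mlim_union {A B : Set (T × K)} (hd : Disjoint A B) (hB : MeasurableSet B) :
    mlim 𝒰 (A ∪ B) = mlim 𝒰 A + mlim 𝒰 B := by
  apply tendsto_nhds_unique (tendsto_mlim 𝒰 _)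
  have h : (fun m : Mlam d T K => (m.1 : Measure (T × K)) (A ∪ B))
      = fun m : Mlam d T K => (m.1 : Measure (T × K)) A + (m.1 : Measure (T × K)) B :=
    funext fun m => measure_union hd hB
  rw [h]
  exact (tendsto_mlim 𝒰 A).add (tendsto_mlim 𝒰 B)

lemma mlim_union_le (A B : Set (T × K)) : mlim 𝒰 (A ∪ B) ≤ mlim 𝒰 A + mlim 𝒰 B :=
  le_of_tendsto_of_tendsto' (tendsto_mlim 𝒰 _)
    ((tendsto_mlim 𝒰 A).add (tendsto_mlim 𝒰 B)) (fun m => measure_union_le _ _)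

/-- The limit content. -/
def limContent (hT : MeasurableSet T) : Content (T × K) where
  toFun S := (mlim 𝒰 S).toNNReal
  mono' S₁ S₂ h :=
    ENNReal.toNNReal_mono (mlim_ne_top_of_compact 𝒰 hT S₂.2) (mlim_mono 𝒰 h)
  sup_disjoint' S₁ S₂ hd h₁ h₂ := by
    have h := mlim_union 𝒰 hd h₂.measurableSet
    have e : ((S₁ ⊔ S₂ : TopologicalSpace.Compacts (T × K)) : Set (T × K))
        = (S₁ : Set (T × K)) ∪ S₂ := rfl
    simp only [e, h]
    exact ENNReal.toNNReal_add (mlim_ne_top_of_compact 𝒰 hT S₁.2)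
      (mlim_ne_top_of_compact 𝒰 hT S₂.2)
  sup_le' S₁ S₂ := by
    have e : ((S₁ ⊔ S₂ : TopologicalSpace.Compacts (T × K)) : Set (T × K))
        = (S₁ : Set (T × K)) ∪ S₂ := rfl
    have h1 := mlim_union_le 𝒰 (S₁ : Set (T × K)) S₂
    have h2 : (mlim 𝒰 ((S₁ : Set (T × K)) ∪ S₂)).toNNReal
        ≤ (mlim 𝒰 (S₁ : Set (T × K)) + mlim 𝒰 (S₂ : Set (T × K))).toNNReal :=
      ENNReal.toNNReal_mono (by
        rw [ENNReal.add_ne_top]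
        exact ⟨mlim_ne_top_of_compact 𝒰 hT S₁.2, mlim_ne_top_of_compact 𝒰 hT S₂.2⟩) h1
    simp only [e]
    refine h2.trans (le_of_eq ?_)
    exact ENNReal.toNNReal_add (mlim_ne_top_of_compact 𝒰 hT S₁.2)
      (mlim_ne_top_of_compact 𝒰 hT S₂.2)

/-- The candidate limit measure. -/
def mu0 (hT : MeasurableSet T) : Measure (T × K) := (limContent 𝒰 hT).measure

lemma mu0_compacts_le (hT : MeasurableSet T) {S : Set (T × K)} (hS : IsCompact S) :
    mlim 𝒰 S ≤ mu0 𝒰 hT S := by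
  have h := (limContent 𝒰 hT).le_outerMeasure_compacts ⟨S, hS⟩
  have hcoe : ((limContent 𝒰 hT).toFun ⟨S, hS⟩ : ℝ≥0∞) = mlim 𝒰 S := by
    show ((mlim 𝒰 S).toNNReal : ℝ≥0∞) = mlim 𝒰 S
    exact ENNReal.coe_toNNReal (mlim_ne_top_of_compact 𝒰 hT hS)
  rw [mu0, Content.measure_apply _ hS.isClosed.measurableSet]
  calc mlim 𝒰 S = _ := hcoe.symm
  _ ≤ _ := h

lemma mu0_open_le (hT : MeasurableSet T) {U : Set (T × K)} (hU : IsOpen U) :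
    mu0 𝒰 hT U ≤ mlim 𝒰 U := by
  rw [mu0, Content.measure_apply _ hU.measurableSet,
    (limContent 𝒰 hT).outerMeasure_of_isOpen U hU]
  simp only [Content.innerContent]
  refine iSup_le fun S => iSup_le fun hSU => ?_
  show (((mlim 𝒰 (S : Set (T × K))).toNNReal : ℝ≥0∞)) ≤ _
  refine le_trans (le_of_eq (ENNReal.coe_toNNReal (mlim_ne_top_of_compact 𝒰 hT S.2))) ?_
  exact mlim_mono 𝒰 hSU

/-- The marginal of the limit measure. -/
lemma mu0_marg (hT : MeasurableSet T) :
    (mu0 𝒰 hT).map Prod.fst = Measure.comap Subtype.val volume := by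
  apply Measure.ext
  intro A hA
  rw [Measure.map_apply measurable_fst hA, comap_vol_apply hT hA]
  have hAim : MeasurableSet (Subtype.val '' A) :=
    (MeasurableEmbedding.subtype_coe hT).measurableSet_image.2 hA
  apply le_antisymm
  · -- upper bound via outer regularity of volume
    apply ENNReal.le_of_forall_pos_le_add
    intro ε hε hlt
    obtain ⟨O, hAO, hO, hOlt⟩ := Set.exists_isOpen_lt_add (μ := volume) (Subtype.val '' A)
      hlt.ne (ENNReal.coe_ne_zero.mpr hε.ne')
    have hsub : A ⊆ Subtype.val ⁻¹' O := fun t ht => hAO ⟨t, ht, rfl⟩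
    have hO' : IsOpen (Subtype.val ⁻¹' O : Set T) := hO.preimage continuous_subtype_val
    calc mu0 𝒰 hT (Prod.fst ⁻¹' A)
        ≤ mu0 𝒰 hT (Prod.fst ⁻¹' (Subtype.val ⁻¹' O)) :=
          measure_mono (Set.preimage_mono hsub)
    _ ≤ mlim 𝒰 (Prod.fst ⁻¹' (Subtype.val ⁻¹' O)) :=
          mu0_open_le 𝒰 hT (hO'.preimage continuous_fst)
    _ = Measure.comap Subtype.val volume (Subtype.val ⁻¹' O) :=
          mlim_exact 𝒰 hT (hO'.measurableSet)
    _ = volume (Subtype.val '' (Subtype.val ⁻¹' O)) :=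
          comap_vol_apply hT (hO'.measurableSet)
    _ ≤ volume O := measure_mono (Set.image_preimage_subset _ _)
    _ ≤ volume (Subtype.val '' A) + ε := hOlt.le
  · -- lower bound via inner regularity of volume
    have hmono : Monotone (fun n : ℕ => Subtype.val '' A ∩ Metric.ball 0 n) := by
      intro a b hab
      apply Set.inter_subset_inter_right
      exact Metric.ball_subset_ball (by exact_mod_cast hab)
    have hcover : Subtype.val '' A = ⋃ n : ℕ, (Subtype.val '' A ∩ Metric.ball 0 n) := by
      rw [← Set.inter_iUnion]
      refine (Set.inter_eq_left.mpr ?_).symm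
      intro x _
      rw [Set.mem_iUnion]
      obtain ⟨n, hn⟩ := exists_nat_gt ‖x‖
      exact ⟨n, by simpa [Metric.mem_ball, dist_zero_right] using hn⟩
    rw [hcover, Directed.measure_iUnion (hmono.directed_le)]
    refine iSup_le fun n => ?_
    have hfin : volume (Subtype.val '' A ∩ Metric.ball 0 n) ≠ ⊤ :=
      ne_top_of_le_ne_top measure_ball_lt_top.ne (measure_mono Set.inter_subset_right)
    have hmeasn : MeasurableSet (Subtype.val '' A ∩ Metric.ball 0 n) :=
      hAim.inter measurableSet_ball
    apply ENNReal.le_of_forall_pos_le_add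
    intro ε hε _
    obtain ⟨C, hCsub, hCcomp, hClt⟩ := hmeasn.exists_isCompact_lt_add hfin
      (ε := ε) (ENNReal.coe_ne_zero.mpr hε.ne')
    -- pull C back to T
    have hCA : C ⊆ Subtype.val '' A := hCsub.trans Set.inter_subset_left
    have hCrange : C ⊆ Set.range (Subtype.val : T → EuclideanSpace ℝ (Fin d)) := by
      intro x hx
      obtain ⟨t, _, rfl⟩ := hCA hx
      exact ⟨t, rfl⟩
    have hCim : Subtype.val '' ((Subtype.val ⁻¹' C) : Set T) = C := by
      rw [Set.image_preimage_eq_inter_range, Set.inter_eq_left]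
      exact hCrange
    have hCcomp' : IsCompact (Subtype.val ⁻¹' C : Set T) := by
      rw [(IsEmbedding.subtypeVal).isCompact_iff]
      rw [hCim]
      exact hCcomp
    have hCsubA : (Subtype.val ⁻¹' C : Set T) ⊆ A := by
      intro t ht
      obtain ⟨t', ht', he⟩ := hCA ht
      rwa [Subtype.val_injective he] at ht'
    have hprodeq : (Prod.fst ⁻¹' (Subtype.val ⁻¹' C) : Set (T × K))
        = (Subtype.val ⁻¹' C) ×ˢ (Set.univ : Set K) := by
      ext p
      simp [Set.mem_prod]
    have hprodcomp : IsCompact (Prod.fst ⁻¹' (Subtype.val ⁻¹' C) : Set (T × K)) := by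
      rw [hprodeq]
      exact hCcomp'.prod isCompact_univ
    calc volume (Subtype.val '' A ∩ Metric.ball 0 n) ≤ volume C + ε := hClt.le
    _ = Measure.comap Subtype.val volume (Subtype.val ⁻¹' C) + ε := by
        rw [comap_vol_apply hT (hCcomp'.isClosed.measurableSet), hCim]
    _ = mlim 𝒰 (Prod.fst ⁻¹' (Subtype.val ⁻¹' C)) + ε := by
        rw [mlim_exact 𝒰 hT (hCcomp'.isClosed.measurableSet)]
    _ ≤ mu0 𝒰 hT (Prod.fst ⁻¹' (Subtype.val ⁻¹' C)) + ε := by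
        exact add_le_add_left (mu0_compacts_le 𝒰 hT hprodcomp) ε
    _ ≤ mu0 𝒰 hT (Prod.fst ⁻¹' A) + ε := by
        exact add_le_add_left (measure_mono (Set.preimage_mono hCsubA)) ε

/-! #### Riemann sum approximation -/

lemma step_le {n : ℕ} {Δ a : ℝ} (hΔ : 0 < Δ) (ha0 : 0 ≤ a) :
    (((Finset.range n).filter (fun j : ℕ => ((j : ℝ) + 1) * Δ < a)).card : ℝ) * Δ ≤ a := by
  set F := (Finset.range n).filter (fun j : ℕ => ((j : ℝ) + 1) * Δ < a) with hF
  rcases F.eq_empty_or_nonempty with h | h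
  · rw [h]
    simpa using ha0
  · have hj₀ := F.max'_mem h
    have hlt : ((F.max' h : ℝ) + 1) * Δ < a := (Finset.mem_filter.mp hj₀).2
    have hcard : F.card ≤ F.max' h + 1 := by
      have hsub : F ⊆ Finset.range (F.max' h + 1) :=
        fun j hj => Finset.mem_range.mpr (Nat.lt_succ_of_le (F.le_max' j hj))
      simpa using Finset.card_le_card hsub
    have hcast : (F.card : ℝ) ≤ (F.max' h : ℝ) + 1 := by exact_mod_cast hcard
    calc (F.card : ℝ) * Δ ≤ ((F.max' h : ℝ) + 1) * Δ :=
        mul_le_mul_of_nonneg_right hcast hΔ.le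
    _ ≤ a := hlt.le

lemma le_step_add {n : ℕ} {Δ a M : ℝ} (hΔ : 0 < Δ) (ha0 : 0 < a) (haM : a ≤ M)
    (hM : M = n * Δ) :
    a ≤ (((Finset.range n).filter (fun j : ℕ => ((j : ℝ) + 1) * Δ < a)).card : ℝ) * Δ + Δ := by
  set F := (Finset.range n).filter (fun j : ℕ => ((j : ℝ) + 1) * Δ < a) with hF
  set c := ⌈a / Δ⌉₊ with hc
  have hc1 : 1 ≤ c := Nat.ceil_pos.mpr (div_pos ha0 hΔ)
  have hcle : (c : ℝ) < a / Δ + 1 := Nat.ceil_lt_add_one (div_nonneg ha0.le hΔ.le)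
  have hale : a ≤ c * Δ := by
    have h1 := Nat.le_ceil (a / Δ)
    calc a = (a / Δ) * Δ := (div_mul_cancel₀ a hΔ.ne').symm
    _ ≤ (c : ℝ) * Δ := mul_le_mul_of_nonneg_right h1 hΔ.le
  have hcn : c ≤ n := by
    apply Nat.ceil_le.mpr
    rw [div_le_iff₀ hΔ, ← hM]
    exact haM
  have hsub : Finset.range (c - 1) ⊆ F := by
    intro j hj
    rw [Finset.mem_range] at hj
    refine Finset.mem_filter.mpr ⟨Finset.mem_range.mpr (by omega), ?_⟩
    have hj1 : (j : ℝ) + 1 ≤ (c : ℝ) - 1 := by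
      have : (j + 1 : ℕ) ≤ c - 1 := by omega
      have hcast : ((j + 1 : ℕ) : ℝ) ≤ ((c - 1 : ℕ) : ℝ) := by exact_mod_cast this
      rwa [Nat.cast_add, Nat.cast_one, Nat.cast_sub hc1, Nat.cast_one] at hcast
    have hlt : (c : ℝ) - 1 < a / Δ := by linarith
    calc ((j : ℝ) + 1) * Δ ≤ ((c : ℝ) - 1) * Δ := mul_le_mul_of_nonneg_right hj1 hΔ.le
    _ < (a / Δ) * Δ := by
        apply mul_lt_mul_of_pos_right hlt hΔ
    _ = a := div_mul_cancel₀ a hΔ.ne'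
  have hcard : ((c : ℝ) - 1) ≤ (F.card : ℝ) := by
    have h1 := Finset.card_le_card hsub
    rw [Finset.card_range] at h1
    have : ((c - 1 : ℕ) : ℝ) ≤ (F.card : ℝ) := by exact_mod_cast h1
    rwa [Nat.cast_sub hc1, Nat.cast_one] at this
  calc a ≤ (c : ℝ) * Δ := hale
  _ = ((c : ℝ) - 1) * Δ + Δ := by ring
  _ ≤ (F.card : ℝ) * Δ + Δ := by
      have := mul_le_mul_of_nonneg_right hcard hΔ.le
      linarith

lemma riemann_approx (ν : Measure (T × K)) (u : T × K → ℝ) (hu : Continuous u)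
    (hu0 : ∀ x, 0 ≤ u x) {M : ℝ} (hM0 : 0 < M) (huM : ∀ x, u x ≤ M)
    (hfin : ν {x | 0 < u x} ≠ ⊤) (hint : Integrable u ν) {n : ℕ} (hn : 0 < n) :
    |(∫ x, u x ∂ν) - ∑ j ∈ Finset.range n,
        (M / n) * (ν {x | ((j : ℝ) + 1) * (M / n) < u x}).toReal|
      ≤ (M / n) * (ν {x | 0 < u x}).toReal := by
  set Δ : ℝ := M / n with hΔdef
  have hΔ : 0 < Δ := div_pos hM0 (by exact_mod_cast hn)
  set O : ℕ → Set (T × K) := fun j => {x | ((j : ℝ) + 1) * Δ < u x} with hOdef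
  have hOmeas : ∀ j, MeasurableSet (O j) :=
    fun j => measurableSet_lt measurable_const hu.measurable
  have hOsub : ∀ j, O j ⊆ {x | 0 < u x} := by
    intro j x hx
    have h1 : (0:ℝ) ≤ ((j : ℝ) + 1) * Δ := by positivity
    exact lt_of_le_of_lt h1 hx
  have hOfin : ∀ j, ν (O j) < ⊤ :=
    fun j => lt_of_le_of_lt (measure_mono (hOsub j)) (lt_top_iff_ne_top.mpr hfin)
  have hPmeas : MeasurableSet {x : T × K | 0 < u x} :=
    measurableSet_lt measurable_const hu.measurable
  -- the step function
  set s : T × K → ℝ := fun x => ∑ j ∈ Finset.range n, (O j).indicator (fun _ => Δ) x with hsdef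
  have hs_card : ∀ x, s x = (((Finset.range n).filter
      (fun j : ℕ => ((j : ℝ) + 1) * Δ < u x)).card : ℝ) * Δ := by
    intro x
    rw [hsdef]
    simp only [Set.indicator_apply]
    have : ∀ j ∈ Finset.range n, (if x ∈ O j then Δ else 0)
        = if ((j : ℝ) + 1) * Δ < u x then Δ else 0 := by
      intro j _
      rfl
    rw [Finset.sum_congr rfl this, ← Finset.sum_filter]
    rw [Finset.sum_const, nsmul_eq_mul]
  have hint_ind : ∀ j ∈ Finset.range n,
      Integrable ((O j).indicator (fun _ => Δ)) ν := by
    intro j _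
    exact (integrableOn_const (hOfin j).ne).integrable_indicator (hOmeas j)
  have hints : Integrable s ν := integrable_finset_sum _ hint_ind
  have hint_p : Integrable ({x : T × K | 0 < u x}.indicator (fun _ => Δ)) ν :=
    (integrableOn_const hfin).integrable_indicator hPmeas
  have hEs : (∫ x, s x ∂ν) = ∑ j ∈ Finset.range n, Δ * (ν (O j)).toReal := by
    rw [hsdef, integral_finset_sum _ hint_ind]
    refine Finset.sum_congr rfl fun j _ => ?_
    rw [integral_indicator_const _ (hOmeas j)]
    simp [mul_comm, measureReal_def]
  have hEp : (∫ x, ({x : T × K | 0 < u x}.indicator (fun _ => Δ)) x ∂ν)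
      = Δ * (ν {x : T × K | 0 < u x}).toReal := by
    rw [integral_indicator_const _ hPmeas]
    simp [mul_comm, measureReal_def]
  have hlow : (∫ x, s x ∂ν) ≤ ∫ x, u x ∂ν := by
    apply integral_mono hints hint
    intro x
    rw [hs_card x]
    exact step_le hΔ (hu0 x)
  have hup : (∫ x, u x ∂ν) ≤ (∫ x, s x ∂ν) + Δ * (ν {x : T × K | 0 < u x}).toReal := by
    rw [← hEp, ← integral_add hints hint_p]
    apply integral_mono hint (hints.add hint_p)
    intro x
    simp only [Pi.add_apply]
    rcases le_or_gt (u x) 0 with h | h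
    · have hux : u x = 0 := le_antisymm h (hu0 x)
      have h1 : (0:ℝ) ≤ s x := by
        rw [hs_card x]
        positivity
      have h2 : (0:ℝ) ≤ {x : T × K | 0 < u x}.indicator (fun _ => Δ) x :=
        Set.indicator_nonneg (fun _ _ => hΔ.le) x
      rw [hux]
      linarith
    · have hxmem : x ∈ {x : T × K | 0 < u x} := h
      have hind := Set.indicator_of_mem hxmem (fun _ => Δ)
      rw [hind, hs_card x]
      have hMn : M = (n : ℝ) * Δ := by
        rw [hΔdef, mul_div_cancel₀]
        exact_mod_cast hn.ne'
      exact le_step_add hΔ h (huM x) hMn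
  rw [abs_le]
  constructor
  · have h1 : 0 ≤ Δ * (ν {x : T × K | 0 < u x}).toReal := by positivity
    have h2 : ∑ j ∈ Finset.range n, Δ * (ν (O j)).toReal ≤ ∫ x, u x ∂ν := by
      rw [← hEs]; exact hlow
    simp only [hOdef] at h2 ⊢
    linarith
  · have h2 : (∫ x, u x ∂ν) ≤ (∑ j ∈ Finset.range n, Δ * (ν (O j)).toReal)
        + Δ * (ν {x : T × K | 0 < u x}).toReal := by
      rw [← hEs]; exact hup
    simp only [hOdef] at h2 ⊢
    linarith

/-- The limit point in `Mlam`. -/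
def mlimPoint (hT : MeasurableSet T) : Mlam d T K := ⟨mu0 𝒰 hT, mu0_marg 𝒰 hT⟩

lemma integrable_cc (hT : MeasurableSet T) {u : T × K → ℝ} (hu : Continuous u)
    (huc : HasCompactSupport u) (m' : Mlam d T K) :
    Integrable u (m'.1 : Measure (T × K)) := by
  obtain ⟨Cu, hCu⟩ := huc.exists_bound_of_continuous hu
  have hSbc : IsCompact (Prod.fst '' tsupport u : Set T) := huc.image continuous_fst
  apply integrable_of_bounded_of_vanish _ _ hu.aestronglyMeasurable
    (hSbc.isClosed.measurableSet.preimage measurable_fst)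
    (marg_compact_lt_top hT m' hSbc) (C := Cu)
    (fun x => by simpa [Real.norm_eq_abs] using hCu x)
  intro x hx
  by_contra hne
  exact hx ⟨x, subset_tsupport _ hne, rfl⟩

lemma tendsto_integral_nonneg (hT : MeasurableSet T) (u : T × K → ℝ) (hu : Continuous u)
    (huc : HasCompactSupport u) (hu0 : ∀ x, 0 ≤ u x) :
    Tendsto (fun m : Mlam d T K => ∫ x, u x ∂(m.1 : Measure (T × K))) 𝒰
      (𝓝 (∫ x, u x ∂(((mlimPoint 𝒰 hT).1 : Measure (T × K))))) := by
  set m₀ := mlimPoint 𝒰 hT with hm₀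
  set Sb : Set T := Prod.fst '' tsupport u with hSb
  have hSbc : IsCompact Sb := huc.image continuous_fst
  have hSbm : MeasurableSet Sb := hSbc.isClosed.measurableSet
  have hvolfin : volume (Subtype.val '' Sb) ≠ ⊤ :=
    (hSbc.image continuous_subtype_val).measure_lt_top.ne
  set Breal : ℝ := (volume (Subtype.val '' Sb)).toReal with hBreal
  have hBreal0 : 0 ≤ Breal := ENNReal.toReal_nonneg
  obtain ⟨Cu, hCu⟩ := huc.exists_bound_of_continuous hu
  set M : ℝ := max Cu 0 + 1 with hMdef
  have hM0 : 0 < M := by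
    have : (0:ℝ) ≤ max Cu 0 := le_max_right _ _
    linarith
  have huM : ∀ x, u x ≤ M := by
    intro x
    have h1 : u x ≤ Cu := le_trans (le_abs_self _) (by simpa [Real.norm_eq_abs] using hCu x)
    have : Cu ≤ max Cu 0 := le_max_left _ _
    linarith
  have hsub0 : {x : T × K | 0 < u x} ⊆ Prod.fst ⁻¹' Sb := by
    intro x hx
    exact ⟨x, subset_tsupport _ (ne_of_gt hx), rfl⟩
  have hν : ∀ m' : Mlam d T K,
      (m'.1 : Measure (T × K)) {x | 0 < u x} ≤ volume (Subtype.val '' Sb) := by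
    intro m'
    calc (m'.1 : Measure (T × K)) {x | 0 < u x}
        ≤ (m'.1 : Measure (T × K)) (Prod.fst ⁻¹' Sb) := measure_mono hsub0
    _ = _ := by rw [marg_apply m' hSbm, comap_vol_apply hT hSbm]
  have hνfin : ∀ m' : Mlam d T K, (m'.1 : Measure (T × K)) {x | 0 < u x} ≠ ⊤ :=
    fun m' => ne_top_of_le_ne_top hvolfin (hν m')
  have hνreal : ∀ m' : Mlam d T K, ((m'.1 : Measure (T × K)) {x | 0 < u x}).toReal ≤ Breal :=
    fun m' => ENNReal.toReal_mono hvolfin (hν m')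
  have hint : ∀ m' : Mlam d T K, Integrable u (m'.1 : Measure (T × K)) :=
    fun m' => integrable_cc hT hu huc m'
  rw [Metric.tendsto_nhds]
  intro ε hε
  obtain ⟨n₀, hn₀⟩ := exists_nat_gt (4 * M * (Breal + 1) / ε)
  set n : ℕ := n₀ + 1 with hndef
  have hn : 0 < n := Nat.succ_pos _
  have hnR : 4 * M * (Breal + 1) / ε < (n : ℝ) := by
    have : (n₀ : ℝ) ≤ (n : ℝ) := by exact_mod_cast Nat.le_succ _
    linarith
  set Δ : ℝ := M / n with hΔdef
  have hΔ0 : 0 < Δ := div_pos hM0 (by exact_mod_cast hn)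
  have hΔB : Δ * Breal < ε / 4 := by
    have hnpos : (0:ℝ) < (n:ℝ) := by exact_mod_cast hn
    rw [hΔdef, div_mul_eq_mul_div, div_lt_iff₀ hnpos]
    have h1 : 4 * M * (Breal + 1) < ε * n := by
      rw [div_lt_iff₀ hε] at hnR
      linarith
    nlinarith [hM0, hBreal0, hε]
  set O : ℕ → Set (T × K) := fun j => {x | ((j : ℝ) + 1) * Δ < u x} with hOdef
  have hOopen : ∀ j, IsOpen (O j) := fun j => isOpen_lt continuous_const hu
  have hOsub : ∀ j, O j ⊆ {x | 0 < u x} := by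
    intro j x hx
    have h1 : (0:ℝ) ≤ ((j : ℝ) + 1) * Δ := by positivity
    exact lt_of_le_of_lt h1 hx
  have hOlim_fin : ∀ j, mlim 𝒰 (O j) ≠ ⊤ :=
    fun j => mlim_ne_top 𝒰 hT hSbc ((hOsub j).trans hsub0)
  have hOlim_le : ∀ j, mlim 𝒰 (O j) ≤ volume (Subtype.val '' Sb) :=
    fun j => mlim_bound 𝒰 hT hSbc ((hOsub j).trans hsub0)
  set E : Mlam d T K → ℝ :=
    fun m => ∑ j ∈ Finset.range n, Δ * ((m.1 : Measure (T × K)) (O j)).toReal with hEdef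
  set Elim : ℝ := ∑ j ∈ Finset.range n, Δ * (mlim 𝒰 (O j)).toReal with hElimdef
  have hEt : Tendsto E 𝒰 (𝓝 Elim) := by
    apply tendsto_finset_sum
    intro j _
    exact Tendsto.const_mul Δ
      ((ENNReal.tendsto_toReal (hOlim_fin j)).comp (tendsto_mlim 𝒰 (O j)))
  have h1 : ∀ m' : Mlam d T K,
      |(∫ x, u x ∂(m'.1 : Measure (T × K))) - E m'| ≤ Δ * Breal := by
    intro m'
    have h := riemann_approx (m'.1 : Measure (T × K)) u hu hu0 hM0 huM (hνfin m') (hint m') hn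
    refine h.trans ?_
    exact mul_le_mul_of_nonneg_left (hνreal m') hΔ0.le
  -- the telescoping comparison
  set g : ℕ → ℝ := fun j => (mlim 𝒰 (O j)).toReal with hgdef
  set r : ℕ → ℝ := fun j => ((mu0 𝒰 hT) (O j)).toReal with hrdef
  have hα : ∀ j, (mu0 𝒰 hT) (O j) ≤ mlim 𝒰 (O j) := fun j => mu0_open_le 𝒰 hT (hOopen j)
  have hβ : ∀ j : ℕ, mlim 𝒰 (O (j + 1)) ≤ (mu0 𝒰 hT) (O j) := by
    intro j
    set L : Set (T × K) := {x | ((j : ℝ) + 2) * Δ ≤ u x} with hLdef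
    have hLclosed : IsClosed L := isClosed_le continuous_const hu
    have hLsub : L ⊆ tsupport u := by
      intro x hx
      apply subset_tsupport
      have h2 : (0:ℝ) < ((j : ℝ) + 2) * Δ := by positivity
      exact ne_of_gt (lt_of_lt_of_le h2 hx)
    have hLc : IsCompact L := huc.of_isClosed_subset hLclosed hLsub
    have hO1L : O (j + 1) ⊆ L := by
      intro x hx
      have h2 : (((j + 1 : ℕ) : ℝ) + 1) * Δ < u x := hx
      have h3 : ((j : ℝ) + 2) * Δ ≤ (((j + 1 : ℕ) : ℝ) + 1) * Δ := by
        push_cast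
        linarith
      exact le_trans h3 h2.le
    have hLO : L ⊆ O j := by
      intro x hx
      have h2 : ((j : ℝ) + 2) * Δ ≤ u x := hx
      have h3 : ((j : ℝ) + 1) * Δ < ((j : ℝ) + 2) * Δ := by nlinarith [hΔ0]
      exact lt_of_lt_of_le h3 h2
    calc mlim 𝒰 (O (j + 1)) ≤ mlim 𝒰 L := mlim_mono 𝒰 hO1L
    _ ≤ (mu0 𝒰 hT) L := mu0_compacts_le 𝒰 hT hLc
    _ ≤ (mu0 𝒰 hT) (O j) := measure_mono hLO
  have hrfin : ∀ j, (mu0 𝒰 hT) (O j) ≠ ⊤ :=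
    fun j => ne_top_of_le_ne_top (hOlim_fin j) (hα j)
  have hαr : ∀ j, r j ≤ g j := fun j => ENNReal.toReal_mono (hOlim_fin j) (hα j)
  have hβr : ∀ j, g (j + 1) ≤ r j := fun j => ENNReal.toReal_mono (hrfin j) (hβ j)
  have hg0 : g 0 ≤ Breal := ENNReal.toReal_mono hvolfin (hOlim_le 0)
  set w : ℕ → ℝ := fun j => if j = 0 then Breal else r (j - 1) with hwdef
  have htel : ∑ j ∈ Finset.range n, (g j - r j) ≤ Breal := by
    have hterm : ∀ j ∈ Finset.range n, g j - r j ≤ w j - w (j + 1) := by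
      intro j _
      cases j with
      | zero =>
        have hw0 : w 0 = Breal := rfl
        have hw1 : w 1 = r 0 := rfl
        rw [hw0, hw1]
        have := hg0
        linarith
      | succ k =>
        have hwk : w (k + 1) = r k := rfl
        have hwk2 : w (k + 2) = r (k + 1) := rfl
        rw [hwk, hwk2]
        have := hβr k
        linarith
    calc ∑ j ∈ Finset.range n, (g j - r j) ≤ ∑ j ∈ Finset.range n, (w j - w (j + 1)) :=
      Finset.sum_le_sum hterm
    _ = w 0 - w n := Finset.sum_range_sub' w n
    _ ≤ Breal := by
        have hw0 : w 0 = Breal := rfl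
        have hwn : 0 ≤ w n := by
          rw [hwdef]
          by_cases h : n = 0
          · simp [h, hBreal0]
          · simp only [h, if_false]
            exact ENNReal.toReal_nonneg
        rw [hw0]
        linarith
  have h3 : |Elim - E m₀| ≤ Δ * Breal := by
    have hEm₀ : E m₀ = ∑ j ∈ Finset.range n, Δ * r j := rfl
    have hElim' : Elim = ∑ j ∈ Finset.range n, Δ * g j := rfl
    rw [hEm₀, hElim', ← Finset.sum_sub_distrib]
    have hsum : ∑ j ∈ Finset.range n, (Δ * g j - Δ * r j)
        = Δ * ∑ j ∈ Finset.range n, (g j - r j) := by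
      rw [Finset.mul_sum]
      refine Finset.sum_congr rfl fun j _ => by ring
    rw [hsum, abs_of_nonneg]
    · apply mul_le_mul_of_nonneg_left htel hΔ0.le
    · apply mul_nonneg hΔ0.le
      apply Finset.sum_nonneg
      intro j _
      have := hαr j
      linarith
  have hev := Metric.tendsto_nhds.mp hEt (ε / 4) (by linarith)
  filter_upwards [hev] with m hm
  rw [Real.dist_eq]
  have hd1 := h1 m
  have hd4 := h1 m₀
  have hd2 : |E m - Elim| < ε / 4 := by rwa [Real.dist_eq] at hm
  have hfin : |(∫ x, u x ∂(m.1 : Measure (T × K)))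
      - (∫ x, u x ∂(m₀.1 : Measure (T × K)))| < ε := by
    have hchain : (∫ x, u x ∂(m.1 : Measure (T × K)))
        - (∫ x, u x ∂(m₀.1 : Measure (T × K)))
        = ((∫ x, u x ∂(m.1 : Measure (T × K))) - E m) + (E m - Elim)
          + (Elim - E m₀) + (E m₀ - (∫ x, u x ∂(m₀.1 : Measure (T × K)))) := by ring
    rw [hchain]
    have habs : |((∫ x, u x ∂(m.1 : Measure (T × K))) - E m) + (E m - Elim)
          + (Elim - E m₀) + (E m₀ - (∫ x, u x ∂(m₀.1 : Measure (T × K))))|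
        ≤ |(∫ x, u x ∂(m.1 : Measure (T × K))) - E m| + |E m - Elim|
          + |Elim - E m₀| + |E m₀ - (∫ x, u x ∂(m₀.1 : Measure (T × K)))| := by
      calc _ ≤ |((∫ x, u x ∂(m.1 : Measure (T × K))) - E m) + (E m - Elim)
            + (Elim - E m₀)| + |E m₀ - (∫ x, u x ∂(m₀.1 : Measure (T × K)))| := abs_add_le _ _
      _ ≤ |((∫ x, u x ∂(m.1 : Measure (T × K))) - E m) + (E m - Elim)|
            + |Elim - E m₀| + |E m₀ - (∫ x, u x ∂(m₀.1 : Measure (T × K)))| := by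
          have := abs_add_le (((∫ x, u x ∂(m.1 : Measure (T × K))) - E m) + (E m - Elim))
            (Elim - E m₀)
          linarith
      _ ≤ _ := by
          have := abs_add_le ((∫ x, u x ∂(m.1 : Measure (T × K))) - E m) (E m - Elim)
          linarith
    have h4' : |E m₀ - (∫ x, u x ∂(m₀.1 : Measure (T × K)))| ≤ Δ * Breal := by
      rw [abs_sub_comm]
      exact hd4
    calc |((∫ x, u x ∂(m.1 : Measure (T × K))) - E m) + (E m - Elim)
          + (Elim - E m₀) + (E m₀ - (∫ x, u x ∂(m₀.1 : Measure (T × K))))| ≤ _ := habs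
    _ < ε / 4 + ε / 4 + ε / 4 + ε / 4 := by
        have := hΔB
        apply add_lt_add_of_lt_of_le
        apply add_lt_add_of_lt_of_le
        apply add_lt_add_of_le_of_lt
        · linarith [hd1]
        · exact hd2
        · linarith [h3]
        · linarith [h4']
    _ = ε := by ring
  exact hfin

/-- Convergence of integrals of compactly supported continuous functions. -/
lemma tendsto_Lam (hT : MeasurableSet T) (f : CompactlySupportedContinuousMap (T × K) ℝ) :
    Tendsto (Lam (d := d) f) 𝒰 (𝓝 (Lam f (mlimPoint 𝒰 hT))) := by
  set up : T × K → ℝ := fun x => max (f x) 0 with hupdef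
  set un : T × K → ℝ := fun x => max (-(f x)) 0 with hundef
  have hupc : Continuous up := f.continuous.max continuous_const
  have hunc : Continuous un := f.continuous.neg.max continuous_const
  have hupcs : HasCompactSupport up := by
    apply HasCompactSupport.intro f.hasCompactSupport
    intro x hx
    have hfx : f x = 0 := image_eq_zero_of_notMem_tsupport hx
    rw [hupdef]
    simp [hfx]
  have huncs : HasCompactSupport un := by
    apply HasCompactSupport.intro f.hasCompactSupport
    intro x hx
    have hfx : f x = 0 := image_eq_zero_of_notMem_tsupport hx
    rw [hundef]
    simp [hfx]
  have hup0 : ∀ x, 0 ≤ up x := fun x => le_max_right _ _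
  have hun0 : ∀ x, 0 ≤ un x := fun x => le_max_right _ _
  have hdecomp : ∀ m' : Mlam d T K, Lam f m'
      = (∫ x, up x ∂(m'.1 : Measure (T × K))) - ∫ x, un x ∂(m'.1 : Measure (T × K)) := by
    intro m'
    rw [Lam, ← integral_sub (integrable_cc hT hupc hupcs m') (integrable_cc hT hunc huncs m')]
    congr 1
    funext x
    rw [hupdef, hundef]
    simp only []
    rcases le_or_gt (f x) 0 with h | h
    · rw [max_eq_right (by linarith), max_eq_left (by linarith)]
      ring
    · rw [max_eq_left h.le, max_eq_right (by linarith)]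
      ring
  have h1 := tendsto_integral_nonneg 𝒰 hT up hupc hupcs hup0
  have h2 := tendsto_integral_nonneg 𝒰 hT un hunc huncs hun0
  have h3 := h1.sub h2
  have heq : (fun m : Mlam d T K => (∫ x, up x ∂(m.1 : Measure (T × K)))
      - ∫ x, un x ∂(m.1 : Measure (T × K))) = Lam (d := d) f := by
    funext m'
    exact (hdecomp m').symm
  rw [heq] at h3
  rwa [← hdecomp] at h3

end Compactness

/-- The set of uniformly approximable (by the span of `testFuns`) bounded functions. -/
def Dset (d : ℕ) (T : Set (EuclideanSpace ℝ (Fin d))) (K : Type*) [MetricSpace K]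
    [CompactSpace K] [MeasurableSpace K] [BorelSpace K] : Set (Mlam d T K → ℝ) :=
  {h | (∃ C : ℝ, ∀ m, |h m| ≤ C) ∧
    ∀ δ : ℝ, 0 < δ → ∃ ψ ∈ Submodule.span ℝ (testFuns d T K), ∀ m, |h m - ψ m| ≤ δ}

lemma const_mem_span (c : ℝ) :
    (fun _ : Mlam d T K => c) ∈ Submodule.span ℝ (testFuns d T K) :=
  Submodule.subset_span (Or.inl ⟨c, rfl⟩)

lemma const_mem_D (c : ℝ) : (fun _ : Mlam d T K => c) ∈ Dset d T K :=
  ⟨⟨|c|, fun _ => le_rfl⟩, fun δ hδ => ⟨_, const_mem_span c, fun m => by simp [le_of_lt hδ]⟩⟩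

lemma add_mem_D {h₁ h₂ : Mlam d T K → ℝ} (H₁ : h₁ ∈ Dset d T K) (H₂ : h₂ ∈ Dset d T K) :
    (fun m => h₁ m + h₂ m) ∈ Dset d T K := by
  obtain ⟨⟨C₁, hC₁⟩, ha₁⟩ := H₁
  obtain ⟨⟨C₂, hC₂⟩, ha₂⟩ := H₂
  refine ⟨⟨C₁ + C₂, fun m => (abs_add_le _ _).trans (add_le_add (hC₁ m) (hC₂ m))⟩, fun δ hδ => ?_⟩
  obtain ⟨ψ₁, hψ₁, hb₁⟩ := ha₁ (δ/2) (by linarith)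
  obtain ⟨ψ₂, hψ₂, hb₂⟩ := ha₂ (δ/2) (by linarith)
  refine ⟨ψ₁ + ψ₂, Submodule.add_mem _ hψ₁ hψ₂, fun m => ?_⟩
  have : h₁ m + h₂ m - (ψ₁ + ψ₂) m = (h₁ m - ψ₁ m) + (h₂ m - ψ₂ m) := by
    simp [Pi.add_apply]; ring
  rw [this]
  calc |(h₁ m - ψ₁ m) + (h₂ m - ψ₂ m)| ≤ |h₁ m - ψ₁ m| + |h₂ m - ψ₂ m| := abs_add_le _ _
  _ ≤ δ/2 + δ/2 := add_le_add (hb₁ m) (hb₂ m)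
  _ = δ := by ring

section Ik

variable {k : ℕ} {F : (Fin k → T) → ℝ} {g : Fin k → K → ℝ}

/-- The integrand of `IkFun`. -/
def ikInt (F : (Fin k → T) → ℝ) (g : Fin k → K → ℝ) : (Fin k → T × K) → ℝ :=
  fun x => F (fun i => (x i).1) * ∏ i, g i (x i).2

lemma continuous_ikInt (hF : Continuous F) (hg : ∀ i, Continuous (g i)) :
    Continuous (ikInt (T := T) F g) := by
  apply Continuous.mul
  · exact hF.comp (continuous_pi fun i => continuous_fst.comp (continuous_apply i))
  · exact continuous_finset_prod _ fun i _ => (hg i).comp (continuous_snd.comp (continuous_apply i))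

/-- The "vanishing set" of the integrand. -/
def ikSet (F : (Fin k → T) → ℝ) : Set (Fin k → T × K) :=
  Set.univ.pi fun i => Prod.fst ⁻¹' ((fun v : Fin k → T => v i) '' tsupport F)

lemma ikSet_measurable (hFc : HasCompactSupport F) : MeasurableSet (ikSet (K := K) F) :=
  MeasurableSet.univ_pi fun i => measurable_fst
    ((hFc.image (continuous_apply i)).isClosed.measurableSet)

lemma ikInt_vanish (x : Fin k → T × K) (hx : x ∉ ikSet (K := K) F) : ikInt F g x = 0 := by
  have : F (fun i => (x i).1) = 0 := by
    apply image_eq_zero_of_notMem_tsupport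
    intro hmem
    exact hx fun i _ => ⟨fun j => (x j).1, hmem, rfl⟩
  simp [ikInt, this]

lemma ikSet_fin (hT : MeasurableSet T) (hFc : HasCompactSupport F) (m : Mlam d T K) :
    (Measure.pi fun _ : Fin k => (m.1 : Measure (T × K))) (ikSet (K := K) F) < ⊤ := by
  haveI := sigmaFinite hT m
  rw [ikSet, Measure.pi_pi]
  exact ENNReal.prod_lt_top fun i _ =>
    marg_compact_lt_top hT m (hFc.image (continuous_apply i))

/-- uniform bound on the measures of `ikSet`. -/
lemma ikSet_measure_eq (hT : MeasurableSet T) (hFc : HasCompactSupport F) (m : Mlam d T K) :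
    (Measure.pi fun _ : Fin k => (m.1 : Measure (T × K))) (ikSet (K := K) F)
      = ∏ i, volume (Subtype.val '' ((fun v : Fin k → T => v i) '' tsupport F)) := by
  haveI := sigmaFinite hT m
  rw [ikSet, Measure.pi_pi]
  refine Finset.prod_congr rfl fun i _ => ?_
  have hc : IsCompact ((fun v : Fin k → T => v i) '' tsupport F) :=
    hFc.image (continuous_apply i)
  rw [marg_apply m hc.isClosed.measurableSet, comap_vol_apply hT hc.isClosed.measurableSet]

lemma ikInt_bound (hF : Continuous F) (hFc : HasCompactSupport F)
    (hg : ∀ i, Continuous (g i)) :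
    ∃ C : ℝ, ∀ x, |ikInt (T := T) (K := K) F g x| ≤ C := by
  obtain ⟨CF, hCF⟩ := hFc.exists_bound_of_continuous hF
  have hgb : ∀ i : Fin k, ∃ C : ℝ, ∀ κ : K, |g i κ| ≤ C := by
    intro i
    obtain ⟨C, hC⟩ := isCompact_univ.exists_bound_of_continuousOn (hg i).continuousOn
    exact ⟨C, fun κ => hC κ (Set.mem_univ κ)⟩
  choose Cg hCg using hgb
  refine ⟨max CF 0 * ∏ i, max (Cg i) 0, fun x => ?_⟩
  rw [ikInt, abs_mul, Finset.abs_prod]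
  apply mul_le_mul
  · exact le_trans (hCF _) (le_max_left _ _)
  · exact Finset.prod_le_prod (fun i _ => abs_nonneg _)
      (fun i _ => le_trans (hCg i _) (le_max_left _ _))
  · exact Finset.prod_nonneg fun i _ => abs_nonneg _
  · exact le_max_right _ _

lemma integrable_ikInt (hT : MeasurableSet T) (hF : Continuous F)
    (hFc : HasCompactSupport F) (hg : ∀ i, Continuous (g i)) (m : Mlam d T K) :
    Integrable (ikInt F g) (Measure.pi fun _ : Fin k => (m.1 : Measure (T × K))) := by
  obtain ⟨C, hC⟩ := ikInt_bound (T := T) (K := K) hF hFc hg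
  exact integrable_of_bounded_of_vanish _ _ (continuous_ikInt hF hg).aestronglyMeasurable
    (ikSet_measurable hFc) (ikSet_fin hT hFc m) hC ikInt_vanish

lemma abs_IkFun_le (hT : MeasurableSet T) (hF : Continuous F)
    (hFc : HasCompactSupport F) (hg : ∀ i, Continuous (g i)) :
    ∃ C : ℝ, ∀ m : Mlam d T K, |IkFun d T K k F g m| ≤ C := by
  obtain ⟨C, hC⟩ := ikInt_bound (T := T) (K := K) hF hFc hg
  refine ⟨C * (∏ i, volume (Subtype.val ''
    ((fun v : Fin k → T => v i) '' tsupport F))).toReal, fun m => ?_⟩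
  have h := abs_integral_le_of_bounded_of_vanish
    (Measure.pi fun _ : Fin k => (m.1 : Measure (T × K))) (ikInt F g)
    (continuous_ikInt hF hg).aestronglyMeasurable (ikSet_measurable hFc)
    (ikSet_fin hT hFc m) hC ikInt_vanish
  rw [ikSet_measure_eq hT hFc m] at h
  exact h

end Ik

/-- Elements of the span are bounded. -/
lemma span_bounded (hT : MeasurableSet T) {ψ : Mlam d T K → ℝ}
    (hψ : ψ ∈ Submodule.span ℝ (testFuns d T K)) : ∃ C : ℝ, ∀ m, |ψ m| ≤ C := by
  induction hψ using Submodule.span_induction with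
  | mem x hx =>
    rcases hx with ⟨c, rfl⟩ | ⟨k, F, g, hF, hFc, hg, rfl⟩
    · exact ⟨|c|, fun _ => le_rfl⟩
    · exact abs_IkFun_le hT hF hFc hg
  | zero => exact ⟨0, fun m => by simp⟩
  | add x y hx hy hx' hy' =>
    obtain ⟨C₁, h₁⟩ := hx'
    obtain ⟨C₂, h₂⟩ := hy'
    exact ⟨C₁ + C₂, fun m => (abs_add_le _ _).trans (add_le_add (h₁ m) (h₂ m))⟩
  | smul c x hx hx' =>
    obtain ⟨C, h⟩ := hx'
    refine ⟨|c| * C, fun m => ?_⟩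
    rw [Pi.smul_apply, smul_eq_mul, abs_mul]
    exact mul_le_mul_of_nonneg_left (h m) (abs_nonneg c)

section Cmul

variable {k l : ℕ}

/-- Appended spatial test function. -/
def Fapp (F : (Fin k → T) → ℝ) (F' : (Fin l → T) → ℝ) : (Fin (k + l) → T) → ℝ :=
  fun v => F (fun i => v (Fin.castAdd l i)) * F' (fun j => v (Fin.natAdd k j))

lemma continuous_Fapp {F : (Fin k → T) → ℝ} {F' : (Fin l → T) → ℝ}
    (hF : Continuous F) (hF' : Continuous F') : Continuous (Fapp F F') := by
  apply Continuous.mul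
  · exact hF.comp (continuous_pi fun i => continuous_apply (Fin.castAdd l i))
  · exact hF'.comp (continuous_pi fun j => continuous_apply (Fin.natAdd k j))

/-- Gluing map. -/
def glueT : ((Fin k → T) × (Fin l → T)) → (Fin (k + l) → T) := fun p => Fin.append p.1 p.2

lemma continuous_glueT : Continuous (glueT (T := T) (k := k) (l := l)) := by
  refine continuous_pi fun i => ?_
  induction i using Fin.addCases with
  | left i => simp only [glueT, Fin.append_left]; exact (continuous_apply i).comp continuous_fst
  | right j => simp only [glueT, Fin.append_right]; exact (continuous_apply j).comp continuous_snd

lemma glue_split (v : Fin (k + l) → T) :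
    glueT (fun i => v (Fin.castAdd l i), fun j => v (Fin.natAdd k j)) = v := by
  funext i
  induction i using Fin.addCases with
  | left i => simp [glueT, Fin.append_left]
  | right j => simp [glueT, Fin.append_right]

lemma hcs_Fapp {F : (Fin k → T) → ℝ} {F' : (Fin l → T) → ℝ}
    (hFc : HasCompactSupport F) (hF'c : HasCompactSupport F') :
    HasCompactSupport (Fapp F F') := by
  apply HasCompactSupport.intro ((hFc.prod hF'c).image continuous_glueT)
  intro v hv
  have hsplit : (fun i => v (Fin.castAdd l i)) ∉ tsupport F ∨
      (fun j => v (Fin.natAdd k j)) ∉ tsupport F' := by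
    by_contra hc
    push_neg at hc
    exact hv ⟨_, Set.mk_mem_prod hc.1 hc.2, glue_split v⟩
  rcases hsplit with h | h
  · simp [Fapp, image_eq_zero_of_notMem_tsupport h]
  · simp [Fapp, image_eq_zero_of_notMem_tsupport h]

lemma continuous_gapp {g : Fin k → K → ℝ} {g' : Fin l → K → ℝ}
    (hg : ∀ i, Continuous (g i)) (hg' : ∀ j, Continuous (g' j)) :
    ∀ i, Continuous (Fin.append g g' i) := by
  intro i
  induction i using Fin.addCases with
  | left i => rw [Fin.append_left]; exact hg i
  | right j => rw [Fin.append_right]; exact hg' j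

lemma IkFun_mul (hT : MeasurableSet T)
    {F : (Fin k → T) → ℝ} {F' : (Fin l → T) → ℝ} {g : Fin k → K → ℝ} {g' : Fin l → K → ℝ}
    (hF : Continuous F) (hFc : HasCompactSupport F) (hg : ∀ i, Continuous (g i))
    (hF' : Continuous F') (hF'c : HasCompactSupport F') (hg' : ∀ j, Continuous (g' j))
    (m : Mlam d T K) :
    IkFun d T K k F g m * IkFun d T K l F' g' m
      = IkFun d T K (k + l) (Fapp F F') (Fin.append g g') m := by
  haveI := sigmaFinite hT m
  set μ := (m.1 : Measure (T × K)) with hμ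
  set e₁ := MeasurableEquiv.piCongrLeft (fun _ : Fin (k + l) => T × K) finSumFinEquiv with he₁
  set e₂ := MeasurableEquiv.sumPiEquivProdPi (fun _ : Fin k ⊕ Fin l => T × K) with he₂
  have mp₁ : MeasurePreserving e₁ (Measure.pi fun _ : Fin k ⊕ Fin l => μ)
      (Measure.pi fun _ : Fin (k + l) => μ) :=
    measurePreserving_piCongrLeft (fun _ : Fin (k + l) => μ) finSumFinEquiv
  have mp₂ : MeasurePreserving e₂ (Measure.pi fun _ : Fin k ⊕ Fin l => μ)
      ((Measure.pi fun _ : Fin k => μ).prod (Measure.pi fun _ : Fin l => μ)) :=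
    measurePreserving_sumPiEquivProdPi (fun _ : Fin k ⊕ Fin l => μ)
  have h₁ : IkFun d T K (k + l) (Fapp F F') (Fin.append g g') m
      = ∫ y : Fin k ⊕ Fin l → T × K, ikInt (Fapp F F') (Fin.append g g') (e₁ y)
          ∂(Measure.pi fun _ : Fin k ⊕ Fin l => μ) :=
    (mp₁.integral_comp e₁.measurableEmbedding _).symm
  have h₂ : ∫ p : (Fin k → T × K) × (Fin l → T × K), ikInt F g p.1 * ikInt F' g' p.2
        ∂((Measure.pi fun _ : Fin k => μ).prod (Measure.pi fun _ : Fin l => μ))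
      = ∫ y : Fin k ⊕ Fin l → T × K,
          ikInt F g (fun i => y (Sum.inl i)) * ikInt F' g' (fun j => y (Sum.inr j))
          ∂(Measure.pi fun _ : Fin k ⊕ Fin l => μ) :=
    (mp₂.integral_comp e₂.measurableEmbedding
      (fun p => ikInt F g p.1 * ikInt F' g' p.2)).symm
  have hpt : ∀ y : Fin k ⊕ Fin l → T × K,
      ikInt (Fapp F F') (Fin.append g g') (e₁ y)
        = ikInt F g (fun i => y (Sum.inl i)) * ikInt F' g' (fun j => y (Sum.inr j)) := by
    intro y
    have hcast : ∀ i : Fin k, e₁ y (Fin.castAdd l i) = y (Sum.inl i) := by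
      intro i
      show (Equiv.piCongrLeft (fun _ => T × K) finSumFinEquiv) y (Fin.castAdd l i) = _
      rw [← finSumFinEquiv_apply_left (n := l) i, Equiv.piCongrLeft_apply_apply]
    have hnat : ∀ j : Fin l, e₁ y (Fin.natAdd k j) = y (Sum.inr j) := by
      intro j
      show (Equiv.piCongrLeft (fun _ => T × K) finSumFinEquiv) y (Fin.natAdd k j) = _
      rw [← finSumFinEquiv_apply_right (m := k) j, Equiv.piCongrLeft_apply_apply]
    simp only [ikInt, Fapp, Fin.prod_univ_add, hcast, hnat, Fin.append_left, Fin.append_right]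
    ring
  have hprod : (∫ x, ikInt F g x ∂(Measure.pi fun _ : Fin k => μ))
        * (∫ x, ikInt F' g' x ∂(Measure.pi fun _ : Fin l => μ))
      = ∫ p : (Fin k → T × K) × (Fin l → T × K), ikInt F g p.1 * ikInt F' g' p.2
        ∂((Measure.pi fun _ : Fin k => μ).prod (Measure.pi fun _ : Fin l => μ)) :=
    (integral_prod_mul _ _).symm
  calc IkFun d T K k F g m * IkFun d T K l F' g' m
      = (∫ x, ikInt F g x ∂(Measure.pi fun _ : Fin k => μ))
        * (∫ x, ikInt F' g' x ∂(Measure.pi fun _ : Fin l => μ)) := rfl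
  _ = ∫ p : (Fin k → T × K) × (Fin l → T × K), ikInt F g p.1 * ikInt F' g' p.2
        ∂((Measure.pi fun _ : Fin k => μ).prod (Measure.pi fun _ : Fin l => μ)) := hprod
  _ = ∫ y : Fin k ⊕ Fin l → T × K,
        ikInt F g (fun i => y (Sum.inl i)) * ikInt F' g' (fun j => y (Sum.inr j))
        ∂(Measure.pi fun _ : Fin k ⊕ Fin l => μ) := h₂
  _ = ∫ y : Fin k ⊕ Fin l → T × K, ikInt (Fapp F F') (Fin.append g g') (e₁ y)
        ∂(Measure.pi fun _ : Fin k ⊕ Fin l => μ) := by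
      congr 1
      funext y
      exact (hpt y).symm
  _ = IkFun d T K (k + l) (Fapp F F') (Fin.append g g') m := h₁.symm

end Cmul

/-- KEY (C): the span of `testFuns` is closed under multiplication. -/
lemma span_mul_mem (hT : MeasurableSet T) {ψ₁ ψ₂ : Mlam d T K → ℝ}
    (h₁ : ψ₁ ∈ Submodule.span ℝ (testFuns d T K)) (h₂ : ψ₂ ∈ Submodule.span ℝ (testFuns d T K)) :
    (fun m => ψ₁ m * ψ₂ m) ∈ Submodule.span ℝ (testFuns d T K) := by
  induction h₁ using Submodule.span_induction with
  | mem x hx =>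
    rcases hx with ⟨c, rfl⟩ | ⟨k, F, g, hF, hFc, hg, rfl⟩
    · have : (fun m => (fun _ : Mlam d T K => c) m * ψ₂ m) = c • ψ₂ := by
        funext m; simp
      rw [this]
      exact Submodule.smul_mem _ _ h₂
    · -- second induction
      induction h₂ using Submodule.span_induction with
      | mem y hy =>
        rcases hy with ⟨c, rfl⟩ | ⟨k', F', g', hF', hF'c, hg', rfl⟩
        · have : (fun m => IkFun d T K k F g m * (fun _ : Mlam d T K => c) m)
              = c • IkFun d T K k F g := by
            funext m; simp [mul_comm]
          rw [this]
          exact Submodule.smul_mem _ _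
            (Submodule.subset_span (Or.inr ⟨k, F, g, hF, hFc, hg, rfl⟩))
        · have : (fun m => IkFun d T K k F g m * IkFun d T K k' F' g' m)
              = IkFun d T K (k + k') (Fapp F F') (Fin.append g g') := by
            funext m
            exact IkFun_mul hT hF hFc hg hF' hF'c hg' m
          rw [this]
          exact Submodule.subset_span (Or.inr ⟨k + k', Fapp F F', Fin.append g g',
            continuous_Fapp hF hF', hcs_Fapp hFc hF'c, continuous_gapp hg hg', rfl⟩)
      | zero =>
        have : (fun m => IkFun d T K k F g m * (0 : Mlam d T K → ℝ) m)
            = (0 : Mlam d T K → ℝ) := by funext m; simp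
        rw [this]; exact Submodule.zero_mem _
      | add y z hy hz hy' hz' =>
        have : (fun m => IkFun d T K k F g m * (y + z) m)
            = (fun m => IkFun d T K k F g m * y m) + (fun m => IkFun d T K k F g m * z m) := by
          funext m; simp [Pi.add_apply]; ring
        rw [this]; exact Submodule.add_mem _ hy' hz'
      | smul c y hy hy' =>
        have : (fun m => IkFun d T K k F g m * (c • y) m)
            = c • (fun m => IkFun d T K k F g m * y m) := by
          funext m; simp [Pi.smul_apply, smul_eq_mul]; ring
        rw [this]; exact Submodule.smul_mem _ _ hy'
  | zero =>
    have : (fun m => (0 : Mlam d T K → ℝ) m * ψ₂ m) = (0 : Mlam d T K → ℝ) := by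
      funext m; simp
    rw [this]; exact Submodule.zero_mem _
  | add x y hx hy hx' hy' =>
    have : (fun m => (x + y) m * ψ₂ m)
        = (fun m => x m * ψ₂ m) + (fun m => y m * ψ₂ m) := by
      funext m; simp [Pi.add_apply]; ring
    rw [this]; exact Submodule.add_mem _ hx' hy'
  | smul c x hx hx' =>
    have : (fun m => (c • x) m * ψ₂ m) = c • (fun m => x m * ψ₂ m) := by
      funext m; simp [Pi.smul_apply, smul_eq_mul]; ring
    rw [this]; exact Submodule.smul_mem _ _ hx' 

lemma mul_mem_D (hT : MeasurableSet T) {h₁ h₂ : Mlam d T K → ℝ}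
    (H₁ : h₁ ∈ Dset d T K) (H₂ : h₂ ∈ Dset d T K) :
    (fun m => h₁ m * h₂ m) ∈ Dset d T K := by
  obtain ⟨⟨C₁, hC₁⟩, ha₁⟩ := H₁
  obtain ⟨⟨C₂, hC₂⟩, ha₂⟩ := H₂
  set B₁ := max C₁ 0 with hB₁
  set B₂ := max C₂ 0 with hB₂
  have hB₁0 : 0 ≤ B₁ := le_max_right _ _
  have hB₂0 : 0 ≤ B₂ := le_max_right _ _
  have hC₁' : ∀ m, |h₁ m| ≤ B₁ := fun m => (hC₁ m).trans (le_max_left _ _)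
  have hC₂' : ∀ m, |h₂ m| ≤ B₂ := fun m => (hC₂ m).trans (le_max_left _ _)
  constructor
  · exact ⟨B₁ * B₂, fun m => by
      rw [abs_mul]; exact mul_le_mul (hC₁' m) (hC₂' m) (abs_nonneg _) hB₁0⟩
  intro δ hδ
  -- choose approximation scales
  set η : ℝ := min 1 (δ / (B₁ + B₂ + 2)) with hη
  have hden : 0 < B₁ + B₂ + 2 := by linarith
  have hη0 : 0 < η := lt_min one_pos (div_pos hδ hden)
  obtain ⟨ψ₁, hψ₁, hb₁⟩ := ha₁ η hη0
  obtain ⟨ψ₂, hψ₂, hb₂⟩ := ha₂ η hη0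
  refine ⟨fun m => ψ₁ m * ψ₂ m, span_mul_mem hT hψ₁ hψ₂, fun m => ?_⟩
  have hψ₂b : |ψ₂ m| ≤ B₂ + η := by
    have h := hb₂ m
    have h2 := hC₂' m
    have h3 : |ψ₂ m| - |h₂ m| ≤ |h₂ m - ψ₂ m| := by
      calc |ψ₂ m| - |h₂ m| ≤ |ψ₂ m - h₂ m| := abs_sub_abs_le_abs_sub _ _
      _ = |h₂ m - ψ₂ m| := abs_sub_comm _ _
    linarith
  have key : h₁ m * h₂ m - ψ₁ m * ψ₂ m
      = h₁ m * (h₂ m - ψ₂ m) + (h₁ m - ψ₁ m) * ψ₂ m := by ring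
  calc |h₁ m * h₂ m - ψ₁ m * ψ₂ m|
      = |h₁ m * (h₂ m - ψ₂ m) + (h₁ m - ψ₁ m) * ψ₂ m| := by rw [key]
  _ ≤ |h₁ m * (h₂ m - ψ₂ m)| + |(h₁ m - ψ₁ m) * ψ₂ m| := abs_add_le _ _
  _ = |h₁ m| * |h₂ m - ψ₂ m| + |h₁ m - ψ₁ m| * |ψ₂ m| := by rw [abs_mul, abs_mul]
  _ ≤ B₁ * η + η * (B₂ + η) := by
      apply add_le_add
      · exact mul_le_mul (hC₁' m) (hb₂ m) (abs_nonneg _) hB₁0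
      · exact mul_le_mul (hb₁ m) hψ₂b (abs_nonneg _) (le_of_lt hη0)
  _ ≤ B₁ * η + η * (B₂ + 1) := by
      have hη1 : η ≤ 1 := min_le_left _ _
      nlinarith
  _ = η * (B₁ + B₂ + 1) := by ring
  _ ≤ (δ / (B₁ + B₂ + 2)) * (B₁ + B₂ + 1) := by
      apply mul_le_mul_of_nonneg_right (min_le_right _ _); linarith
  _ ≤ δ := by
      rw [div_mul_eq_mul_div, div_le_iff₀ hden]
      nlinarith

section SWprod

variable (Y : Type*) [MetricSpace Y] [CompactSpace Y]

/-- Product continuous functions on `Y × K`. -/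
def prodCM (F : C(Y, ℝ)) (g : C(K, ℝ)) : C(Y × K, ℝ) :=
  ⟨fun p => F p.1 * g p.2, (F.continuous.comp continuous_fst).mul
    (g.continuous.comp continuous_snd)⟩

variable (K) in
def prodSet : Set C(Y × K, ℝ) := {h | ∃ F : C(Y, ℝ), ∃ g : C(K, ℝ), h = prodCM Y F g}

lemma prodSpan_mul {q₁ q₂ : C(Y × K, ℝ)}
    (h₁ : q₁ ∈ Submodule.span ℝ (prodSet K Y)) (h₂ : q₂ ∈ Submodule.span ℝ (prodSet K Y)) :
    q₁ * q₂ ∈ Submodule.span ℝ (prodSet K Y) := by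
  induction h₁ using Submodule.span_induction with
  | mem x hx =>
    obtain ⟨F, g, rfl⟩ := hx
    induction h₂ using Submodule.span_induction with
    | mem y hy =>
      obtain ⟨F', g', rfl⟩ := hy
      have : prodCM Y F g * prodCM Y F' g' = prodCM Y (F * F') (g * g') := by
        ext p
        show (F p.1 * g p.2) * (F' p.1 * g' p.2) = (F p.1 * F' p.1) * (g p.2 * g' p.2)
        ring
      rw [this]
      exact Submodule.subset_span ⟨_, _, rfl⟩
    | zero => rw [mul_zero]; exact Submodule.zero_mem _
    | add y z _ _ hy' hz' => rw [mul_add]; exact Submodule.add_mem _ hy' hz'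
    | smul c y _ hy' => rw [mul_smul_comm]; exact Submodule.smul_mem _ _ hy'
  | zero => rw [zero_mul]; exact Submodule.zero_mem _
  | add x y _ _ hx' hy' => rw [add_mul]; exact Submodule.add_mem _ hx' hy'
  | smul c x _ hx' => rw [smul_mul_assoc]; exact Submodule.smul_mem _ _ hx'

lemma prodSpan_one : (1 : C(Y × K, ℝ)) ∈ Submodule.span ℝ (prodSet K Y) := by
  apply Submodule.subset_span
  refine ⟨1, 1, ?_⟩
  ext p
  show (1 : ℝ) = 1 * 1
  ring

/-- Stone–Weierstrass for products: density of the span of products. -/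
lemma prodSpan_dense (u : C(Y × K, ℝ)) {δ : ℝ} (hδ : 0 < δ) :
    ∃ q ∈ Submodule.span ℝ (prodSet K Y), ∀ p : Y × K, |u p - q p| ≤ δ := by
  set Asub : Subalgebra ℝ C(Y × K, ℝ) :=
    (Submodule.span ℝ (prodSet K Y)).toSubalgebra (prodSpan_one Y)
      (fun x y hx hy => prodSpan_mul Y hx hy) with hAsub
  have hsep : Asub.SeparatesPoints := by
    rintro p p' hpp
    by_cases h1 : p.1 = p'.1
    · have h2 : p.2 ≠ p'.2 := by
        intro h2; exact hpp (Prod.ext h1 h2)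
      refine ⟨_, ⟨prodCM Y 1 ⟨fun κ => dist κ p.2, continuous_id.dist continuous_const⟩,
        Submodule.subset_span ⟨_, _, rfl⟩, rfl⟩, ?_⟩
      show (1 : ℝ) * dist p.2 p.2 ≠ 1 * dist p'.2 p.2
      simp [dist_comm, h2]
    · refine ⟨_, ⟨prodCM Y ⟨fun y => dist y p.1, continuous_id.dist continuous_const⟩ 1,
        Submodule.subset_span ⟨_, _, rfl⟩, rfl⟩, ?_⟩
      show dist p.1 p.1 * 1 ≠ dist p'.1 p.1 * 1
      simp only [dist_self, zero_mul, mul_one]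
      intro hc
      exact h1 (dist_eq_zero.mp hc.symm).symm
  have hdense := ContinuousMap.subalgebra_topologicalClosure_eq_top_of_separatesPoints Asub hsep
  have hmem : u ∈ closure (Asub : Set C(Y × K, ℝ)) := by
    have : u ∈ Asub.topologicalClosure := by rw [hdense]; trivial
    exact this
  rw [Metric.mem_closure_iff] at hmem
  obtain ⟨q, hqA, hq⟩ := hmem δ hδ
  refine ⟨q, hqA, fun p => ?_⟩
  have := ContinuousMap.dist_apply_le_dist (f := u) (g := q) p
  rw [Real.dist_eq] at this
  exact this.trans (le_of_lt hq)

end SWprod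

/-- Evaluation of `IkFun` at `k = 1`. -/
lemma IkFun_one (hT : MeasurableSet T) {F₁ : T → ℝ} (hF₁ : Continuous F₁)
    (hc₁ : HasCompactSupport F₁) (g₁ : K → ℝ) (m : Mlam d T K) :
    IkFun d T K 1 (fun w => F₁ (w 0)) (fun _ => g₁) m
      = ∫ x : T × K, F₁ x.1 * g₁ x.2 ∂(m.1 : Measure (T × K)) := by
  haveI := sigmaFinite hT m
  have mp := measurePreserving_funUnique (m.1 : Measure (T × K)) (Fin 1)
  have h := mp.integral_comp (MeasurableEquiv.funUnique (Fin 1) (T × K)).measurableEmbedding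
    (fun x : T × K => F₁ x.1 * g₁ x.2)
  rw [IkFun, ← h]
  congr 1
  funext w
  rw [Fin.prod_univ_one]
  rfl

/-- `fun w => F₁ (w 0)` has compact support. -/
lemma hcs_lift {F₁ : T → ℝ} (hc₁ : HasCompactSupport F₁) :
    HasCompactSupport (fun w : Fin 1 → T => F₁ (w 0)) := by
  have := hc₁.comp_homeomorph (Homeomorph.funUnique (Fin 1) T)
  exact this

/-- KEY (B): `Lam f` is approximable. -/
lemma Lam_mem_D (hT : MeasurableSet T) (f : CompactlySupportedContinuousMap (T × K) ℝ) :
    Lam (d := d) f ∈ Dset d T K := by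
  refine ⟨abs_Lam_le hT f, fun δ hδ => ?_⟩
  -- basic objects
  set S₀ : Set T := Prod.fst '' tsupport ⇑f with hS₀def
  have hS₀ : IsCompact S₀ := f.hasCompactSupport'.image continuous_fst
  set V₀ : ℝ := (volume (Subtype.val '' S₀)).toReal with hV₀def
  have hV₀0 : 0 ≤ V₀ := ENNReal.toReal_nonneg
  have hVden : (0:ℝ) < V₀ + 1 := by linarith
  set c : ℝ := δ / (8 * (V₀ + 1)) with hcdef
  have hc0 : 0 < c := by
    apply div_pos hδ; linarith
  set δ₁ : ℝ := δ / (2 * (V₀ + 1)) with hδ₁def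
  have hδ₁0 : 0 < δ₁ := by
    apply div_pos hδ; linarith
  -- the sup-function F₀
  set F₀ : T → ℝ := fun t => ‖(ContinuousMap.curry f.toContinuousMap) t‖ with hF₀def
  have hF₀cont : Continuous F₀ :=
    ((ContinuousMap.curry f.toContinuousMap).continuous).norm
  have habs : ∀ x : T × K, |f x| ≤ F₀ x.1 := by
    intro x
    have h := ContinuousMap.norm_coe_le_norm ((ContinuousMap.curry f.toContinuousMap) x.1) x.2
    simpa [Real.norm_eq_abs] using h
  have hF₀pos : ∀ t, F₀ t ≠ 0 → t ∈ S₀ := by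
    intro t ht
    by_contra hmem
    apply ht
    have hzero : (ContinuousMap.curry f.toContinuousMap) t = 0 := by
      ext κ
      show f (t, κ) = 0
      by_contra hne
      exact hmem ⟨(t, κ), subset_tsupport _ hne, rfl⟩
    rw [hF₀def]
    simp only [hzero, norm_zero]
  -- the compact level set
  set Sc : Set T := {t | c ≤ F₀ t} with hScdef
  have hSc_closed : IsClosed Sc := isClosed_le continuous_const hF₀cont
  have hSc_sub : Sc ⊆ S₀ := fun t ht => hF₀pos t (by
    have : c ≤ F₀ t := ht
    intro h0; rw [h0] at this; linarith)
  have hSc : IsCompact Sc := hS₀.of_isClosed_subset hSc_closed hSc_sub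
  haveI : CompactSpace ↥Sc := isCompact_iff_compactSpace.mp hSc
  -- the cutoff θ
  set θ : T → ℝ := fun t => min 1 (max (F₀ t - c) 0 / c) with hθdef
  have hθcont : Continuous θ :=
    continuous_const.min (((hF₀cont.sub continuous_const).max continuous_const).div_const c)
  have hθ0 : ∀ t, 0 ≤ θ t := fun t =>
    le_min zero_le_one (div_nonneg (le_max_right _ _) hc0.le)
  have hθ1 : ∀ t, θ t ≤ 1 := fun t => min_le_left _ _
  have hθzero : ∀ t, t ∉ Sc → θ t = 0 := by
    intro t ht
    have hlt : F₀ t < c := not_le.mp ht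
    have hm : max (F₀ t - c) 0 = 0 := max_eq_right (by linarith)
    show min 1 (max (F₀ t - c) 0 / c) = 0
    rw [hm, zero_div]
    exact min_eq_right zero_le_one
  have hθone : ∀ t, 2 * c ≤ F₀ t → θ t = 1 := by
    intro t ht
    have : (1:ℝ) ≤ max (F₀ t - c) 0 / c := by
      rw [le_div_iff₀ hc0, one_mul]
      exact le_max_of_le_left (by linarith)
    simp only [hθdef]
    exact min_eq_left this
  -- Stone–Weierstrass on Sc × K
  set fres : C(↥Sc × K, ℝ) := ⟨fun p => f (p.1.1, p.2),
    f.continuous.comp ((continuous_subtype_val.comp continuous_fst).prodMk continuous_snd)⟩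
    with hfres
  obtain ⟨q, hq_mem, hq_close⟩ := prodSpan_dense (Y := ↥Sc) fres hδ₁0
  -- the induction over the span of products
  have hP : ∀ q' ∈ Submodule.span ℝ (prodSet K ↥Sc),
      ∃ v : T × K → ℝ, Continuous v ∧ (∀ x : T × K, x.1 ∉ Sc → v x = 0) ∧
        (∃ C, ∀ x, |v x| ≤ C) ∧
        (∀ (x : T × K) (hx : x.1 ∈ Sc), v x = θ x.1 * q' (⟨x.1, hx⟩, x.2)) ∧
        ∃ ψ ∈ Submodule.span ℝ (testFuns d T K),
          ∀ m : Mlam d T K, ψ m = ∫ x, v x ∂(m.1 : Measure (T × K)) := by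
    intro q' hq'
    induction hq' using Submodule.span_induction with
    | mem w hw =>
      obtain ⟨F, g, rfl⟩ := hw
      obtain ⟨Ft, hFt⟩ := ContinuousMap.exists_restrict_eq (Y := ℝ) hSc_closed F
      set F₁ : T → ℝ := fun t => θ t * Ft t with hF₁def
      have hF₁cont : Continuous F₁ := hθcont.mul Ft.continuous
      have hF₁cs : HasCompactSupport F₁ :=
        HasCompactSupport.intro hSc (fun t ht => by
          simp only [hF₁def, hθzero t ht, zero_mul])
      obtain ⟨C₁, hC₁⟩ := hF₁cs.exists_bound_of_continuous hF₁cont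
      refine ⟨fun x => F₁ x.1 * g x.2, hF₁cont.comp continuous_fst |>.mul
        (g.continuous.comp continuous_snd), ?_, ?_, ?_, ?_⟩
      · intro x hx
        simp only [hF₁def, hθzero x.1 hx, zero_mul]
      · refine ⟨max C₁ 0 * ‖g‖, fun x => ?_⟩
        rw [abs_mul]
        apply mul_le_mul
        · exact le_trans (by simpa [Real.norm_eq_abs] using hC₁ x.1) (le_max_left _ _)
        · simpa [Real.norm_eq_abs] using ContinuousMap.norm_coe_le_norm g x.2
        · exact abs_nonneg _
        · exact le_max_right _ _
      · intro x hx
        have hFF : Ft x.1 = F ⟨x.1, hx⟩ := by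
          have h := ContinuousMap.congr_fun hFt ⟨x.1, hx⟩
          simpa [ContinuousMap.restrict_apply] using h
        show F₁ x.1 * g x.2 = θ x.1 * (F ⟨x.1, hx⟩ * g x.2)
        rw [hF₁def]
        simp only []
        rw [hFF]
        ring
      · refine ⟨IkFun d T K 1 (fun w => F₁ (w 0)) (fun _ => ⇑g), ?_, fun m => ?_⟩
        · apply Submodule.subset_span
          refine Or.inr ⟨1, fun w => F₁ (w 0), fun _ => ⇑g, ?_, hcs_lift hF₁cs,
            fun _ => g.continuous, rfl⟩
          exact hF₁cont.comp (continuous_apply 0)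
        · exact IkFun_one hT hF₁cont hF₁cs (⇑g) m
    | zero =>
      refine ⟨fun _ => 0, continuous_const, fun _ _ => rfl, ⟨0, fun _ => by simp⟩,
        fun x hx => by simp, 0, Submodule.zero_mem _, fun m => by simp⟩
    | add w₁ w₂ h₁ h₂ h₁' h₂' =>
      obtain ⟨v₁, hv₁c, hv₁z, ⟨C₁, hC₁⟩, hv₁a, ψ₁, hψ₁m, hψ₁e⟩ := h₁'
      obtain ⟨v₂, hv₂c, hv₂z, ⟨C₂, hC₂⟩, hv₂a, ψ₂, hψ₂m, hψ₂e⟩ := h₂'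
      refine ⟨fun x => v₁ x + v₂ x, hv₁c.add hv₂c, ?_, ⟨C₁ + C₂, fun x =>
        (abs_add_le _ _).trans (add_le_add (hC₁ x) (hC₂ x))⟩, ?_, ψ₁ + ψ₂,
        Submodule.add_mem _ hψ₁m hψ₂m, fun m => ?_⟩
      · intro x hx
        show v₁ x + v₂ x = 0
        rw [hv₁z x hx, hv₂z x hx, add_zero]
      · intro x hx
        show v₁ x + v₂ x = θ x.1 * ((w₁ + w₂) (⟨x.1, hx⟩, x.2))
        rw [hv₁a x hx, hv₂a x hx, ContinuousMap.add_apply]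
        ring
      · have hi₁ : Integrable v₁ (m.1 : Measure (T × K)) :=
          integrable_of_bounded_of_vanish _ _ hv₁c.aestronglyMeasurable
            (hSc_closed.measurableSet.preimage measurable_fst)
            (marg_compact_lt_top hT m hSc) hC₁ (fun x hx => hv₁z x hx)
        have hi₂ : Integrable v₂ (m.1 : Measure (T × K)) :=
          integrable_of_bounded_of_vanish _ _ hv₂c.aestronglyMeasurable
            (hSc_closed.measurableSet.preimage measurable_fst)
            (marg_compact_lt_top hT m hSc) hC₂ (fun x hx => hv₂z x hx)
        rw [Pi.add_apply, hψ₁e m, hψ₂e m, ← integral_add hi₁ hi₂]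
    | smul a w h h' =>
      obtain ⟨v, hvc, hvz, ⟨C, hC⟩, hva, ψ, hψm, hψe⟩ := h'
      refine ⟨fun x => a * v x, continuous_const.mul hvc, ?_, ⟨|a| * C, fun x => ?_⟩,
        ?_, a • ψ, Submodule.smul_mem _ _ hψm, fun m => ?_⟩
      · intro x hx
        show a * v x = 0
        rw [hvz x hx, mul_zero]
      · show |a * v x| ≤ |a| * C
        rw [abs_mul]
        apply mul_le_mul_of_nonneg_left (hC x) (abs_nonneg a)
      · intro x hx
        show a * v x = θ x.1 * ((a • w) (⟨x.1, hx⟩, x.2))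
        rw [hva x hx, ContinuousMap.smul_apply]
        simp only [smul_eq_mul]
        ring
      · rw [Pi.smul_apply, hψe m, smul_eq_mul, ← integral_const_mul]
  obtain ⟨v, hvcont, hvvan, ⟨Cv, hCv⟩, hvagree, ψ, hψmem, hψeval⟩ := hP q hq_mem
  refine ⟨ψ, hψmem, fun m => ?_⟩
  -- pointwise estimate
  have hbound : ∀ x : T × K, |f x - v x| ≤ δ₁ + 2 * c := by
    intro x
    by_cases hx : x.1 ∈ Sc
    · rw [hvagree x hx]
      have hqc : |f x - q (⟨x.1, hx⟩, x.2)| ≤ δ₁ := by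
        have h := hq_close (⟨x.1, hx⟩, x.2)
        have hfres : fres (⟨x.1, hx⟩, x.2) = f x := by
          show f (x.1, x.2) = f x
          rw [Prod.mk.eta]
        rwa [hfres] at h
      have hid : f x - θ x.1 * q (⟨x.1, hx⟩, x.2)
          = (1 - θ x.1) * f x + θ x.1 * (f x - q (⟨x.1, hx⟩, x.2)) := by ring
      rw [hid]
      have hterm2 : |θ x.1 * (f x - q (⟨x.1, hx⟩, x.2))| ≤ δ₁ := by
        rw [abs_mul, abs_of_nonneg (hθ0 x.1)]
        calc θ x.1 * |f x - q (⟨x.1, hx⟩, x.2)| ≤ 1 * δ₁ :=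
          mul_le_mul (hθ1 x.1) hqc (abs_nonneg _) zero_le_one
        _ = δ₁ := one_mul _
      have hterm1 : |(1 - θ x.1) * f x| ≤ 2 * c := by
        rw [abs_mul]
        by_cases h2c : 2 * c ≤ F₀ x.1
        · rw [hθone x.1 h2c]
          simp
          linarith
        · push_neg at h2c
          have hfb : |f x| ≤ 2 * c := le_trans (habs x) h2c.le
          have h1θ : |1 - θ x.1| ≤ 1 := by
            rw [abs_of_nonneg (by linarith [hθ1 x.1])]
            linarith [hθ0 x.1]
          calc |1 - θ x.1| * |f x| ≤ 1 * (2 * c) :=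
            mul_le_mul h1θ hfb (abs_nonneg _) zero_le_one
          _ = 2 * c := one_mul _
      calc |(1 - θ x.1) * f x + θ x.1 * (f x - q (⟨x.1, hx⟩, x.2))|
          ≤ |(1 - θ x.1) * f x| + |θ x.1 * (f x - q (⟨x.1, hx⟩, x.2))| := abs_add_le _ _
      _ ≤ 2 * c + δ₁ := add_le_add hterm1 hterm2
      _ = δ₁ + 2 * c := by ring
    · rw [hvvan x hx, sub_zero]
      have : F₀ x.1 < c := by
        by_contra hge
        push_neg at hge
        exact hx hge
      calc |f x| ≤ F₀ x.1 := habs x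
      _ ≤ δ₁ + 2 * c := by linarith
  have hvan2 : ∀ x : T × K, x ∉ Prod.fst ⁻¹' S₀ → f x - v x = 0 := by
    intro x hx
    have hxS : x.1 ∉ S₀ := hx
    have hf0 : f x = 0 := by
      by_contra hne
      exact hxS ⟨x, subset_tsupport _ hne, rfl⟩
    have hv0 : v x = 0 := hvvan x (fun hmem => hxS (hSc_sub hmem))
    rw [hf0, hv0, sub_zero]
  have key := abs_integral_le_of_bounded_of_vanish (m.1 : Measure (T × K))
    (fun x => f x - v x) ((f.continuous.sub hvcont).aestronglyMeasurable)
    (hS₀.isClosed.measurableSet.preimage measurable_fst)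
    (marg_compact_lt_top hT m hS₀) hbound hvan2
  -- identify the measure with V₀
  have hmeas : ((m.1 : Measure (T × K)) (Prod.fst ⁻¹' S₀)).toReal = V₀ := by
    rw [marg_apply m hS₀.isClosed.measurableSet, comap_vol_apply hT hS₀.isClosed.measurableSet]
  rw [hmeas] at key
  -- split the integral
  have hif : Integrable (⇑f) (m.1 : Measure (T × K)) := by
    obtain ⟨Cf, hCf⟩ := f.hasCompactSupport'.exists_bound_of_continuous f.continuous
    apply integrable_of_bounded_of_vanish _ _ f.continuous.aestronglyMeasurable
      (hS₀.isClosed.measurableSet.preimage measurable_fst)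
      (marg_compact_lt_top hT m hS₀) (C := Cf)
      (fun x => by simpa [Real.norm_eq_abs] using hCf x)
    intro x hx
    by_contra hne
    exact hx ⟨x, subset_tsupport _ hne, rfl⟩
  have hiv : Integrable v (m.1 : Measure (T × K)) :=
    integrable_of_bounded_of_vanish _ _ hvcont.aestronglyMeasurable
      (hSc_closed.measurableSet.preimage measurable_fst)
      (marg_compact_lt_top hT m hSc) hCv (fun x hx => hvvan x hx)
  have hsplit : Lam f m - ψ m = ∫ x, (f x - v x) ∂(m.1 : Measure (T × K)) := by
    rw [Lam, hψeval m, ← integral_sub hif hiv]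
  rw [hsplit]
  calc |∫ x, (f x - v x) ∂(m.1 : Measure (T × K))| ≤ (δ₁ + 2 * c) * V₀ := key
  _ ≤ δ := by
      have hfrac : V₀ / (V₀ + 1) ≤ 1 := by rw [div_le_one hVden]; linarith
      have hrw : (δ / (2 * (V₀ + 1)) + 2 * (δ / (8 * (V₀ + 1)))) * V₀
          = (3 * δ / 4) * (V₀ / (V₀ + 1)) := by
        field_simp
        ring
      rw [hrw]
      calc (3 * δ / 4) * (V₀ / (V₀ + 1)) ≤ (3 * δ / 4) * 1 :=
        mul_le_mul_of_nonneg_left hfrac (by linarith)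
      _ ≤ δ := by linarith

/-! ### Glue: factorization through the compact image and Stone–Weierstrass -/

variable (d T K) in
/-- The canonical map to the product space. -/
def pitilde : Mlam d T K → (CompactlySupportedContinuousMap (T × K) ℝ → ℝ) :=
  fun m f => Lam f m

lemma top_eq :
    (instTopMlam : TopologicalSpace (Mlam d T K))
      = TopologicalSpace.induced (pitilde d T K) Pi.topologicalSpace := by
  show TopologicalSpace.induced _ (vagueTopology (T × K)) = _
  rw [vagueTopology, induced_iInf]
  rw [Pi.topologicalSpace, induced_iInf]
  refine iInf_congr fun f => ?_
  rw [induced_compose, induced_compose]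
  rfl

lemma continuous_pitilde : Continuous (pitilde d T K) := by
  rw [continuous_iff_le_induced, top_eq]

/-- KEY (A): compactness of `Mlam`. -/
lemma compactSpace_Mlam (hT : MeasurableSet T) : CompactSpace (Mlam d T K) := by
  refine ⟨?_⟩
  rw [isCompact_iff_ultrafilter_le_nhds]
  intro 𝒰 _
  refine ⟨mlimPoint 𝒰 hT, Set.mem_univ _, ?_⟩
  have h := nhds_induced (T := Pi.topologicalSpace) (pitilde d T K) (mlimPoint 𝒰 hT)
  rw [← top_eq] at h
  rw [h, ← Filter.tendsto_iff_comap, tendsto_pi_nhds]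
  intro f
  exact tendsto_Lam 𝒰 hT f

variable (d T K) in
def Zs : Set (CompactlySupportedContinuousMap (T × K) ℝ → ℝ) := Set.range (pitilde d T K)

lemma isCompact_Zs (hT : MeasurableSet T) : IsCompact (Zs d T K) := by
  haveI := compactSpace_Mlam (d := d) (T := T) (K := K) hT
  exact isCompact_range continuous_pitilde

variable (d T K) in
def pit : Mlam d T K → Zs d T K := Set.rangeFactorization (pitilde d T K)

lemma continuous_pit : Continuous (pit d T K) :=
  Continuous.subtype_mk continuous_pitilde _

/-- Factorization of a continuous function through the image. -/
lemma factor_eq {φ : Mlam d T K → ℝ} (hφ : Continuous φ) {m m' : Mlam d T K}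
    (h : pitilde d T K m = pitilde d T K m') : φ m = φ m' := by
  by_contra hne
  obtain ⟨U, V, hU, hV, haU, hbV, hUV⟩ := t2_separation hne
  have hop : IsOpen (φ ⁻¹' U) := hφ.isOpen_preimage U hU
  rw [top_eq, isOpen_induced_iff] at hop
  obtain ⟨O, hO, hOeq⟩ := hop
  have hmO : pitilde d T K m ∈ O := by
    have : m ∈ φ ⁻¹' U := haU
    rwa [← hOeq] at this
  have hm'O : pitilde d T K m' ∈ O := h ▸ hmO
  have : m' ∈ φ ⁻¹' U := by rw [← hOeq]; exact hm'O
  exact (Set.disjoint_left.mp hUV this) hbV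

variable (d T K) in
/-- The induced function on the image. -/
def phi' (φ : Mlam d T K → ℝ) : Zs d T K → ℝ :=
  fun z => φ (Classical.choose z.2)

lemma phi'_spec {φ : Mlam d T K → ℝ} (hφ : Continuous φ) (m : Mlam d T K) :
    phi' d T K φ (pit d T K m) = φ m := by
  apply factor_eq hφ
  exact Classical.choose_spec (pit d T K m).2

lemma continuous_phi' {φ : Mlam d T K → ℝ} (hφ : Continuous φ) :
    Continuous (phi' d T K φ) := by
  rw [continuous_def]
  intro U hU
  have hop : IsOpen (φ ⁻¹' U) := hφ.isOpen_preimage U hU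
  rw [top_eq, isOpen_induced_iff] at hop
  obtain ⟨O, hO, hOeq⟩ := hop
  have key : phi' d T K φ ⁻¹' U = Subtype.val ⁻¹' O := by
    ext z
    have hz := Classical.choose_spec z.2
    constructor
    · intro hzU
      have : Classical.choose z.2 ∈ φ ⁻¹' U := hzU
      rw [← hOeq] at this
      simpa [hz] using this
    · intro hzO
      have : Classical.choose z.2 ∈ pitilde d T K ⁻¹' O := by
        simp only [Set.mem_preimage]; rw [hz]; exact hzO
      rw [hOeq] at this
      exact this
  rw [key]
  exact (continuous_subtype_val).isOpen_preimage O hO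

variable (d T K) in
/-- Evaluation coordinates as continuous maps on `Z`. -/
def evCM (hT : MeasurableSet T) (f : CompactlySupportedContinuousMap (T × K) ℝ) :
    C(Zs d T K, ℝ) :=
  ⟨fun z => (z : CompactlySupportedContinuousMap (T × K) ℝ → ℝ) f,
    (continuous_apply f).comp continuous_subtype_val⟩

lemma comp_mem_D (hT : MeasurableSet T) (q : C(Zs d T K, ℝ))
    (hq : q ∈ Algebra.adjoin ℝ (Set.range (evCM d T K hT))) :
    (fun m => q (pit d T K m)) ∈ Dset d T K := by
  induction hq using Algebra.adjoin_induction with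
  | mem x hx =>
    obtain ⟨f, rfl⟩ := hx
    have : (fun m => (evCM d T K hT f) (pit d T K m)) = Lam (d := d) f := rfl
    rw [this]
    exact Lam_mem_D hT f
  | algebraMap r => exact const_mem_D r
  | add p q hp hq hp' hq' => exact add_mem_D hp' hq'
  | mul p q hp hq hp' hq' => exact mul_mem_D hT hp' hq'

end

end IkAux

/-- The linear span of the constants together with the functions `I_k(·; F, g)` is
dense (in the uniform norm) in the continuous functions on the compact space `M_λ`. -/
theorem Ik_span_dense (hT : MeasurableSet T)
    (φ : Mlam d T K → ℝ)
    (hφ : @Continuous _ _ (TopologicalSpace.induced Subtype.val (vagueTopology (T × K)))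
      inferInstance φ)
    (ε : ℝ) (hε : 0 < ε) :
    ∃ ψ ∈ Submodule.span ℝ (testFuns d T K), ∀ m : Mlam d T K, |φ m - ψ m| < ε := by
  classical
  open IkAux in
  cases isEmpty_or_nonempty (Mlam d T K) with
  | inl h => exact ⟨0, Submodule.zero_mem _, fun m => (h.false m).elim⟩
  | inr hne =>
  have hφ' : Continuous φ := hφ
  -- Z is compact
  haveI : CompactSpace (IkAux.Zs d T K) :=
    isCompact_iff_compactSpace.mp (IkAux.isCompact_Zs hT)
  -- Stone–Weierstrass
  set A := Algebra.adjoin ℝ (Set.range (IkAux.evCM d T K hT)) with hA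
  have hsep : A.SeparatesPoints := by
    rintro ⟨z, hz⟩ ⟨z', hz'⟩ hzz
    have : z ≠ z' := fun h => hzz (Subtype.ext h)
    obtain ⟨f, hf⟩ : ∃ f, z f ≠ z' f := by
      by_contra hc
      push_neg at hc
      exact this (funext hc)
    refine ⟨_, ⟨IkAux.evCM d T K hT f, Algebra.subset_adjoin ⟨f, rfl⟩, rfl⟩, hf⟩
  have hdense := ContinuousMap.subalgebra_topologicalClosure_eq_top_of_separatesPoints A hsep
  set φC : C(IkAux.Zs d T K, ℝ) := ⟨IkAux.phi' d T K φ, IkAux.continuous_phi' hφ'⟩ with hφC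
  have hmem : φC ∈ A.topologicalClosure := by rw [hdense]; trivial
  have hclos : φC ∈ closure (A : Set C(IkAux.Zs d T K, ℝ)) := hmem
  rw [Metric.mem_closure_iff] at hclos
  obtain ⟨q, hqA, hq⟩ := hclos (ε/2) (by linarith)
  -- q ∘ pit is approximable
  have hD := IkAux.comp_mem_D (d := d) (T := T) (K := K) hT q hqA
  obtain ⟨-, happrox⟩ := hD
  obtain ⟨ψ, hψ, hb⟩ := happrox (ε/4) (by linarith)
  refine ⟨ψ, hψ, fun m => ?_⟩
  have h1 : |φ m - q (IkAux.pit d T K m)| < ε/2 := by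
    have := IkAux.phi'_spec (d := d) (T := T) (K := K) hφ' m
    have hd : dist (φC (IkAux.pit d T K m)) (q (IkAux.pit d T K m)) ≤ dist φC q :=
      ContinuousMap.dist_apply_le_dist _
    rw [hφC] at hd
    simp only [ContinuousMap.coe_mk] at hd
    rw [this] at hd
    calc |φ m - q (IkAux.pit d T K m)| = dist (φ m) (q (IkAux.pit d T K m)) := by
          rw [Real.dist_eq]
    _ ≤ dist φC q := hd
    _ < ε/2 := hq
  have h2 : |q (IkAux.pit d T K m) - ψ m| ≤ ε/4 := hb m
  calc |φ m - ψ m| = |(φ m - q (IkAux.pit d T K m)) + (q (IkAux.pit d T K m) - ψ m)| := by ring_nf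
  _ ≤ |φ m - q (IkAux.pit d T K m)| + |q (IkAux.pit d T K m) - ψ m| := abs_add_le _ _
  _ < ε/2 + ε/2 := by
      have : (ε/4 : ℝ) < ε/2 := by linarith
      exact add_lt_add_of_lt_of_le h1 (h2.trans (le_of_lt this))
  _ = ε := by ring
end

section
/- Given a finite sequence of events with impacts u_1,…,u_n ∈ [0,1) and labels l_1,…,l_n ∈ [0,1] applied in order via the operation b' ⋄ b (w) := (1−u')b(w) + u'·1_{[l',1]}(w), the resulting composite bridge B equals B(w) = (∏_{j=1}^n (1−u_j)) w + Σ_{i=1}^n (∏_{j=i+1}^n (1−u_j)) u_i 1_{[l_i,1]}(w), and for V uniform on [0,1], the probability that B^{-1}(V) = l_i is p_i = (∏_{j>i}(1−u_j)) u_i, while the probability that B^{-1}(V) is a continuity point of B is p_0 = ∏_{j=1}^n (1−u_j); moreover p_0 + Σ_i p_i = 1 (assuming the l_i are distinct). -/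
open MeasureTheory

/-- Applying a new elementary bridge with impact `u` and label `l` to an existing
bridge `b`: `(b_{u,l} ⋄ b)(w) = (1−u)b(w) + u·1_{[l,1]}(w)`. -/
noncomputable def elemStep (u l : ℝ) (b : ℝ → ℝ) : ℝ → ℝ :=
  fun w => (1 - u) * b w + u * (if l ≤ w then 1 else 0)

/-- The composite bridge obtained by applying the events `(u_1,l_1),…,(u_n,l_n)`
in time order via the operation `⋄`. -/
noncomputable def compBridge : (n : ℕ) → (Fin n → ℝ) → (Fin n → ℝ) → ℝ → ℝ
  | 0, _, _ => id
  | n + 1, u, l =>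
      elemStep (u (Fin.last n)) (l (Fin.last n))
        (compBridge n (u ∘ Fin.castSucc) (l ∘ Fin.castSucc))

/-- The closed form
`B(w) = (∏_j (1−u_j)) w + Σ_i (∏_{j>i} (1−u_j)) u_i 1_{[l_i,1]}(w)`. -/
noncomputable def closedBridge (n : ℕ) (u l : Fin n → ℝ) (w : ℝ) : ℝ :=
  (∏ j, (1 - u j)) * w +
    ∑ i, (∏ j ∈ Finset.univ.filter (fun j => i < j), (1 - u j)) * u i *
      (if l i ≤ w then 1 else 0)

/-- The generalized inverse of the composite bridge. -/
noncomputable def closedBridgeInv (n : ℕ) (u l : Fin n → ℝ) (v : ℝ) : ℝ :=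
  sInf {w | w ∈ Set.Icc (0:ℝ) 1 ∧ v ≤ closedBridge n u l w}

/-! ### Auxiliary definitions and lemmas -/

open Finset

/-- The jump size `c_i = (∏_{j>i}(1−u_j)) u_i`. -/
noncomputable def cB (n : ℕ) (u : Fin n → ℝ) (i : Fin n) : ℝ :=
  (∏ j ∈ Finset.univ.filter (fun j => i < j), (1 - u j)) * u i

/-- The left limit version of the closed bridge (strict indicator). -/
noncomputable def leftB (n : ℕ) (u l : Fin n → ℝ) (w : ℝ) : ℝ :=
  (∏ j, (1 - u j)) * w + ∑ i, cB n u i * (if l i < w then 1 else 0)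

lemma closedBridge_def' (n : ℕ) (u l : Fin n → ℝ) (w : ℝ) :
    closedBridge n u l w
      = (∏ j, (1 - u j)) * w + ∑ i, cB n u i * (if l i ≤ w then 1 else 0) := rfl

lemma prod_filter_castSucc {n : ℕ} (f : Fin (n+1) → ℝ) (i : Fin n) :
    ∏ j ∈ univ.filter (fun j => i.castSucc < j), f j
      = (∏ j ∈ univ.filter (fun j => i < j), f j.castSucc) * f (Fin.last n) := by
  rw [Finset.prod_filter, Finset.prod_filter, Fin.prod_univ_castSucc]
  simp [Fin.castSucc_lt_castSucc_iff, Fin.castSucc_lt_last]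

lemma sum_c_eq {n : ℕ} (u : Fin n → ℝ) :
    (∏ j, (1 - u j)) +
        ∑ i, (∏ j ∈ Finset.univ.filter (fun j => i < j), (1 - u j)) * u i = 1 := by
  induction n with
  | zero => simp
  | succ n ih =>
    rw [Fin.prod_univ_castSucc, Fin.sum_univ_castSucc]
    have hlast : (univ : Finset (Fin (n+1))).filter (fun j => Fin.last n < j) = ∅ := by
      apply Finset.filter_false_of_mem
      intro j _
      exact not_lt.2 (Fin.le_last j)
    rw [hlast]
    have hterm : ∀ i : Fin n,
        (∏ j ∈ (univ : Finset (Fin (n+1))).filter (fun j => i.castSucc < j), (1 - u j))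
            * u i.castSucc
          = ((∏ j ∈ univ.filter (fun j => i < j), (1 - u (Fin.castSucc j)))
              * u (Fin.castSucc i)) * (1 - u (Fin.last n)) := by
      intro i
      rw [prod_filter_castSucc (fun j => 1 - u j) i]
      ring
    rw [Finset.sum_congr rfl (fun i _ => hterm i)]
    rw [← Finset.sum_mul]
    have := ih (u ∘ Fin.castSucc)
    simp only [Function.comp] at this
    simp only [Finset.prod_empty, one_mul]
    linear_combination (1 - u (Fin.last n)) * this

lemma sum_cB_eq {n : ℕ} (u : Fin n → ℝ) :
    (∏ j, (1 - u j)) + ∑ i, cB n u i = 1 := sum_c_eq u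

lemma comp_eq_closed (n : ℕ) (u l : Fin n → ℝ) :
    compBridge n u l = closedBridge n u l := by
  induction n with
  | zero =>
    funext w
    simp [compBridge, closedBridge]
  | succ n ih =>
    funext w
    rw [compBridge, ih, elemStep]
    simp only [closedBridge, Function.comp]
    rw [Fin.prod_univ_castSucc, Fin.sum_univ_castSucc]
    have hlast : (univ : Finset (Fin (n+1))).filter (fun j => Fin.last n < j) = ∅ := by
      apply Finset.filter_false_of_mem
      intro j _
      exact not_lt.2 (Fin.le_last j)
    rw [hlast]
    have hterm : ∀ i : Fin n,
        (∏ j ∈ (univ : Finset (Fin (n+1))).filter (fun j => i.castSucc < j), (1 - u j))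
            * u i.castSucc * (if l i.castSucc ≤ w then (1:ℝ) else 0)
          = (1 - u (Fin.last n)) * ((∏ j ∈ univ.filter (fun j => i < j), (1 - u j.castSucc))
              * u i.castSucc * (if l i.castSucc ≤ w then (1:ℝ) else 0)) := by
      intro i
      rw [prod_filter_castSucc (fun j => 1 - u j) i]
      ring
    rw [Finset.sum_congr rfl (fun i _ => hterm i), ← Finset.mul_sum]
    simp only [Finset.prod_empty, one_mul]
    ring

section basic
variable {n : ℕ} {u l : Fin n → ℝ}
variable (hu : ∀ i, u i ∈ Set.Ico (0:ℝ) 1) (hl : ∀ i, l i ∈ Set.Icc (0:ℝ) 1)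

include hu in
lemma prodA_pos : 0 < ∏ j, (1 - u j) :=
  Finset.prod_pos (fun j _ => by linarith [(hu j).2])

include hu in
lemma cB_nonneg (i : Fin n) : 0 ≤ cB n u i :=
  mul_nonneg (Finset.prod_nonneg (fun j _ => by linarith [(hu j).2])) (hu i).1

include hu in
lemma B_mono : Monotone (closedBridge n u l) := by
  intro w w' hww
  simp only [closedBridge_def']
  have hA := prodA_pos hu
  refine add_le_add (mul_le_mul_of_nonneg_left hww hA.le) (Finset.sum_le_sum ?_)
  intro i _
  have hc := cB_nonneg hu i
  have hind : (if l i ≤ w then (1:ℝ) else 0) ≤ (if l i ≤ w' then 1 else 0) := by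
    split_ifs with h1 h2 <;> norm_num
    exact h2 (le_trans h1 hww)
  exact mul_le_mul_of_nonneg_left hind hc

include hl in
lemma B_one : closedBridge n u l 1 = 1 := by
  rw [closedBridge_def']
  have : ∀ i, (if l i ≤ (1:ℝ) then (1:ℝ) else 0) = 1 := fun i => if_pos (hl i).2
  simp only [this, mul_one]
  simpa using sum_cB_eq u

include hu in
lemma B_nonneg {w : ℝ} (hw : 0 ≤ w) : 0 ≤ closedBridge n u l w := by
  rw [closedBridge_def']
  have h1 : 0 ≤ (∏ j, (1 - u j)) * w := mul_nonneg (le_of_lt (prodA_pos hu)) hw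
  have h2 : (0:ℝ) ≤ ∑ i, cB n u i * (if l i ≤ w then 1 else 0) :=
    Finset.sum_nonneg fun i _ => mul_nonneg (cB_nonneg hu i)
      (by split_ifs <;> norm_num)
  linarith

include hu in
lemma leftB_nonneg {w : ℝ} (hw : 0 ≤ w) : 0 ≤ leftB n u l w := by
  unfold leftB
  have h1 : 0 ≤ (∏ j, (1 - u j)) * w := mul_nonneg (le_of_lt (prodA_pos hu)) hw
  have h2 : (0:ℝ) ≤ ∑ i, cB n u i * (if l i < w then 1 else 0) :=
    Finset.sum_nonneg fun i _ => mul_nonneg (cB_nonneg hu i)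
      (by split_ifs <;> norm_num)
  linarith

include hu in
lemma B_lt_leftB (i : Fin n) {w : ℝ} (hw : w < l i) :
    closedBridge n u l w < leftB n u l (l i) := by
  rw [closedBridge_def']
  unfold leftB
  have hA := prodA_pos hu
  have h1 : (∏ j, (1 - u j)) * w < (∏ j, (1 - u j)) * l i :=
    mul_lt_mul_of_pos_left hw hA
  have h2 : ∑ j, cB n u j * (if l j ≤ w then 1 else 0)
      ≤ ∑ j, cB n u j * (if l j < l i then 1 else 0) := by
    apply Finset.sum_le_sum
    intro j _
    apply mul_le_mul_of_nonneg_left _ (cB_nonneg hu j)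
    split_ifs with h1' h2' <;> norm_num
    exact h2' (lt_of_le_of_lt h1' hw)
  linarith

lemma leftB_add_c (hdist : Function.Injective l) (i : Fin n) :
    leftB n u l (l i) + cB n u i = closedBridge n u l (l i) := by
  rw [closedBridge_def']
  unfold leftB
  have key : ∑ j, cB n u j * (if l j ≤ l i then 1 else 0)
      = (∑ j, cB n u j * (if l j < l i then 1 else 0)) + cB n u i := by
    rw [← Finset.sum_erase_add _ _ (Finset.mem_univ i),
        ← Finset.sum_erase_add _ _ (Finset.mem_univ i)]
    have h1 : ∀ j ∈ Finset.univ.erase i,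
        cB n u j * (if l j ≤ l i then (1:ℝ) else 0)
          = cB n u j * (if l j < l i then 1 else 0) := by
      intro j hj
      have hne : l j ≠ l i := fun h => (Finset.mem_erase.1 hj).1 (hdist h)
      congr 1
      split_ifs with h1' h2' h2' <;> first | rfl | (exfalso; first
        | exact h2' (lt_of_le_of_ne h1' hne) | exact h1' (le_of_lt h2'))
    rw [Finset.sum_congr rfl h1]
    simp
  rw [key]
  ring

include hu hl in
lemma inv_eq_iff (i : Fin n) {v : ℝ} (hv : v ∈ Set.Icc (0:ℝ) 1) :
    closedBridgeInv n u l v = l i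
      ↔ leftB n u l (l i) ≤ v ∧ v ≤ closedBridge n u l (l i) := by
  set A := ∏ j, (1 - u j) with hAdef
  have hA : 0 < A := prodA_pos hu
  set T : Set ℝ := {w | w ∈ Set.Icc (0:ℝ) 1 ∧ v ≤ closedBridge n u l w} with hTdef
  have hbdd : BddBelow T := ⟨0, fun w hw => hw.1.1⟩
  have h1T : (1:ℝ) ∈ T := ⟨⟨zero_le_one, le_refl 1⟩, by rw [B_one hl]; exact hv.2⟩
  have hne : T.Nonempty := ⟨1, h1T⟩
  have hinv : closedBridgeInv n u l v = sInf T := rfl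
  constructor
  · intro h
    rw [hinv] at h
    have hleft : leftB n u l (l i) ≤ v := by
      by_contra hvc
      push_neg at hvc
      rcases eq_or_lt_of_le (hl i).1 with h0 | h0
      · have : leftB n u l (l i) = 0 := by
          unfold leftB
          rw [← h0]
          have : ∀ j, (if l j < (0:ℝ) then (1:ℝ) else 0) = 0 :=
            fun j => if_neg (not_lt.2 (hl j).1)
          simp [this]
        linarith [hv.1]
      · set ε := (leftB n u l (l i) - v) / A with hεdef
        have hε : 0 < ε := div_pos (by linarith) hA
        set S : Finset ℝ := insert (0:ℝ) ((univ.filter (fun j => l j < l i)).image l)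
          with hSdef
        have hSne : S.Nonempty := Finset.insert_nonempty _ _
        set w₀ := S.max' hSne with hw₀def
        have hw₀lt : w₀ < l i := by
          rw [Finset.max'_lt_iff]
          intro x hx
          rcases Finset.mem_insert.1 hx with rfl | hx
          · exact h0
          · obtain ⟨j, hj, rfl⟩ := Finset.mem_image.1 hx
            exact (Finset.mem_filter.1 hj).2
        have hw₀0 : (0:ℝ) ≤ w₀ := Finset.le_max' _ 0 (Finset.mem_insert_self _ _)
        have hw₀ge : ∀ j, l j < l i → l j ≤ w₀ := fun j hj =>
          Finset.le_max' _ _ (Finset.mem_insert_of_mem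
            (Finset.mem_image_of_mem l (Finset.mem_filter.2 ⟨Finset.mem_univ j, hj⟩)))
        set w := max w₀ (l i - ε) with hwdef
        have hwlt : w < l i := max_lt hw₀lt (by linarith)
        have hw0 : 0 ≤ w := le_trans hw₀0 (le_max_left _ _)
        have hBw : closedBridge n u l w = leftB n u l (l i) - A * (l i - w) := by
          rw [closedBridge_def']
          unfold leftB
          have hsum : ∀ j : Fin n,
              (if l j ≤ w then (1:ℝ) else 0) = (if l j < l i then 1 else 0) := by
            intro j
            congr 1
            apply propext
            constructor
            · intro hjw; exact lt_of_le_of_lt hjw hwlt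
            · intro hji; exact le_trans (hw₀ge j hji) (le_max_left _ _)
          simp only [hsum]
          ring
        have hwv : v ≤ closedBridge n u l w := by
          rw [hBw]
          have h1 : l i - w ≤ ε := by
            have : l i - ε ≤ w := le_max_right _ _
            linarith
          have h2 : A * (l i - w) ≤ A * ε := mul_le_mul_of_nonneg_left h1 hA.le
          have h3 : A * ε = leftB n u l (l i) - v := by
            rw [hεdef]; field_simp
          linarith
        have hwT : w ∈ T := ⟨⟨hw0, le_trans hwlt.le (hl i).2⟩, hwv⟩
        have : sInf T ≤ w := csInf_le hbdd hwT
        rw [h] at this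
        linarith
    refine ⟨hleft, ?_⟩
    by_contra hvc
    push_neg at hvc
    set ε' := (v - closedBridge n u l (l i)) / A with hε'def
    have hε' : 0 < ε' := div_pos (by linarith) hA
    set S' : Finset ℝ :=
      insert ε' ((univ.filter (fun j => l i < l j)).image (fun j => l j - l i)) with hS'def
    have hS'ne : S'.Nonempty := Finset.insert_nonempty _ _
    set d := S'.min' hS'ne with hddef
    have hd : 0 < d := by
      rw [hddef, Finset.lt_min'_iff]
      intro x hx
      rcases Finset.mem_insert.1 hx with rfl | hx
      · exact hε'
      · obtain ⟨j, hj, rfl⟩ := Finset.mem_image.1 hx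
        have := (Finset.mem_filter.1 hj).2
        linarith
    have hdε : d ≤ ε' := Finset.min'_le _ _ (Finset.mem_insert_self _ _)
    have hdj : ∀ j, l i < l j → d ≤ l j - l i := fun j hj =>
      Finset.min'_le _ _ (Finset.mem_insert_of_mem
        (Finset.mem_image_of_mem _ (Finset.mem_filter.2 ⟨Finset.mem_univ j, hj⟩)))
    obtain ⟨w, hwT, hwlt⟩ : ∃ w ∈ T, w < l i + d := by
      apply exists_lt_of_csInf_lt hne
      have : sInf T = l i := h
      rw [this]; linarith
    have hwge : l i ≤ w := by
      have h5 := csInf_le hbdd hwT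
      rw [h] at h5
      exact h5
    have hBw : closedBridge n u l w
        ≤ closedBridge n u l (l i) + A * (w - l i) := by
      rw [closedBridge_def', closedBridge_def']
      have hsum : ∀ j : Fin n,
          cB n u j * (if l j ≤ w then (1:ℝ) else 0)
            ≤ cB n u j * (if l j ≤ l i then 1 else 0) := by
        intro j
        apply mul_le_mul_of_nonneg_left _ (cB_nonneg hu j)
        split_ifs with h1' h2' <;> norm_num
        by_contra
        have hlt : l i < l j := lt_of_not_ge h2'
        have := hdj j hlt
        linarith
      have := Finset.sum_le_sum (fun j (_ : j ∈ univ) => hsum j)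
      have hAw : A * w = A * l i + A * (w - l i) := by ring
      linarith
    have hvw : v ≤ closedBridge n u l w := hwT.2
    have h2 : A * (w - l i) < A * d := mul_lt_mul_of_pos_left (by linarith) hA
    have h3 : A * d ≤ A * ε' := mul_le_mul_of_nonneg_left hdε hA.le
    have h4 : A * ε' = v - closedBridge n u l (l i) := by
      rw [hε'def]; field_simp
    linarith
  · rintro ⟨h1, h2⟩
    have hls : l i ∈ T := ⟨⟨(hl i).1, (hl i).2⟩, h2⟩
    have lower : ∀ w ∈ T, l i ≤ w := by
      intro w hw
      by_contra hlt
      push_neg at hlt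
      have := B_lt_leftB hu i hlt
      have := hw.2
      linarith
    rw [hinv]
    exact le_antisymm (csInf_le hbdd hls) (le_csInf hne lower)

lemma cont_of {w : ℝ} (h : ∀ i, l i = w → cB n u i = 0) :
    ContinuousAt (closedBridge n u l) w := by
  have hfun : closedBridge n u l
      = fun w => (∏ j, (1 - u j)) * w + ∑ i, cB n u i * (if l i ≤ w then 1 else 0) :=
    funext (closedBridge_def' n u l)
  rw [hfun]
  apply ContinuousAt.add
  · exact (continuous_const.mul continuous_id).continuousAt
  · have hterm : ∀ i : Fin n,
        ContinuousAt (fun x : ℝ => cB n u i * (if l i ≤ x then (1:ℝ) else 0)) w := by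
      intro i
      rcases eq_or_ne (cB n u i) 0 with hc | hc
      · have : (fun x : ℝ => cB n u i * (if l i ≤ x then (1:ℝ) else 0)) = fun _ => 0 := by
          funext x; rw [hc]; ring
        rw [this]
        exact continuousAt_const
      · have hne : l i ≠ w := fun he => hc (h i he)
        apply ContinuousAt.mul continuousAt_const
        rcases lt_or_gt_of_ne hne with hlt | hgt
        · have hev : ∀ᶠ x in nhds w, (fun _ : ℝ => (1:ℝ)) x
              = (fun x => if l i ≤ x then (1:ℝ) else 0) x := by
            filter_upwards [isOpen_Ioi.mem_nhds hlt] with x hx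
            simp [le_of_lt (Set.mem_Ioi.1 hx)]
          exact continuousAt_const.congr hev
        · have hev : ∀ᶠ x in nhds w, (fun _ : ℝ => (0:ℝ)) x
              = (fun x => if l i ≤ x then (1:ℝ) else 0) x := by
            filter_upwards [isOpen_Iio.mem_nhds hgt] with x hx
            simp [not_le.2 (Set.mem_Iio.1 hx)]
          exact continuousAt_const.congr hev
    exact tendsto_finset_sum _ (fun i _ => hterm i)

include hu in
lemma not_cont (i : Fin n) (hc : cB n u i ≠ 0) :
    ¬ ContinuousAt (closedBridge n u l) (l i) := by
  have hci : 0 < cB n u i := lt_of_le_of_ne (cB_nonneg hu i) (Ne.symm hc)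
  have hA : 0 < ∏ j, (1 - u j) := prodA_pos hu
  have key : ∀ w' < l i,
      closedBridge n u l w' ≤ closedBridge n u l (l i) - cB n u i := by
    intro w' hw'
    rw [closedBridge_def', closedBridge_def']
    have h1 : (∏ j, (1 - u j)) * w' ≤ (∏ j, (1 - u j)) * l i :=
      mul_le_mul_of_nonneg_left hw'.le hA.le
    have h2 : ∑ j, cB n u j * (if l j ≤ w' then 1 else 0)
        ≤ (∑ j, cB n u j * (if l j ≤ l i then 1 else 0)) - cB n u i := by
      rw [← Finset.sum_erase_add _ _ (Finset.mem_univ i),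
          ← Finset.sum_erase_add _ _ (Finset.mem_univ i)]
      have hii : cB n u i * (if l i ≤ w' then (1:ℝ) else 0) = 0 := by
        rw [if_neg (not_le.2 hw')]; ring
      have hii2 : cB n u i * (if l i ≤ l i then (1:ℝ) else 0) = cB n u i := by
        rw [if_pos le_rfl]; ring
      rw [hii, hii2]
      have : ∑ j ∈ Finset.univ.erase i, cB n u j * (if l j ≤ w' then (1:ℝ) else 0)
          ≤ ∑ j ∈ Finset.univ.erase i, cB n u j * (if l j ≤ l i then (1:ℝ) else 0) := by
        apply Finset.sum_le_sum
        intro j _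
        apply mul_le_mul_of_nonneg_left _ (cB_nonneg hu j)
        split_ifs with ha hb <;> norm_num
        exact hb (le_trans ha hw'.le)
      linarith
    linarith
  intro hcont
  have htends : Filter.Tendsto (closedBridge n u l)
      (nhdsWithin (l i) (Set.Iio (l i))) (nhds (closedBridge n u l (l i))) :=
    hcont.tendsto.mono_left nhdsWithin_le_nhds
  have hev : ∀ᶠ w' in nhdsWithin (l i) (Set.Iio (l i)),
      closedBridge n u l w' ≤ closedBridge n u l (l i) - cB n u i := by
    filter_upwards [self_mem_nhdsWithin] with w' hw'
    exact key w' hw'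
  have := le_of_tendsto htends hev
  linarith

include hu hl in
lemma leftB_bound (i : Fin n) : 0 ≤ leftB n u l (l i) := leftB_nonneg hu (hl i).1

include hu hl in
lemma B_label_le_one (i : Fin n) : closedBridge n u l (l i) ≤ 1 := by
  have := B_mono (l := l) hu (hl i).2
  rwa [B_one hl] at this

include hu hl in
lemma interval_eq (hdist : Function.Injective l) (i : Fin n) :
    {v | closedBridgeInv n u l v = l i} ∩ Set.Icc (0:ℝ) 1
      = Set.Icc (leftB n u l (l i)) (closedBridge n u l (l i)) := by
  ext v
  simp only [Set.mem_inter_iff, Set.mem_setOf_eq, Set.mem_Icc]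
  constructor
  · rintro ⟨h1, h2⟩
    exact (inv_eq_iff hu hl i h2).1 h1
  · rintro ⟨h1, h2⟩
    have hv : v ∈ Set.Icc (0:ℝ) 1 :=
      ⟨le_trans (leftB_bound hu hl i) h1, le_trans h2 (B_label_le_one hu hl i)⟩
    exact ⟨(inv_eq_iff hu hl i hv).2 ⟨h1, h2⟩, hv⟩

end basic

/-- Composite bridge: the `⋄`-composition of elementary bridges equals its closed form;
for `V` uniform on `[0,1]`, `B^{-1}(V) = l_i` with probability
`p_i = (∏_{j>i}(1−u_j)) u_i`, `B^{-1}(V)` is a continuity point of `B` with probability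
`p_0 = ∏_j (1−u_j)`, and `p_0 + Σ_i p_i = 1`. -/
theorem composite_bridge_law (n : ℕ) (u l : Fin n → ℝ)
    (hu : ∀ i, u i ∈ Set.Ico (0:ℝ) 1) (hl : ∀ i, l i ∈ Set.Icc (0:ℝ) 1)
    (hdist : Function.Injective l) :
    compBridge n u l = closedBridge n u l ∧
    (∀ i, (volume.restrict (Set.Icc (0:ℝ) 1)) {v | closedBridgeInv n u l v = l i}
      = ENNReal.ofReal ((∏ j ∈ Finset.univ.filter (fun j => i < j), (1 - u j)) * u i)) ∧
    (volume.restrict (Set.Icc (0:ℝ) 1))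
        {v | ContinuousAt (closedBridge n u l) (closedBridgeInv n u l v)}
      = ENNReal.ofReal (∏ j, (1 - u j)) ∧
    (∏ j, (1 - u j)) +
        ∑ i, (∏ j ∈ Finset.univ.filter (fun j => i < j), (1 - u j)) * u i = 1 := by
  have hA : 0 < ∏ j, (1 - u j) := prodA_pos hu
  have hjump : ∀ i, closedBridge n u l (l i) - leftB n u l (l i) = cB n u i := by
    intro i
    have := leftB_add_c (u := u) hdist i
    linarith
  refine ⟨comp_eq_closed n u l, ?_, ?_, sum_c_eq u⟩
  · -- part 2
    intro i
    rw [Measure.restrict_apply' measurableSet_Icc, interval_eq hu hl hdist i,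
        Real.volume_Icc, hjump i]
    rfl
  · -- part 3
    set D : Finset (Fin n) := Finset.univ.filter (fun i => cB n u i ≠ 0) with hDdef
    set N : Set ℝ := ⋃ i ∈ D,
      Set.Icc (leftB n u l (l i)) (closedBridge n u l (l i)) with hNdef
    have hmeasN : MeasurableSet N :=
      D.measurableSet_biUnion (fun i _ => measurableSet_Icc)
    have hNsub : N ⊆ Set.Icc (0:ℝ) 1 := by
      apply Set.iUnion₂_subset
      intro i _
      exact Set.Icc_subset_Icc (leftB_bound hu hl i) (B_label_le_one hu hl i)
    have hmemN : ∀ v ∈ Set.Icc (0:ℝ) 1,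
        (v ∈ N ↔ ∃ i, cB n u i ≠ 0 ∧ closedBridgeInv n u l v = l i) := by
      intro v hv
      rw [hNdef, Set.mem_iUnion₂]
      constructor
      · rintro ⟨i, hiD, hvI⟩
        exact ⟨i, (Finset.mem_filter.1 hiD).2, (inv_eq_iff hu hl i hv).2 hvI⟩
      · rintro ⟨i, hci, hinv⟩
        exact ⟨i, Finset.mem_filter.2 ⟨Finset.mem_univ i, hci⟩,
          (inv_eq_iff hu hl i hv).1 hinv⟩
    have hsetC : {v | ContinuousAt (closedBridge n u l) (closedBridgeInv n u l v)}
        ∩ Set.Icc (0:ℝ) 1 = Set.Icc (0:ℝ) 1 \ N := by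
      ext v
      simp only [Set.mem_inter_iff, Set.mem_setOf_eq, Set.mem_diff]
      constructor
      · rintro ⟨hcont, hv⟩
        refine ⟨hv, fun hN => ?_⟩
        obtain ⟨i, hci, hinv⟩ := (hmemN v hv).1 hN
        exact not_cont hu i hci (hinv ▸ hcont)
      · rintro ⟨hv, hN⟩
        refine ⟨cont_of ?_, hv⟩
        intro i hli
        by_contra hci
        exact hN ((hmemN v hv).2 ⟨i, hci, hli.symm⟩)
    have hdisj : (↑D : Set (Fin n)).PairwiseDisjoint
        (fun i => Set.Icc (leftB n u l (l i)) (closedBridge n u l (l i))) := by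
      have hd2 : ∀ i j : Fin n, l i < l j →
          Disjoint (Set.Icc (leftB n u l (l i)) (closedBridge n u l (l i)))
            (Set.Icc (leftB n u l (l j)) (closedBridge n u l (l j))) := by
        intro i j hij
        rw [Set.disjoint_left]
        intro v hv1 hv2
        have h1 : closedBridge n u l (l i) < leftB n u l (l j) := B_lt_leftB hu j hij
        have := hv1.2
        have := hv2.1
        simp only [Set.mem_Icc] at hv1 hv2
        linarith [hv1.2, hv2.1]
      intro i _ j _ hij
      have hlij : l i ≠ l j := fun h => hij (hdist h)
      rcases lt_or_gt_of_ne hlij with h | h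
      · exact hd2 i j h
      · exact (hd2 j i h).symm
    have hvolN : volume N = ENNReal.ofReal (∑ i, cB n u i) := by
      rw [hNdef, measure_biUnion_finset hdisj (fun i _ => measurableSet_Icc)]
      have : ∀ i ∈ D, volume (Set.Icc (leftB n u l (l i)) (closedBridge n u l (l i)))
          = ENNReal.ofReal (cB n u i) := by
        intro i _
        rw [Real.volume_Icc, hjump i]
      rw [Finset.sum_congr rfl this,
          ← ENNReal.ofReal_sum_of_nonneg (fun i _ => cB_nonneg hu i)]
      congr 1
      rw [hDdef]
      exact Finset.sum_filter_ne_zero _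
    have hfin : volume N ≠ ⊤ :=
      (lt_of_le_of_lt (measure_mono hNsub) measure_Icc_lt_top).ne
    rw [Measure.restrict_apply' measurableSet_Icc, hsetC,
        measure_diff hNsub hmeasN.nullMeasurableSet hfin, hvolN, Real.volume_Icc]
    have hsums : 0 ≤ ∑ i, cB n u i := Finset.sum_nonneg fun i _ => cB_nonneg hu i
    have hone : ENNReal.ofReal ((1:ℝ) - 0)
        = ENNReal.ofReal (∏ j, (1 - u j)) + ENNReal.ofReal (∑ i, cB n u i) := by
      rw [← ENNReal.ofReal_add hA.le hsums, sum_cB_eq u]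
      norm_num
    rw [hone, ENNReal.add_sub_cancel_right ENNReal.ofReal_ne_top]
end

section
/- Under the conditions ∫_0^∞ ∫_0^1 u r^d ν_r(du) μ(dr) < ∞ and ∫_0^∞ ν_r({1}) μ(dr) = 0, for every x ∈ T and t > 0 one has, with probability 1 over the Poisson environment, ∏_{i ∈ α(x,t)} (1 − u_i) > 0; equivalently Σ_{i ∈ α(x,t)} log(1/(1−u_i)) < ∞ a.s. -/
open MeasureTheory Classical
open scoped ENNReal

/-- `expNeg x = e^{-x}` for `x ∈ [0,∞]`. -/
noncomputable def expNeg (x : ℝ≥0∞) : ℝ≥0∞ :=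
  if x = ⊤ then 0 else ENNReal.ofReal (Real.exp (-x.toReal))

/-- Poisson point process, characterized by its Laplace functional. -/
def IsPoissonPP {Ω S : Type*} [MeasurableSpace Ω] [MeasurableSpace S]
    (P : Measure Ω) (Φ : Ω → Measure S) (ν : Measure S) : Prop :=
  ∀ f : S → ℝ≥0∞, Measurable f →
    ∫⁻ ω, expNeg (∫⁻ x, f x ∂(Φ ω)) ∂P = expNeg (∫⁻ x, (1 - expNeg (f x)) ∂ν)

open Filter
open scoped Topology

lemma expNeg_zero : expNeg 0 = 1 := by simp [expNeg]

lemma expNeg_top : expNeg ⊤ = 0 := by simp [expNeg]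

lemma expNeg_le_one (x : ℝ≥0∞) : expNeg x ≤ 1 := by
  unfold expNeg
  split
  · exact zero_le_one
  · simpa [ENNReal.ofReal_le_one] using Real.exp_le_one_iff.2 (neg_nonpos.2 ENNReal.toReal_nonneg)

lemma measurable_expNeg : Measurable expNeg := by
  unfold expNeg
  refine Measurable.ite ?_ measurable_const ?_
  · simpa [Set.setOf_eq_eq_singleton] using measurableSet_singleton (⊤ : ℝ≥0∞)
  · exact ENNReal.measurable_ofReal.comp (Real.measurable_exp.comp ENNReal.measurable_toReal.neg)

lemma tendsto_expNeg_of_tendsto_zero {u : ℕ → ℝ≥0∞} (h : Tendsto u atTop (𝓝 0)) :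
    Tendsto (fun n => expNeg (u n)) atTop (𝓝 1) := by
  have h1 : Tendsto (fun n => (u n).toReal) atTop (𝓝 (0 : ℝ)) := by
    simpa [Function.comp_def] using (ENNReal.tendsto_toReal (by simp)).comp h
  have h2 : Tendsto (fun n => ENNReal.ofReal (Real.exp (-(u n).toReal))) atTop (𝓝 1) := by
    have := (ENNReal.continuous_ofReal.tendsto _).comp ((Real.continuous_exp.tendsto _).comp h1.neg)
    simpa [Function.comp_def] using this
  refine h2.congr' ?_
  filter_upwards [h (Iio_mem_nhds (zero_lt_one))] with n hn
  rw [expNeg, if_neg (by exact ne_top_of_lt hn)]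

lemma key_ineq {u : ℝ} (hu0 : 0 ≤ u) (hu1 : u ≤ 1) {θ : ℝ≥0∞} (hθ1 : θ ≤ 1) :
    1 - expNeg (θ * ENNReal.ofReal (Real.log (1 / (1 - u)))) ≤ ENNReal.ofReal u := by
  have hθtop : θ ≠ ⊤ := ne_top_of_le_ne_top ENNReal.one_ne_top hθ1
  rcases eq_or_lt_of_le hu1 with h1 | h1
  · rw [← h1]
    simp [expNeg_zero]
  · have hv0 : (0:ℝ) < 1 - u := by linarith
    have hv1 : 1 - u ≤ 1 := by linarith
    have hL : Real.log (1 / (1 - u)) = -Real.log (1 - u) := by rw [one_div, Real.log_inv]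
    have hlogv : Real.log (1 - u) ≤ 0 := Real.log_nonpos hv0.le hv1
    have hfin : θ * ENNReal.ofReal (Real.log (1 / (1 - u))) ≠ ⊤ :=
      ENNReal.mul_ne_top hθtop ENNReal.ofReal_ne_top
    have hτ : (θ * ENNReal.ofReal (Real.log (1 / (1 - u)))).toReal
        = θ.toReal * (-Real.log (1 - u)) := by
      rw [ENNReal.toReal_mul, hL, ENNReal.toReal_ofReal (by linarith)]
    have hθr : θ.toReal ≤ 1 := by
      simpa using ENNReal.toReal_mono ENNReal.one_ne_top hθ1
    have hexp : Real.exp (-(θ.toReal * (-Real.log (1 - u)))) = (1 - u) ^ θ.toReal := by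
      rw [Real.rpow_def_of_pos hv0]; ring_nf
    have hvpow : 1 - u ≤ (1 - u) ^ θ.toReal := by
      calc 1 - u = (1 - u) ^ (1 : ℝ) := (Real.rpow_one _).symm
        _ ≤ (1 - u) ^ θ.toReal := Real.rpow_le_rpow_of_exponent_ge hv0 hv1 hθr
    have heq : expNeg (θ * ENNReal.ofReal (Real.log (1 / (1 - u))))
        = ENNReal.ofReal ((1 - u) ^ θ.toReal) := by
      rw [expNeg, if_neg hfin, hτ, hexp]
    rw [heq]
    calc 1 - ENNReal.ofReal ((1 - u) ^ θ.toReal) ≤ 1 - ENNReal.ofReal (1 - u) :=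
          tsub_le_tsub_left (ENNReal.ofReal_le_ofReal hvpow) 1
      _ = ENNReal.ofReal u := by
          rw [← ENNReal.ofReal_one, ← ENNReal.ofReal_sub _ hv0.le]
          norm_num

lemma aux_main {Ω S : Type*} [MeasurableSpace Ω] [MeasurableSpace S]
    (P : Measure Ω) [IsProbabilityMeasure P] (Φ : Ω → Measure S) (νT : Measure S)
    (hΦ : IsPoissonPP P Φ νT) (f : S → ℝ≥0∞) (hf : Measurable f)
    (hlim : Tendsto (fun n : ℕ =>
        ∫⁻ p, (1 - expNeg ((((n : ℕ) : ℝ≥0∞) + 1)⁻¹ * f p)) ∂νT) atTop (𝓝 0)) :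
    ∀ᵐ ω ∂P, ∫⁻ p, f p ∂(Φ ω) < ⊤ := by
  set c : ℕ → ℝ≥0∞ := fun n => (((n : ℕ) : ℝ≥0∞) + 1)⁻¹ with hc
  have hc0 : ∀ n, c n ≠ 0 := fun n => ENNReal.inv_ne_zero.2 (by simp)
  have hS_eq : ∀ n, ∫⁻ ω, expNeg (c n * ∫⁻ p, f p ∂(Φ ω)) ∂P
      = expNeg (∫⁻ p, (1 - expNeg (c n * f p)) ∂νT) := by
    intro n
    have := hΦ (fun p => c n * f p) (hf.const_mul _)
    simpa [lintegral_const_mul _ hf] using this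
  have he : Tendsto (fun n => expNeg (∫⁻ p, (1 - expNeg (c n * f p)) ∂νT)) atTop (𝓝 1) :=
    tendsto_expNeg_of_tendsto_zero hlim
  set H : Ω → ℝ≥0∞ := fun ω => if (∫⁻ p, f p ∂(Φ ω)) = ⊤ then 0 else 1 with hinf
  have hle : ∀ n ω, expNeg (c n * ∫⁻ p, f p ∂(Φ ω)) ≤ H ω := by
    intro n ω
    by_cases hS : (∫⁻ p, f p ∂(Φ ω)) = ⊤
    · simp [hinf, hS, ENNReal.mul_top (hc0 n), expNeg_top]
    · simp [hinf, hS, expNeg_le_one]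
  have h1le : (1 : ℝ≥0∞) ≤ ∫⁻ ω, H ω ∂P := by
    refine le_of_tendsto he (Filter.Eventually.of_forall fun n => ?_)
    rw [← hS_eq n]
    exact lintegral_mono fun ω => hle n ω
  have hle1 : ∫⁻ ω, H ω ∂P ≤ 1 := by
    calc ∫⁻ ω, H ω ∂P ≤ ∫⁻ _, 1 ∂P := lintegral_mono fun ω => by
          by_cases hS : (∫⁻ p, f p ∂(Φ ω)) = ⊤ <;> simp [hinf, hS]
      _ = 1 := by simp
  obtain ⟨m, hm_meas, hm_le, hm_eq⟩ := exists_measurable_le_lintegral_eq P H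
  have hm1 : ∫⁻ ω, m ω ∂P = 1 := by rw [← hm_eq]; exact le_antisymm hle1 h1le
  have hmle1 : ∀ ω, m ω ≤ 1 := fun ω => (hm_le ω).trans (by
    by_cases hS : (∫⁻ p, f p ∂(Φ ω)) = ⊤ <;> simp [hinf, hS])
  have hsub : ∫⁻ ω, 1 - m ω ∂P = 0 := by
    rw [lintegral_sub hm_meas (by rw [hm1]; exact ENNReal.one_ne_top)
      (Filter.Eventually.of_forall hmle1)]
    simp [hm1]
  have hae : ∀ᵐ ω ∂P, (1 : ℝ≥0∞) - m ω = 0 :=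
    (lintegral_eq_zero_iff (measurable_const.sub hm_meas)).1 hsub
  filter_upwards [hae] with ω hω
  have h1m : (1 : ℝ≥0∞) ≤ m ω := tsub_eq_zero_iff_le.1 hω
  have hhi : (1 : ℝ≥0∞) ≤ H ω := h1m.trans (hm_le ω)
  rw [lt_top_iff_ne_top]
  intro hS
  rw [hinf] at hhi
  simp only [hS, if_pos rfl] at hhi
  exact (not_le.2 (zero_lt_one (α := ℝ≥0∞))) hhi

/-- Under the integrability condition and provided no event has impact `1`,
for every `x` and `t > 0`, almost surely over the Poisson environment
`∏_{i ∈ α(x,t)} (1 − u_i) > 0`; equivalently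
`Σ_{i ∈ α(x,t)} log(1/(1−u_i)) < ∞` a.s. -/
theorem no_accumulation_of_impacts (d : ℕ) (Tset : Set (EuclideanSpace ℝ (Fin d)))
    (hTset : MeasurableSet Tset)
    (t : ℝ) (ht : 0 < t) (x : EuclideanSpace ℝ (Fin d)) (hx : x ∈ Tset)
    (μ : Measure ℝ) [SigmaFinite μ] (ν : ℝ → Measure ℝ)
    (hν : ∀ r, IsProbabilityMeasure (ν r))
    (hνsupp : ∀ r, ν r (Set.Icc (0:ℝ) 1) = 1)
    (hν1 : ∀ᵐ r ∂μ, ν r {(1:ℝ)} = 0)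
    (hμsupp : μ (Set.Ioi (0:ℝ))ᶜ = 0)
    (hint : ∫⁻ r, ∫⁻ u, ENNReal.ofReal u * ENNReal.ofReal (r ^ d) ∂(ν r) ∂μ < ⊤)
    (Ω : Type*) [MeasurableSpace Ω] (P : Measure Ω) [IsProbabilityMeasure P]
    (Φ : Ω → Measure (ℝ × (EuclideanSpace ℝ (Fin d)) × ℝ × ℝ))
    (hΦ : IsPoissonPP P Φ
      ((volume.restrict (Set.Icc 0 t)).prod ((volume.restrict Tset).prod
        (μ.bind (fun r => (ν r).map (fun u => (r, u))))))) :
    ∀ᵐ ω ∂P, ∫⁻ p, (if dist x p.2.1 ≤ p.2.2.1 then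
        ENNReal.ofReal (Real.log (1 / (1 - p.2.2.2))) else 0) ∂(Φ ω) < ⊤ := by
  set f : ℝ × (EuclideanSpace ℝ (Fin d)) × ℝ × ℝ → ℝ≥0∞ := fun p =>
    if dist x p.2.1 ≤ p.2.2.1 then ENNReal.ofReal (Real.log (1 / (1 - p.2.2.2))) else 0 with hfdef
  set ν₃ : Measure (ℝ × ℝ) := μ.bind (fun r => (ν r).map (fun u => (r, u))) with hν3
  set m1 : Measure ℝ := volume.restrict (Set.Icc 0 t) with hm1
  set m2 : Measure (EuclideanSpace ℝ (Fin d)) := volume.restrict Tset with hm2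
  have hf : Measurable f := by
    rw [hfdef]
    refine Measurable.ite ?_ ?_ measurable_const
    · exact measurableSet_le
        (Continuous.measurable (continuous_const.dist (continuous_fst.comp continuous_snd)))
        (Continuous.measurable (continuous_fst.comp (continuous_snd.comp continuous_snd)))
    · exact ENNReal.measurable_ofReal.comp (Real.measurable_log.comp
        (measurable_const.div (measurable_const.sub measurable_snd.snd.snd)))
  refine aux_main P Φ _ hΦ f hf ?_
  by_cases hκm : AEMeasurable (fun r => (ν r).map (fun u : ℝ => (r, u))) μ
  · -- measurable kernel: full computation
    set κ' := hκm.mk _ with hκ'def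
    have hκ'm : Measurable κ' := hκm.measurable_mk
    have hκ'ae : (fun r => (ν r).map (fun u : ℝ => (r, u))) =ᵐ[μ] κ' := hκm.ae_eq_mk
    have hbind : ν₃ = μ.bind κ' := by
      rw [hν3]
      unfold Measure.bind
      rw [Measure.map_congr hκ'ae]
    have hν₃_apply : ∀ s : Set (ℝ × ℝ), MeasurableSet s →
        ν₃ s = ∫⁻ r, ν r ((fun u : ℝ => (r, u)) ⁻¹' s) ∂μ := by
      intro s hs
      rw [hbind, Measure.bind_apply hs hκ'm.aemeasurable]
      refine lintegral_congr_ae ?_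
      filter_upwards [hκ'ae] with r hr
      rw [← hr, Measure.map_apply measurable_prodMk_left hs]
    have hν₃_lint : ∀ h : ℝ × ℝ → ℝ≥0∞, Measurable h →
        ∫⁻ w, h w ∂ν₃ = ∫⁻ r, ∫⁻ u, h (r, u) ∂(ν r) ∂μ := by
      intro h hh
      rw [hbind, Measure.lintegral_bind hκ'm.aemeasurable hh.aemeasurable]
      refine lintegral_congr_ae ?_
      filter_upwards [hκ'ae] with r hr
      rw [← hr, lintegral_map hh measurable_prodMk_left]
    haveI hsf : SigmaFinite ν₃ := by
      refine ⟨⟨⟨fun k => spanningSets μ k ×ˢ Set.univ, fun _ => trivial, fun k => ?_, ?_⟩⟩⟩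
      · rw [hν₃_apply _ ((measurableSet_spanningSets μ k).prod MeasurableSet.univ)]
        have hind : ∀ r : ℝ, ν r ((fun u : ℝ => (r, u)) ⁻¹' (spanningSets μ k ×ˢ Set.univ))
            = (spanningSets μ k).indicator (fun _ => 1) r := by
          intro r
          haveI := hν r
          by_cases hrk : r ∈ spanningSets μ k
          · have hpre : (fun u : ℝ => (r, u)) ⁻¹' (spanningSets μ k ×ˢ Set.univ)
                = Set.univ := by ext u; simp [hrk]
            simp [hpre, Set.indicator_of_mem hrk]
          · have hpre : (fun u : ℝ => (r, u)) ⁻¹' (spanningSets μ k ×ˢ Set.univ) = ∅ := by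
              ext u; simp [hrk]
            simp [hpre, Set.indicator_of_notMem hrk]
        simp_rw [hind]
        rw [lintegral_indicator_const (measurableSet_spanningSets μ k)]
        simpa using measure_spanningSets_lt_top μ k
      · rw [← Set.iUnion_prod_const, iUnion_spanningSets, Set.univ_prod_univ]
    -- domination and convergence
    have hcle1 : ∀ n : ℕ, (((n : ℕ) : ℝ≥0∞) + 1)⁻¹ ≤ 1 := fun n => ENNReal.inv_le_one.2 le_add_self
    have hgm : Measurable (fun p : ℝ × (EuclideanSpace ℝ (Fin d)) × ℝ × ℝ =>
        if dist x p.2.1 ≤ p.2.2.1 then ENNReal.ofReal p.2.2.2 else 0) := by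
      refine Measurable.ite ?_ ?_ measurable_const
      · exact measurableSet_le
          (Continuous.measurable (continuous_const.dist (continuous_fst.comp continuous_snd)))
          (Continuous.measurable (continuous_fst.comp (continuous_snd.comp continuous_snd)))
      · exact ENNReal.measurable_ofReal.comp measurable_snd.snd.snd
    have hgin : Measurable (fun q : (EuclideanSpace ℝ (Fin d)) × ℝ × ℝ =>
        if dist x q.1 ≤ q.2.1 then ENNReal.ofReal q.2.2 else 0) := by
      refine Measurable.ite ?_ ?_ measurable_const
      · exact measurableSet_le
          (Continuous.measurable (continuous_const.dist continuous_fst))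
          (Continuous.measurable (continuous_fst.comp continuous_snd))
      · exact ENNReal.measurable_ofReal.comp measurable_snd.snd
    have haeu : ∀ᵐ p ∂(m1.prod (m2.prod ν₃)), p.2.2.2 ∈ Set.Icc (0:ℝ) 1 := by
      rw [ae_iff]
      have hset : {p : ℝ × (EuclideanSpace ℝ (Fin d)) × ℝ × ℝ | ¬ p.2.2.2 ∈ Set.Icc (0:ℝ) 1}
          = Set.univ ×ˢ (Set.univ ×ˢ (Set.univ ×ˢ (Set.Icc (0:ℝ) 1)ᶜ)) := by
        ext p; simp [Set.mem_prod]
      rw [hset, Measure.prod_prod, Measure.prod_prod]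
      have h3 : ν₃ (Set.univ ×ˢ (Set.Icc (0:ℝ) 1)ᶜ) = 0 := by
        rw [hν₃_apply _ (MeasurableSet.univ.prod measurableSet_Icc.compl)]
        have hz : ∀ r : ℝ, ν r ((fun u : ℝ => (r, u)) ⁻¹' (Set.univ ×ˢ (Set.Icc (0:ℝ) 1)ᶜ)) = 0 := by
          intro r
          haveI := hν r
          have hpre : (fun u : ℝ => (r, u)) ⁻¹' (Set.univ ×ˢ (Set.Icc (0:ℝ) 1)ᶜ)
              = (Set.Icc (0:ℝ) 1)ᶜ := by ext u; simp
          rw [hpre, measure_compl measurableSet_Icc (measure_ne_top _ _), hνsupp r, measure_univ]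
          simp
        simp_rw [hz]
        simp
      rw [h3]
      simp
    -- finiteness of the dominating integral
    have hCne : volume (Metric.closedBall (0 : EuclideanSpace ℝ (Fin d)) 1) ≠ ⊤ :=
      measure_closedBall_lt_top.ne
    have hball : ∀ r : ℝ, m2 (Metric.closedBall x r)
        ≤ ENNReal.ofReal (r ^ d) * volume (Metric.closedBall (0 : EuclideanSpace ℝ (Fin d)) 1) := by
      intro r
      rcases le_or_gt 0 r with hr | hr
      · have h1 : m2 (Metric.closedBall x r) ≤ volume (Metric.closedBall x r) := by
          rw [hm2, Measure.restrict_apply measurableSet_closedBall]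
          exact measure_mono Set.inter_subset_left
        refine h1.trans ?_
        rw [Measure.addHaar_closedBall' volume x hr, finrank_euclideanSpace_fin]
      · simp [Metric.closedBall_eq_empty.2 hr]
    have hK : ∫⁻ w : ℝ × ℝ, ENNReal.ofReal w.2 * ENNReal.ofReal (w.1 ^ d) ∂ν₃
        = ∫⁻ r, ∫⁻ u, ENNReal.ofReal u * ENNReal.ofReal (r ^ d) ∂(ν r) ∂μ :=
      hν₃_lint _ ((ENNReal.measurable_ofReal.comp measurable_snd).mul
        (ENNReal.measurable_ofReal.comp (measurable_fst.pow_const d)))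
    have hin : ∀ w : ℝ × ℝ, ∫⁻ y, (if dist x y ≤ w.1 then ENNReal.ofReal w.2 else 0) ∂m2
        = ENNReal.ofReal w.2 * m2 (Metric.closedBall x w.1) := by
      intro w
      have hi : (fun y => if dist x y ≤ w.1 then ENNReal.ofReal w.2 else 0)
          = (Metric.closedBall x w.1).indicator (fun _ => ENNReal.ofReal w.2) := by
        ext y
        by_cases h : dist x y ≤ w.1
        · rw [if_pos h, Set.indicator_of_mem (by rw [Metric.mem_closedBall, dist_comm]; exact h)]
        · rw [if_neg h, Set.indicator_of_notMem
            (fun hmem => h (by rwa [Metric.mem_closedBall, dist_comm] at hmem))]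
      rw [hi, lintegral_indicator_const measurableSet_closedBall]
    have hT1 : ∫⁻ q, (if dist x q.1 ≤ q.2.1 then ENNReal.ofReal q.2.2 else 0) ∂(m2.prod ν₃)
        = ∫⁻ w, ENNReal.ofReal w.2 * m2 (Metric.closedBall x w.1) ∂ν₃ := by
      rw [lintegral_prod_symm _ hgin.aemeasurable]
      exact lintegral_congr fun w => hin w
    have hJ : ∫⁻ q, (if dist x q.1 ≤ q.2.1 then ENNReal.ofReal q.2.2 else 0) ∂(m2.prod ν₃)
        ≤ (∫⁻ r, ∫⁻ u, ENNReal.ofReal u * ENNReal.ofReal (r ^ d) ∂(ν r) ∂μ)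
          * volume (Metric.closedBall (0 : EuclideanSpace ℝ (Fin d)) 1) := by
      rw [hT1, ← hK, ← lintegral_mul_const' _ _ hCne]
      refine lintegral_mono fun w => ?_
      rw [mul_assoc]
      exact mul_le_mul_right (hball w.1) _
    have hGfin : ∫⁻ p, (if dist x p.2.1 ≤ p.2.2.1 then ENNReal.ofReal p.2.2.2 else 0)
        ∂(m1.prod (m2.prod ν₃)) ≠ ⊤ := by
      have e1 : ∫⁻ p, (if dist x p.2.1 ≤ p.2.2.1 then ENNReal.ofReal p.2.2.2 else 0)
          ∂(m1.prod (m2.prod ν₃))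
          = ∫⁻ _ : ℝ, (∫⁻ q, (if dist x q.1 ≤ q.2.1 then ENNReal.ofReal q.2.2 else 0)
              ∂(m2.prod ν₃)) ∂m1 :=
        lintegral_prod _ hgm.aemeasurable
      rw [e1, lintegral_const]
      refine ENNReal.mul_ne_top (ne_top_of_le_ne_top ?_ hJ) ?_
      · exact ENNReal.mul_ne_top hint.ne hCne
      · rw [hm1, Measure.restrict_apply_univ, Real.volume_Icc]
        exact ENNReal.ofReal_ne_top
    -- dominated convergence
    have hbnd : ∀ (n : ℕ), (fun p => 1 - expNeg ((((n : ℕ) : ℝ≥0∞) + 1)⁻¹ * f p))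
        ≤ᵐ[m1.prod (m2.prod ν₃)]
          (fun p => if dist x p.2.1 ≤ p.2.2.1 then ENNReal.ofReal p.2.2.2 else 0) := by
      intro n
      filter_upwards [haeu] with p hp
      by_cases hd : dist x p.2.1 ≤ p.2.2.1
      · simp only [hfdef, if_pos hd]
        exact key_ineq hp.1 hp.2 (hcle1 n)
      · simp only [hfdef, if_neg hd, mul_zero, expNeg_zero, tsub_self, le_refl]
    have hptw : ∀ p, Tendsto (fun n : ℕ => 1 - expNeg ((((n : ℕ) : ℝ≥0∞) + 1)⁻¹ * f p)) atTop
        (𝓝 ((fun _ => (0 : ℝ≥0∞)) p)) := by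
      intro p
      have hfp : f p ≠ ⊤ := by
        simp only [hfdef]
        split <;> simp
      have h1 : Tendsto (fun n : ℕ => (((n : ℕ) : ℝ≥0∞) + 1)⁻¹) atTop (𝓝 0) := by
        have h2 := ENNReal.tendsto_inv_nat_nhds_zero.comp (tendsto_add_atTop_nat 1)
        refine h2.congr fun n => ?_
        simp [Nat.cast_add]
      have hmul : Tendsto (fun n : ℕ => (((n : ℕ) : ℝ≥0∞) + 1)⁻¹ * f p) atTop (𝓝 0) := by
        simpa using ENNReal.Tendsto.mul_const h1 (Or.inr hfp)
      have h3 := tendsto_expNeg_of_tendsto_zero hmul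
      have h4 := ENNReal.Tendsto.sub (tendsto_const_nhds (x := (1 : ℝ≥0∞))) h3
        (Or.inl ENNReal.one_ne_top)
      simpa using h4
    have hdct := tendsto_lintegral_of_dominated_convergence
      (μ := m1.prod (m2.prod ν₃))
      (fun p => if dist x p.2.1 ≤ p.2.2.1 then ENNReal.ofReal p.2.2.2 else 0)
      (fun n => measurable_const.sub (measurable_expNeg.comp (hf.const_mul _)))
      hbnd hGfin (Filter.Eventually.of_forall hptw)
    simpa using hdct
  · -- non-measurable kernel: the product measure is trivial
    have hb0 : ν₃ = 0 := by
      rw [hν3]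
      unfold Measure.bind
      rw [Measure.map_of_not_aemeasurable hκm, Measure.join_zero]
    have h230 : m2.prod ν₃ = 0 := by
      rw [hb0, ← Measure.measure_univ_eq_zero, ← Set.univ_prod_univ, Measure.prod_prod]
      simp
    have hT0 : m1.prod (m2.prod ν₃) = 0 := by
      rw [h230, ← Measure.measure_univ_eq_zero, ← Set.univ_prod_univ, Measure.prod_prod]
      simp
    simp only [hT0, lintegral_zero_measure]
    exact tendsto_const_nhds
end
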